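/- arXiv:1507.05949 — 8 statements merged into one kernel-verified Lean document; each statement's English description precedes it below -/
import Mathlib

section
/- Let S = ⟨n₁,...,n_e⟩ be a numerical semigroup with Frobenius number F(S), and let f ∈ PF(S) \ {F(S)} be such that F(S) - f ∈ PF(S). If A = (a_{ij}) is an RF-matrix for f and B = (b_{ij}) is an RF-matrix for F(S) - f, then a_{ij} · b_{ji} = 0 for all i ≠ j. -/
/-- The numerical semigroup generated by `n`, viewed inside `ℤ`. -/
def NS {e : ℕ} (n : Fin e → ℕ) : Set ℤ :=
  {x | ∃ a : Fin e → ℕ, x = ∑ j, (a j : ℤ) * n j}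

/-- Pseudo-Frobenius numbers of the numerical semigroup generated by `n`. -/
def PF {e : ℕ} (n : Fin e → ℕ) : Set ℤ :=
  {x | x ∉ NS n ∧ ∀ i, x + (n i : ℤ) ∈ NS n}

/-- `F` is the Frobenius number: the maximum of `ℤ \ S`. -/
def IsFrob {e : ℕ} (n : Fin e → ℕ) (F : ℤ) : Prop :=
  F ∉ NS n ∧ ∀ x : ℤ, F < x → x ∈ NS n

/-- Almost symmetry with respect to the Frobenius number `F`. -/
def AlmostSym {e : ℕ} (n : Fin e → ℕ) (F : ℤ) : Prop :=
  ∀ x : ℤ, x ∉ NS n → F - x ∉ NS n → (x ∈ PF n ∧ F - x ∈ PF n)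

/-- `A` is an RF-matrix for `f`. -/
def IsRF {e : ℕ} (n : Fin e → ℕ) (f : ℤ) (A : Matrix (Fin e) (Fin e) ℤ) : Prop :=
  (∀ i, A i i = -1) ∧ (∀ i j, i ≠ j → 0 ≤ A i j) ∧
    (∀ i, ∑ j, A i j * (n j : ℤ) = f)

/-- `K = λ_{ij} = max {K ∈ ℕ : K·n_j - n_i ∉ S}`. -/
def IsLam {e : ℕ} (n : Fin e → ℕ) (i j : Fin e) (K : ℕ) : Prop :=
  ((K : ℤ) * n j - n i ∉ NS n) ∧
    ∀ L : ℕ, ((L : ℤ) * n j - n i ∉ NS n) → L ≤ K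

/-- `n` is a minimal generating system. -/
def MinGen {e : ℕ} (n : Fin e → ℕ) : Prop :=
  ∀ i, ¬ ∃ a : Fin e → ℕ, a i = 0 ∧ (n i : ℤ) = ∑ j, (a j : ℤ) * n j

theorem stmt3 {e : ℕ} (n : Fin e → ℕ)
    (hpos : ∀ i, 0 < n i)
    (hgcd : Finset.univ.gcd n = 1)
    (hmin : MinGen n)
    (F : ℤ) (hF : IsFrob n F)
    (f : ℤ) (hf : f ∈ PF n) (hfF : f ≠ F) (hFf : F - f ∈ PF n)
    (A B : Matrix (Fin e) (Fin e) ℤ)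
    (hA : IsRF n f A) (hB : IsRF n (F - f) B) :
    ∀ i j, i ≠ j → A i j * B j i = 0 := by
  intro i j hij
  by_contra h
  have hAij : 0 ≤ A i j := hA.2.1 i j hij
  have hBji : 0 ≤ B j i := hB.2.1 j i hij.symm
  have hA1 : 1 ≤ A i j := by
    rcases lt_or_eq_of_le hAij with h1 | h1
    · exact h1
    · exact absurd (by rw [← h1]; ring) h
  have hB1 : 1 ≤ B j i := by
    rcases lt_or_eq_of_le hBji with h1 | h1
    · exact h1
    · exact absurd (by rw [← h1]; ring) h
  apply hF.1
  have hnn : ∀ k, 0 ≤ A i k + B j k := by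
    intro k
    by_cases hki : k = i
    · subst hki; rw [hA.1 k]; omega
    · by_cases hkj : k = j
      · subst hkj; rw [hB.1 k]; omega
      · have := hA.2.1 i k (fun hh => hki hh.symm)
        have := hB.2.1 j k (fun hh => hkj hh.symm)
        omega
  refine ⟨fun k => (A i k + B j k).toNat, ?_⟩
  have heq : ∑ k, ((A i k + B j k).toNat : ℤ) * n k
      = ∑ k, (A i k + B j k) * n k := by
    refine Finset.sum_congr rfl fun k _ => ?_
    rw [Int.toNat_of_nonneg (hnn k)]
  rw [heq]
  have h1 := hA.2.2 i
  have h2 := hB.2.2 j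
  simp only [add_mul, Finset.sum_add_distrib, h1, h2]
  ring
end

section
/- Let S = ⟨n₁,n₂,n₃,n₄⟩ be an almost symmetric numerical semigroup, f ∈ PF(S) \ {F(S)}, and let M be an RF-matrix for f such that some column of M contains no positive entry. Then f = F(S)/2. -/
namespace Stmt6Aux

lemma NS_add (n : Fin 4 → ℕ) {x y : ℤ} (hx : x ∈ NS n) (hy : y ∈ NS n) :
    x + y ∈ NS n := by
  obtain ⟨a, ha⟩ := hx; obtain ⟨c, hc⟩ := hy
  exact ⟨a + c, by simp [ha, hc, add_mul, Finset.sum_add_distrib]⟩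

lemma memNS_int (n : Fin 4 → ℕ) (c : Fin 4 → ℤ) (x : ℤ) (h0 : ∀ l, 0 ≤ c l)
    (hx : x = ∑ l, c l * n l) : x ∈ NS n := by
  refine ⟨fun l => (c l).toNat, ?_⟩
  rw [hx]
  exact Finset.sum_congr rfl fun l _ => by rw [Int.toNat_of_nonneg (h0 l)]

lemma sum_ite_add (n : Fin 4 → ℕ) (c : Fin 4 → ℤ) (k : Fin 4) (ε : ℤ) :
    ∑ l, (c l + ε * (if l = k then 1 else 0)) * n l = (∑ l, c l * n l) + ε * n k := by
  have h : ∀ l ∈ Finset.univ, (c l + ε * (if l = k then 1 else 0)) * (n l : ℤ)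
      = c l * n l + (if l = k then ε * n l else 0) := by
    intro l _
    by_cases h : l = k <;> simp [h] <;> ring
  rw [Finset.sum_congr rfl h, Finset.sum_add_distrib,
    Finset.sum_ite_eq' Finset.univ k (fun l => ε * (n l : ℤ))]
  simp

lemma sum_ite_sub (n : Fin 4 → ℕ) (c : Fin 4 → ℤ) (k : Fin 4) :
    ∑ l, (c l - (if l = k then 1 else 0)) * n l = (∑ l, c l * n l) - n k := by
  have h := sum_ite_add n c k (-1)
  rw [Finset.sum_congr rfl (fun l _ => show (c l - (if l = k then 1 else 0)) * (n l : ℤ)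
    = (c l + (-1) * (if l = k then 1 else 0)) * n l from by ring)]
  rw [h]; ring

lemma sum_two (n : Fin 4 → ℕ) (p q : Fin 4) (hpq : p ≠ q) (u v : ℤ) :
    ∑ l, (if l = p then u else if l = q then v else 0) * n l = u * n p + v * n q := by
  have h : ∀ l ∈ Finset.univ, (if l = p then u else if l = q then v else 0) * (n l : ℤ)
      = (if l = p then u * n l else 0) + (if l = q then v * n l else 0) := by
    intro l _
    by_cases h1 : l = p
    · subst h1; simp [hpq]
    · by_cases h2 : l = q
      · simp [h1, h2, hpq.symm]
      · simp [h1, h2]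
  rw [Finset.sum_congr rfl h, Finset.sum_add_distrib,
    Finset.sum_ite_eq' Finset.univ p (fun l => u * (n l : ℤ)),
    Finset.sum_ite_eq' Finset.univ q (fun l => v * (n l : ℤ))]
  simp

lemma sum4 {M : Type*} [AddCommMonoid M] {j m p q : Fin 4}
    (hcov : ∀ l : Fin 4, l = j ∨ l = m ∨ l = p ∨ l = q)
    (hjm : j ≠ m) (hjp : j ≠ p) (hjq : j ≠ q) (hmp : m ≠ p) (hmq : m ≠ q) (hpq : p ≠ q)
    (v : Fin 4 → M) : ∑ k, v k = v j + v m + v p + v q := by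
  have hu : (Finset.univ : Finset (Fin 4)) = {j, m, p, q} := by
    ext l
    simp only [Finset.mem_univ, true_iff, Finset.mem_insert, Finset.mem_singleton]
    exact hcov l
  rw [hu, Finset.sum_insert (by simp [hjm, hjp, hjq]),
    Finset.sum_insert (by simp [hmp, hmq]), Finset.sum_insert (by simp [hpq]),
    Finset.sum_singleton, add_assoc, add_assoc]

/-- `f + s ∈ S` for `f ∈ PF` and nonzero `s ∈ S`. -/
lemma PF_add_mem (n : Fin 4 → ℕ) {f s : ℤ} (hf : f ∈ PF n) (hs : s ∈ NS n)
    (hs0 : s ≠ 0) : f + s ∈ NS n := by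
  obtain ⟨c, hc⟩ := hs
  have hex : ∃ i, c i ≠ 0 := by
    by_contra h
    push_neg at h
    exact hs0 (by simp [hc, h])
  obtain ⟨i, hi⟩ := hex
  have h1 : (1 : ℤ) ≤ c i := by exact_mod_cast Nat.one_le_iff_ne_zero.mpr hi
  have hmem : s - n i ∈ NS n := by
    apply memNS_int n (fun l => (c l : ℤ) - (if l = i then 1 else 0))
    · intro l
      by_cases h : l = i <;> simp [h] <;> omega
    · rw [sum_ite_sub n (fun l => (c l : ℤ)) i, ← hc]
  have := NS_add n (hf.2 i) hmem
  rwa [show f + (n i : ℤ) + (s - n i) = f + s by ring] at this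

/-- Orthogonality: rows of RF-type representations of `f` and `g = F - f` can't
both be positive at transposed spots. -/
lemma orth (n : Fin 4 → ℕ) (F f g : ℤ) (hFS : F ∉ NS n) (hfg : f + g = F)
    (a b : Fin 4 → Fin 4 → ℕ)
    (ha : ∀ i, (f + n i : ℤ) = ∑ k, (a i k : ℤ) * n k)
    (hb : ∀ i, (g + n i : ℤ) = ∑ k, (b i k : ℤ) * n k)
    (i k : Fin 4) (h1 : 1 ≤ a i k) (h2 : 1 ≤ b k i) : False := by
  have m1 : f + (n i : ℤ) - n k ∈ NS n := by
    apply memNS_int n (fun l => (a i l : ℤ) - (if l = k then 1 else 0))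
    · intro l
      by_cases h : l = k
      · subst h; simp; exact_mod_cast h1
      · simp [h]
    · rw [sum_ite_sub n (fun l => (a i l : ℤ)) k, ← ha i]
  have m2 : g + (n k : ℤ) - n i ∈ NS n := by
    apply memNS_int n (fun l => (b k l : ℤ) - (if l = i then 1 else 0))
    · intro l
      by_cases h : l = i
      · subst h; simp; exact_mod_cast h2
      · simp [h]
    · rw [sum_ite_sub n (fun l => (b k l : ℤ)) i, ← hb k]
  have := NS_add n m1 m2
  rw [show f + (n i : ℤ) - n k + (g + n k - n i) = F by linarith] at this
  exact hFS this

/-- The contradiction case: if `a m p < b m p` then everything collapses. -/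
lemma contraCase (n : Fin 4 → ℕ) (hmin : MinGen n)
    (F f g : ℤ) (hFS : F ∉ NS n) (hgS : g ∉ NS n) (hfg : f + g = F)
    (j m p q : Fin 4)
    (hjm : j ≠ m) (hjp : j ≠ p) (hjq : j ≠ q) (hmp : m ≠ p) (hmq : m ≠ q) (hpq : p ≠ q)
    (hcov : ∀ l : Fin 4, l = j ∨ l = m ∨ l = p ∨ l = q)
    (a b : Fin 4 → Fin 4 → ℕ)
    (ha : ∀ i, (f + n i : ℤ) = ∑ k, (a i k : ℤ) * n k)
    (had : ∀ i, a i i = 0) (hacol : ∀ i, a i j = 0)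
    (hb : ∀ i, (g + n i : ℤ) = ∑ k, (b i k : ℤ) * n k)
    (hbd : ∀ i, b i i = 0) (hbmj : b m j = 0)
    (hlt : a m p < b m p) : False := by
  have hrm : (f + n m : ℤ) = (a m p : ℤ) * n p + (a m q : ℤ) * n q := by
    rw [ha m, sum4 hcov hjm hjp hjq hmp hmq hpq (fun k => (a m k : ℤ) * n k)]
    simp [had m, hacol m]
  have hrmB : (g + n m : ℤ) = (b m p : ℤ) * n p + (b m q : ℤ) * n q := by
    rw [hb m, sum4 hcov hjm hjp hjq hmp hmq hpq (fun k => (b m k : ℤ) * n k)]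
    simp [hbd m, hbmj]
  have hapm : a p m = 0 := by
    by_contra h
    exact orth n F f g hFS hfg a b ha hb p m
      (Nat.one_le_iff_ne_zero.mpr h) (by omega)
  have hrp : (f + n p : ℤ) = (a p q : ℤ) * n q := by
    rw [ha p, sum4 hcov hjm hjp hjq hmp hmq hpq (fun k => (a p k : ℤ) * n k)]
    simp [had p, hacol p, hapm]
  -- MinGen forces `a m q < a p q`
  have hβh : a m q < a p q := by
    by_contra hle
    push_neg at hle
    apply hmin m
    refine ⟨fun l => if l = p then a m p + 1 else if l = q then a m q - a p q else 0,
      by simp [hmp, hmq], ?_⟩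
    have hs := sum_two n p q hpq ((a m p : ℤ) + 1) ((a m q : ℤ) - (a p q : ℤ))
    have hcast : ∀ l : Fin 4,
        ((if l = p then a m p + 1 else if l = q then a m q - a p q else 0 : ℕ) : ℤ)
        = (if l = p then (a m p : ℤ) + 1 else if l = q then (a m q : ℤ) - a p q else 0) := by
      intro l
      by_cases h1 : l = p
      · simp [h1]
      · by_cases h2 : l = q <;> simp [h1, h2]
        omega
    calc (n m : ℤ) = ((a m p : ℤ) + 1) * n p + ((a m q : ℤ) - (a p q : ℤ)) * n q := by
          linear_combination hrm - hrp
      _ = ∑ l, ((if l = p then a m p + 1 else if l = q then a m q - a p q else 0 : ℕ) : ℤ) * n l := by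
          rw [Finset.sum_congr rfl fun l _ => by rw [hcast l]]
          rw [hs]
  -- now g itself is in S, contradiction
  apply hgS
  apply memNS_int n
    (fun l => if l = p then (b m p : ℤ) - a m p - 1 else
      if l = q then (a p q : ℤ) - a m q + b m q else 0) g
  · intro l
    by_cases h1 : l = p
    · rw [if_pos h1]; omega
    · rw [if_neg h1]
      by_cases h2 : l = q
      · rw [if_pos h2]; omega
      · rw [if_neg h2]
  · rw [sum_two n p q hpq ((b m p : ℤ) - a m p - 1) ((a p q : ℤ) - a m q + b m q)]
    linear_combination hrmB - hrm + hrp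

lemma exists_pq : ∀ j m : Fin 4, j ≠ m → ∃ p q : Fin 4, j ≠ p ∧ j ≠ q ∧ m ≠ p ∧ m ≠ q ∧ p ≠ q ∧
    ∀ l : Fin 4, l = j ∨ l = m ∨ l = p ∨ l = q := by decide

end Stmt6Aux

open Stmt6Aux

theorem stmt6 (n : Fin 4 → ℕ)
    (hpos : ∀ i, 0 < n i)
    (hgcd : Finset.univ.gcd n = 1)
    (hmin : MinGen n)
    (F : ℤ) (hF : IsFrob n F) (hAS : AlmostSym n F)
    (f : ℤ) (hf : f ∈ PF n) (hfF : f ≠ F)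
    (M : Matrix (Fin 4) (Fin 4) ℤ) (hM : IsRF n f M)
    (hcol : ∃ j, ∀ i, M i j ≤ 0) :
    2 * f = F := by
  obtain ⟨j, hcolj⟩ := hcol
  set g : ℤ := F - f with hg
  have hfg : f + g = F := by ring
  -- g ∈ PF
  have hgnotS : g ∉ NS n := by
    intro hmem
    rcases eq_or_ne g 0 with h0 | h0
    · exact hfF (by omega)
    · have := PF_add_mem n hf hmem h0
      rw [hfg] at this
      exact hF.1 this
  have hgPF : g ∈ PF n := (hAS f hf.1 hgnotS).2
  -- the `a` matrix (ℕ-valued rows of M)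
  set a : Fin 4 → Fin 4 → ℕ := fun i k => (M i k).toNat with ha_def
  have had : ∀ i, a i i = 0 := by
    intro i; simp [ha_def, hM.1 i]
  have hacol : ∀ i, a i j = 0 := by
    intro i
    rcases eq_or_ne i j with rfl | h
    · exact had i
    · have h1 := hM.2.1 i j h
      have h2 := hcolj i
      simp [ha_def]
      omega
  have ha : ∀ i, (f + n i : ℤ) = ∑ k, (a i k : ℤ) * n k := by
    intro i
    have hrow := hM.2.2 i
    have hterm : ∀ k ∈ Finset.univ, (a i k : ℤ) * n k
        = M i k * n k + (if k = i then (n i : ℤ) else 0) := by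
      intro k _
      rcases eq_or_ne k i with rfl | h
      · simp [ha_def, hM.1 k]
      · rw [ha_def]
        simp only [Int.toNat_of_nonneg (hM.2.1 i k (Ne.symm h)), if_neg h, add_zero]
    rw [Finset.sum_congr rfl hterm, Finset.sum_add_distrib,
      Finset.sum_ite_eq' Finset.univ i (fun _ => (n i : ℤ)), hrow]
    simp [add_comm]
  -- the `b` rows for g
  have hB : ∀ i, ∃ c : Fin 4 → ℕ, ((g + n i : ℤ) = ∑ k, (c k : ℤ) * n k) ∧ c i = 0 := by
    intro i
    obtain ⟨c, hc⟩ := hgPF.2 i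
    rcases eq_or_ne (c i) 0 with h0 | h0
    · exact ⟨c, hc, h0⟩
    · exfalso
      apply hgnotS
      apply memNS_int n (fun l => (c l : ℤ) - (if l = i then 1 else 0)) g
      · intro l
        by_cases h : l = i
        · subst h; simp; exact_mod_cast Nat.one_le_iff_ne_zero.mpr h0
        · simp [h]
      · rw [sum_ite_sub n (fun l => (c l : ℤ)) i, ← hc]; ring
  choose b hb hbd using hB
  -- find m ≠ j with 1 ≤ a j m
  have hex : ∃ m, m ≠ j ∧ 1 ≤ a j m := by
    by_contra h
    push_neg at h
    have hz : ∀ k, a j k = 0 := by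
      intro k
      rcases eq_or_ne k j with rfl | hk
      · exact had k
      · have := h k hk; omega
    have h0 : (f + n j : ℤ) = 0 := by
      rw [ha j]
      apply Finset.sum_eq_zero
      intro k _
      simp [hz k]
    -- f = -n j; use another generator and MinGen to contradict
    obtain ⟨k, hkj⟩ := exists_ne j
    obtain ⟨c, hc⟩ := hf.2 k
    have hck : (n k : ℤ) = (∑ l, (c l : ℤ) * n l) + n j := by
      have : (f + n k : ℤ) = (n k : ℤ) - n j := by linarith
      rw [this] at hc
      linarith [hc]
    rcases eq_or_ne (c k) 0 with hck0 | hck0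
    · apply hmin k
      refine ⟨fun l => if l = j then c l + 1 else c l, by simp [hkj, hck0], ?_⟩
      have : ∀ l : Fin 4, ((if l = j then c l + 1 else c l : ℕ) : ℤ)
          = (c l : ℤ) + 1 * (if l = j then 1 else 0) := by
        intro l; by_cases h : l = j <;> simp [h]
      rw [Finset.sum_congr rfl fun l _ => by rw [this l]]
      rw [sum_ite_add n (fun l => (c l : ℤ)) j 1]
      linarith [hck]
    · have hb1 : (1 : ℤ) ≤ c k := by exact_mod_cast Nat.one_le_iff_ne_zero.mpr hck0
      have hsum : (c k : ℤ) * n k ≤ ∑ l, (c l : ℤ) * n l := by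
        apply Finset.single_le_sum (f := fun l => (c l : ℤ) * n l)
        · intro l _; positivity
        · exact Finset.mem_univ k
      have hnk : (1 : ℤ) ≤ n k := by exact_mod_cast hpos k
      have hnj : (1 : ℤ) ≤ n j := by exact_mod_cast hpos j
      nlinarith [hck, hsum]
  obtain ⟨m, hmj, hajm⟩ := hex
  -- b m j = 0
  have hbmj : b m j = 0 := by
    by_contra h
    exact orth n F f g hF.1 hfg a b ha hb j m hajm (Nat.one_le_iff_ne_zero.mpr h)
  -- get the two remaining indices
  obtain ⟨p, q, hjp, hjq, hmp, hmq, hpq, hcov⟩ := exists_pq j m (Ne.symm hmj)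
  have hjm : j ≠ m := Ne.symm hmj
  -- case analysis
  rcases lt_or_ge (a m p) (b m p) with hlt | hge1
  · exact absurd (contraCase n hmin F f g hF.1 hgnotS hfg j m p q
      hjm hjp hjq hmp hmq hpq hcov a b ha had hacol hb hbd hbmj hlt) (by simp)
  rcases lt_or_ge (a m q) (b m q) with hlt | hge2
  · have hcov' : ∀ l : Fin 4, l = j ∨ l = m ∨ l = q ∨ l = p := by
      intro l
      rcases hcov l with h | h | h | h <;> tauto
    exact absurd (contraCase n hmin F f g hF.1 hgnotS hfg j m q p
      hjm hjq hjp hmq hmp (Ne.symm hpq) hcov' a b ha had hacol hb hbd hbmj hlt) (by simp)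
  -- remaining: f - g ∈ S, hence f = g
  have hrm : (f + n m : ℤ) = (a m p : ℤ) * n p + (a m q : ℤ) * n q := by
    rw [ha m, sum4 hcov hjm hjp hjq hmp hmq hpq (fun k => (a m k : ℤ) * n k)]
    simp [had m, hacol m]
  have hrmB : (g + n m : ℤ) = (b m p : ℤ) * n p + (b m q : ℤ) * n q := by
    rw [hb m, sum4 hcov hjm hjp hjq hmp hmq hpq (fun k => (b m k : ℤ) * n k)]
    simp [hbd m, hbmj]
  have hfgS : f - g ∈ NS n := by
    apply memNS_int n (fun l => if l = p then (a m p : ℤ) - b m p else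
      if l = q then (a m q : ℤ) - b m q else 0) (f - g)
    · intro l
      by_cases h1 : l = p
      · rw [if_pos h1]; omega
      · rw [if_neg h1]
        by_cases h2 : l = q
        · rw [if_pos h2]; omega
        · rw [if_neg h2]
    · rw [sum_two n p q hpq ((a m p : ℤ) - b m p) ((a m q : ℤ) - b m q)]
      linear_combination hrm - hrmB
  rcases eq_or_ne (f - g) 0 with h0 | h0
  · omega
  · exfalso
    have := PF_add_mem n hgPF hfgS h0
    rw [show g + (f - g) = f by ring] at this
    exact hf.1 this
end

section
/- Let S = ⟨n₁,n₂,n₃,n₄⟩ be a numerical semigroup minimally generated by four elements, and suppose the submonoid T generated by n₂,n₃,n₄ is a numerical semigroup (gcd(n₂,n₃,n₄) = 1). If f ∈ PF(T) and f ≠ F(T), and also f ∈ PF(S) with F(S) - f ∉ S and S almost symmetric, then F(S) - f = f, i.e., f = F(S)/2. -/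
lemma NS_zero {e : ℕ} (n : Fin e → ℕ) : (0:ℤ) ∈ NS n := ⟨0, by simp⟩

lemma NS_nonneg {e : ℕ} {n : Fin e → ℕ} {x : ℤ} (hx : x ∈ NS n) : 0 ≤ x := by
  obtain ⟨a, rfl⟩ := hx
  exact Finset.sum_nonneg fun j _ => mul_nonneg (by positivity) (by positivity)

lemma NS_add {e : ℕ} {n : Fin e → ℕ} {x y : ℤ} (hx : x ∈ NS n) (hy : y ∈ NS n) :
    x + y ∈ NS n := by
  obtain ⟨a, rfl⟩ := hx; obtain ⟨b, rfl⟩ := hy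
  refine ⟨a + b, ?_⟩
  rw [← Finset.sum_add_distrib]
  refine Finset.sum_congr rfl fun j _ => ?_
  push_cast [Pi.add_apply]; ring

lemma NS_sum_single {e : ℕ} (n : Fin e → ℕ) (i : Fin e) (c : ℕ) :
    ∑ j, ((Pi.single i c : Fin e → ℕ) j : ℤ) * n j = (c : ℤ) * n i := by
  rw [Finset.sum_eq_single i]
  · simp
  · intro j _ hj; simp [Pi.single_eq_of_ne hj]
  · intro h; exact absurd (Finset.mem_univ i) h

lemma NS_smul {e : ℕ} (n : Fin e → ℕ) (i : Fin e) (c : ℕ) : (c : ℤ) * n i ∈ NS n :=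
  ⟨Pi.single i c, (NS_sum_single n i c).symm⟩

lemma NS_gen {e : ℕ} (n : Fin e → ℕ) (i : Fin e) : (n i : ℤ) ∈ NS n := by
  simpa using NS_smul n i 1

lemma NS_coeff_sub {e : ℕ} {n : Fin e → ℕ} (a : Fin e → ℕ) {i : Fin e} (h : a i ≠ 0) :
    (∑ j, (a j : ℤ) * n j) - n i ∈ NS n := by
  refine ⟨Function.update a i (a i - 1), ?_⟩
  have h1 : ∀ (b : Fin e → ℕ), ∑ j, (b j : ℤ) * n j
      = (b i : ℤ) * n i + ∑ j ∈ Finset.univ.erase i, (b j : ℤ) * n j :=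
    fun b => (Finset.add_sum_erase _ _ (Finset.mem_univ i)).symm
  rw [h1 a, h1 (Function.update a i (a i - 1))]
  have h2 : ∑ j ∈ Finset.univ.erase i, ((Function.update a i (a i - 1) j : ℤ)) * n j
      = ∑ j ∈ Finset.univ.erase i, (a j : ℤ) * n j := by
    refine Finset.sum_congr rfl fun j hj => ?_
    rw [Function.update_of_ne (Finset.ne_of_mem_erase hj)]
  rw [h2, Function.update_self]
  have : ((a i - 1 : ℕ) : ℤ) = (a i : ℤ) - 1 := by omega
  rw [this]; ring

lemma NS_sub_gen {e : ℕ} {n : Fin e → ℕ} {x : ℤ} (hx : x ∈ NS n) (hne : x ≠ 0) :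
    ∃ i, x - n i ∈ NS n := by
  obtain ⟨a, rfl⟩ := hx
  by_cases h : ∀ i, a i = 0
  · exact absurd (by simp [h]) hne
  · push_neg at h; obtain ⟨i, hi⟩ := h
    exact ⟨i, NS_coeff_sub a hi⟩

lemma NS_pure {e : ℕ} {n : Fin e → ℕ} {x : ℤ} (hx : x ∈ NS n) (d : Fin e)
    (h : ∀ l, l ≠ d → x - n l ∉ NS n) : ∃ c : ℕ, x = (c : ℤ) * n d := by
  obtain ⟨a, rfl⟩ := hx
  have hz : ∀ l, l ≠ d → a l = 0 := by
    intro l hl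
    by_contra hne
    exact h l hl (NS_coeff_sub a hne)
  refine ⟨a d, ?_⟩
  rw [Finset.sum_eq_single d]
  · intro j _ hj; simp [hz j hj]
  · intro hd; exact absurd (Finset.mem_univ d) hd

section
variable {n : Fin 4 → ℕ} {m : Fin 3 → ℕ}

lemma T_sub_S (hm : ∀ i : Fin 3, m i = n i.succ) {x : ℤ} (hx : x ∈ NS m) : x ∈ NS n := by
  obtain ⟨b, rfl⟩ := hx
  refine ⟨Fin.cons 0 b, ?_⟩
  have h1 : ∑ j : Fin 4, ((Fin.cons 0 b : Fin 4 → ℕ) j : ℤ) * n j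
      = ∑ i : Fin 3, (b i : ℤ) * n i.succ := by
    rw [Fin.sum_univ_succ]
    simp
  rw [h1]
  exact Finset.sum_congr rfl fun j _ => by rw [hm]

lemma S_to_T (hm : ∀ i : Fin 3, m i = n i.succ) {x : ℤ} (hx : x ∈ NS n)
    (h0 : x - n 0 ∉ NS n) : x ∈ NS m := by
  obtain ⟨a, rfl⟩ := hx
  have ha0 : a 0 = 0 := by
    by_contra h
    exact h0 (NS_coeff_sub a h)
  refine ⟨fun i => a i.succ, ?_⟩
  rw [Fin.sum_univ_succ, ha0]
  simp [hm]

/-- purity over T with non-membership in S as exclusions -/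
lemma T_pure (hm : ∀ i : Fin 3, m i = n i.succ) {x : ℤ} (hx : x ∈ NS m) (d : Fin 3)
    (h : ∀ l, l ≠ d → x - m l ∉ NS n) : ∃ c : ℕ, x = (c : ℤ) * m d := by
  obtain ⟨b, rfl⟩ := hx
  have hz : ∀ l, l ≠ d → b l = 0 := by
    intro l hl
    by_contra hne
    exact h l hl (T_sub_S hm (NS_coeff_sub b hne))
  refine ⟨b d, ?_⟩
  rw [Finset.sum_eq_single d]
  · intro j _ hj; simp [hz j hj]
  · intro hd; exact absurd (Finset.mem_univ d) hd

lemma pf_add {e : ℕ} {n : Fin e → ℕ} (hpos : ∀ i, 0 < n i) {x : ℤ}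
    (hx : ∀ i, x + n i ∈ NS n) :
    ∀ s : ℤ, s ∈ NS n → s ≠ 0 → x + s ∈ NS n := by
  have key : ∀ k : ℕ, ∀ s : ℤ, s.natAbs ≤ k → s ∈ NS n → s ≠ 0 → x + s ∈ NS n := by
    intro k
    induction k with
    | zero => intro s h1 _ h3; omega
    | succ k ih =>
      intro s h1 hs hne
      obtain ⟨i, hi⟩ := NS_sub_gen hs hne
      by_cases h0 : s - n i = 0
      · have : s = (n i : ℤ) := by omega
        rw [this]; exact hx i
      · have hnn : (0:ℤ) ≤ s - n i := NS_nonneg hi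
        have hp := hpos i
        have hle : (s - n i).natAbs ≤ k := by omega
        have h2 := ih (s - n i) hle hi h0
        have h3 := NS_add h2 (NS_gen n i)
        have : x + (s - ↑(n i)) + ↑(n i) = x + s := by ring
        rwa [this] at h3
  intro s hs hne
  exact key s.natAbs s le_rfl hs hne

lemma minGen_contra (hmin : MinGen n) (a b t : Fin 4) (hab : a ≠ b) (hat : a ≠ t)
    (c : ℕ) (h : (n a : ℤ) = n b + c * n t) : False := by
  apply hmin a
  refine ⟨Pi.single b 1 + Pi.single t c, ?_, ?_⟩
  · simp only [Pi.add_apply]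
    rw [Pi.single_eq_of_ne hab, Pi.single_eq_of_ne hat]; rfl
  · have : ∑ j, (((Pi.single b 1 + Pi.single t c : Fin 4 → ℕ)) j : ℤ) * n j
        = ∑ j, ((Pi.single b 1 : Fin 4 → ℕ) j : ℤ) * n j
          + ∑ j, ((Pi.single t c : Fin 4 → ℕ) j : ℤ) * n j := by
      rw [← Finset.sum_add_distrib]
      refine Finset.sum_congr rfl fun j _ => ?_
      push_cast [Pi.add_apply]; ring
    rw [this, NS_sum_single, NS_sum_single, h]
    push_cast; ring

end

set_option maxHeartbeats 4000000 in
lemma key {n : Fin 4 → ℕ} {m : Fin 3 → ℕ} (hm : ∀ i : Fin 3, m i = n i.succ)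
    (hpos : ∀ i, 0 < n i) (hmin : MinGen n) {f g : ℤ}
    (hf1 : 1 ≤ f) (hg1 : 1 ≤ g) (hfS : f ∉ NS n) (hgS : g ∉ NS n) (hFS : f + g ∉ NS n)
    (hfrow : ∀ i : Fin 4, f + n i ∈ NS n) (hgrow : ∀ i : Fin 4, g + n i ∈ NS n)
    (hfrowT : ∀ l : Fin 3, f + m l ∈ NS m) (ht0 : f + n 0 ∈ NS m) : f = g := by
  have hm1 : ∀ l : Fin 3, (1:ℤ) ≤ m l := fun l => by
    rw [hm]; exact_mod_cast hpos l.succ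
  have hn0 : (1:ℤ) ≤ n 0 := by exact_mod_cast hpos 0
  have pair : ∀ x y : ℤ, x + y = f + g → x ∈ NS n → y ∉ NS n := by
    intro x y hxy hx hy
    exact hFS (by rw [← hxy]; exact NS_add hx hy)
  have mgen : ∀ (l : Fin 3) (c : ℕ), (c:ℤ) * m l ∈ NS n := fun l c => by
    rw [hm]; exact NS_smul n l.succ c
  have gSrow : ∀ l : Fin 3, g + m l ∈ NS n := fun l => by rw [hm]; exact hgrow l.succ
  have posco : ∀ (x w : ℤ) (c : ℕ), 1 ≤ x → x = (c:ℤ) * w → 1 ≤ c := by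
    intro x w c hx he
    by_contra h
    have hc : c = 0 := by omega
    subst hc; simp at he; omega
  have memsubm : ∀ (X : ℤ) (t : Fin 3) (c : ℕ), 1 ≤ c → X = (c:ℤ) * m t → X - m t ∈ NS n := by
    intro X t c hc he
    have h1 : X - m t = ((c-1:ℕ):ℤ) * m t := by
      have : ((c-1:ℕ):ℤ) = (c:ℤ) - 1 := by omega
      rw [he, this]; ring
    rw [h1]; exact mgen t (c-1)
  have memsub0 : ∀ (X : ℤ) (c : ℕ), 1 ≤ c → X = (c:ℤ) * n 0 → X - n 0 ∈ NS n := by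
    intro X c hc he
    have h1 : X - n 0 = ((c-1:ℕ):ℤ) * n 0 := by
      have : ((c-1:ℕ):ℤ) = (c:ℤ) - 1 := by omega
      rw [he, this]; ring
    rw [h1]; exact NS_smul n 0 (c-1)
  -- f-row purity
  have fpure : ∀ a b c : Fin 3, (∀ l : Fin 3, l = a ∨ l = b ∨ l = c) →
      (f + m b - m a ∉ NS n) → ∃ q : ℕ, 1 ≤ q ∧ f + m b = (q:ℤ) * m c := by
    intro a b c hcov hna
    obtain ⟨q, hq⟩ := T_pure hm (hfrowT b) c (by
      intro l hl
      rcases hcov l with rfl|rfl|rfl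
      · exact hna
      · intro hmem
        apply hfS
        have he : f + m l - m l = f := by ring
        rwa [he] at hmem
      · exact absurd rfl hl)
    exact ⟨q, posco _ _ _ (by linarith [hm1 b]) hq, hq⟩
  have gavoid : ∀ b c : Fin 3, (∃ q:ℕ, 1 ≤ q ∧ f + m b = (q:ℤ) * m c) →
      g + m c - m b ∉ NS n := by
    intro b c ⟨q, hq1, hq⟩
    exact pair (f + m b - m c) _ (by ring) (memsubm _ c q hq1 hq)
  -- g-row pure on n 0
  have gpure0 : ∀ a b c : Fin 3, (∀ l : Fin 3, l = a ∨ l = b ∨ l = c) →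
      (g + m a - m b ∉ NS n) → (g + m a - m c ∉ NS n) →
      ∃ c₀ : ℕ, 1 ≤ c₀ ∧ g + m a = (c₀:ℤ) * n 0 := by
    intro a b c hcov hb hc
    obtain ⟨c₀, hc₀⟩ := NS_pure (gSrow a) 0 (by
      intro l
      refine Fin.cases ?_ ?_ l
      · intro h0; exact absurd rfl h0
      · intro s _
        rw [← hm]
        rcases hcov s with rfl|rfl|rfl
        · intro hmem
          apply hgS
          have he : g + m s - m s = g := by ring
          rwa [he] at hmem
        · exact hb
        · exact hc)
    exact ⟨c₀, posco _ _ _ (by linarith [hm1 a]) hc₀, hc₀⟩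
  -- g-row pure on m c, given avoidance of n 0 and m b
  have gpureT : ∀ a b c : Fin 3, (∀ l : Fin 3, l = a ∨ l = b ∨ l = c) →
      (g + m a - n 0 ∉ NS n) → (g + m a - m b ∉ NS n) →
      ∃ y : ℕ, 1 ≤ y ∧ g + m a = (y:ℤ) * m c := by
    intro a b c hcov h0 hb
    obtain ⟨y, hy⟩ := T_pure hm (S_to_T hm (gSrow a) h0) c (by
      intro l hl
      rcases hcov l with rfl|rfl|rfl
      · intro hmem
        apply hgS
        have he : g + m l - m l = g := by ring
        rwa [he] at hmem
      · exact hb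
      · exact absurd rfl hl)
    exact ⟨y, posco _ _ _ (by linarith [hm1 a]) hy, hy⟩
  -- g-row (already in T) pure on m c
  have gpureTT : ∀ a b c : Fin 3, (∀ l : Fin 3, l = a ∨ l = b ∨ l = c) →
      g + m a ∈ NS m → (g + m a - m b ∉ NS n) →
      ∃ y : ℕ, 1 ≤ y ∧ g + m a = (y:ℤ) * m c := by
    intro a b c hcov hT hb
    obtain ⟨y, hy⟩ := T_pure hm hT c (by
      intro l hl
      rcases hcov l with rfl|rfl|rfl
      · intro hmem
        apply hgS
        have he : g + m l - m l = g := by ring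
        rwa [he] at hmem
      · exact hb
      · exact absurd rfl hl)
    exact ⟨y, posco _ _ _ (by linarith [hm1 a]) hy, hy⟩
  -- t0 purity
  have t0pure : ∀ a b c : Fin 3, (∀ l : Fin 3, l = a ∨ l = b ∨ l = c) →
      (f + n 0 - m a ∉ NS n) → (f + n 0 - m b ∉ NS n) →
      ∃ t : ℕ, 1 ≤ t ∧ f + n 0 = (t:ℤ) * m c := by
    intro a b c hcov ha hb
    obtain ⟨t, ht⟩ := T_pure hm ht0 c (by
      intro l hl
      rcases hcov l with rfl|rfl|rfl
      · exact ha
      · exact hb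
      · exact absurd rfl hl)
    exact ⟨t, posco _ _ _ (by linarith [hn0]) ht, ht⟩
  -- final lemmas
  have hsucc : ∀ (x y : Fin 3), x ≠ y → x.succ ≠ y.succ := by
    intro x y h hc
    exact h (Fin.succ_injective 3 hc)
  have L2 : ∀ (X : ℤ) (t : Fin 3) (q y : ℕ), f + X = (q:ℤ) * m t → g + X = (y:ℤ) * m t →
      f = g := by
    intro X t q y hq hy
    rcases lt_trichotomy q y with h|h|h
    · exfalso
      apply hgS
      have hgf : g = f + ((y - q:ℕ):ℤ) * m t := by
        have hc : ((y-q:ℕ):ℤ) = (y:ℤ) - q := by omega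
        rw [hc]; linear_combination hy - hq
      rw [hgf]
      refine pf_add hpos hfrow _ (mgen t (y-q)) ?_
      have h1 : (1:ℤ) ≤ ((y-q:ℕ):ℤ) := by omega
      have h2 := hm1 t
      intro he; nlinarith
    · have : (q:ℤ) = (y:ℤ) := by omega
      rw [this] at hq
      linarith [hq, hy]
    · exfalso
      apply hfS
      have hgf : f = g + ((q - y:ℕ):ℤ) * m t := by
        have hc : ((q-y:ℕ):ℤ) = (q:ℤ) - y := by omega
        rw [hc]; linear_combination hq - hy
      rw [hgf]
      refine pf_add hpos hgrow _ (mgen t (q-y)) ?_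
      have h1 : (1:ℤ) ≤ ((q-y:ℕ):ℤ) := by omega
      have h2 := hm1 t
      intro he; nlinarith
  have L1 : ∀ (a b t : Fin 3) (c c' : ℕ), a ≠ b → t ≠ a → t ≠ b →
      f + m a = (c:ℤ) * m t → f + m b = (c':ℤ) * m t → False := by
    intro a b t c c' hab hta htb h1 h2
    rcases lt_trichotomy c c' with h|h|h
    · refine minGen_contra hmin b.succ a.succ t.succ (hsucc _ _ (Ne.symm hab))
        (hsucc _ _ (Ne.symm htb)) (c' - c) ?_
      rw [← hm, ← hm, ← hm]
      have hc : ((c'-c:ℕ):ℤ) = (c':ℤ) - c := by omega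
      rw [hc]; linear_combination h2 - h1
    · refine minGen_contra hmin b.succ a.succ t.succ (hsucc _ _ (Ne.symm hab))
        (hsucc _ _ (Ne.symm htb)) 0 ?_
      rw [← hm, ← hm, ← hm]
      have hc : (c:ℤ) = (c':ℤ) := by omega
      push_cast
      rw [hc] at h1
      linear_combination h2 - h1
    · refine minGen_contra hmin a.succ b.succ t.succ (hsucc _ _ hab)
        (hsucc _ _ (Ne.symm hta)) (c - c') ?_
      rw [← hm, ← hm, ← hm]
      have hc : ((c-c':ℕ):ℤ) = (c:ℤ) - c' := by omega
      rw [hc]; linear_combination h1 - h2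
  have L1' : ∀ (a b : Fin 3) (c c' : ℕ), a ≠ b →
      g + m a = (c:ℤ) * n 0 → g + m b = (c':ℤ) * n 0 → False := by
    intro a b c c' hab h1 h2
    rcases lt_trichotomy c c' with h|h|h
    · refine minGen_contra hmin b.succ a.succ 0 (hsucc _ _ (Ne.symm hab))
        (Fin.succ_ne_zero b) (c' - c) ?_
      rw [← hm, ← hm]
      have hc : ((c'-c:ℕ):ℤ) = (c':ℤ) - c := by omega
      rw [hc]; linear_combination h2 - h1
    · refine minGen_contra hmin b.succ a.succ 0 (hsucc _ _ (Ne.symm hab))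
        (Fin.succ_ne_zero b) 0 ?_
      rw [← hm, ← hm]
      have hc : (c:ℤ) = (c':ℤ) := by omega
      push_cast
      rw [hc] at h1
      linear_combination h2 - h1
    · refine minGen_contra hmin a.succ b.succ 0 (hsucc _ _ hab)
        (Fin.succ_ne_zero a) (c - c') ?_
      rw [← hm, ← hm]
      have hc : ((c-c':ℕ):ℤ) = (c:ℤ) - c' := by omega
      rw [hc]; linear_combination h1 - h2
  have L1'' : ∀ (b t : Fin 3) (c c' : ℕ), b ≠ t →
      f + n 0 = (c:ℤ) * m t → f + m b = (c':ℤ) * m t → False := by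
    intro b t c c' hbt h1 h2
    rcases lt_trichotomy c c' with h|h|h
    · refine minGen_contra hmin b.succ 0 t.succ (Fin.succ_ne_zero b)
        (hsucc _ _ hbt) (c' - c) ?_
      rw [← hm, ← hm]
      have hc : ((c'-c:ℕ):ℤ) = (c':ℤ) - c := by omega
      rw [hc]; linear_combination h2 - h1
    · refine minGen_contra hmin b.succ 0 t.succ (Fin.succ_ne_zero b)
        (hsucc _ _ hbt) 0 ?_
      rw [← hm]
      have hc : (c:ℤ) = (c':ℤ) := by omega
      push_cast
      rw [hc] at h1
      linear_combination h2 - h1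
    · refine minGen_contra hmin 0 b.succ t.succ (Ne.symm (Fin.succ_ne_zero b))
        (Ne.symm (Fin.succ_ne_zero t)) (c - c') ?_
      rw [← hm, ← hm]
      have hc : ((c-c':ℕ):ℤ) = (c:ℤ) - c' := by omega
      rw [hc]; linear_combination h1 - h2
  -- permuted covers
  have pcov : ∀ i j k : Fin 3, (∀ l : Fin 3, l = i ∨ l = j ∨ l = k) →
      (∀ l : Fin 3, l = j ∨ l = i ∨ l = k) := by
    intro i j k h l; rcases h l with h'|h'|h' <;> tauto
  have pcov2 : ∀ i j k : Fin 3, (∀ l : Fin 3, l = i ∨ l = j ∨ l = k) →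
      (∀ l : Fin 3, l = k ∨ l = i ∨ l = j) := by
    intro i j k h l; rcases h l with h'|h'|h' <;> tauto
  have pcov3 : ∀ i j k : Fin 3, (∀ l : Fin 3, l = i ∨ l = j ∨ l = k) →
      (∀ l : Fin 3, l = i ∨ l = k ∨ l = j) := by
    intro i j k h l; rcases h l with h'|h'|h' <;> tauto
  -- CASE C
  have caseC : ∀ i j k : Fin 3, (∀ l : Fin 3, l = i ∨ l = j ∨ l = k) →
      i ≠ j → i ≠ k → j ≠ k →
      (f + n 0 - m i ∉ NS n) → (f + n 0 - m j ∈ NS n) →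
      (∃ c₀ : ℕ, 1 ≤ c₀ ∧ g + m i = (c₀:ℤ) * n 0) → f = g := by
    intro i j k hcov hij hik hjk hna0i ha0j ⟨c₀, hc₀1, hc₀⟩
    have hnbj0 : g + m j - n 0 ∉ NS n := pair _ _ (by ring) ha0j
    by_cases hbji : g + m j - m i ∈ NS n
    · have hnaij : f + m i - m j ∉ NS n := pair _ _ (by ring) hbji
      obtain ⟨p, hp1, hp⟩ := fpure j i k (fun l => by rcases hcov l with h|h|h <;> tauto) hnaij
      have hnbki : g + m k - m i ∉ NS n := gavoid i k ⟨p, hp1, hp⟩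
      by_cases hbkj : g + m k - m j ∈ NS n
      · have hnajk : f + m j - m k ∉ NS n := pair _ _ (by ring) hbkj
        obtain ⟨s, hs1, hs⟩ := fpure k j i (fun l => by rcases hcov l with h|h|h <;> tauto) hnajk
        by_cases hbjk : g + m j - m k ∈ NS n
        · have hnakj : f + m k - m j ∉ NS n := pair _ _ (by ring) hbjk
          obtain ⟨u, hu1, hu⟩ := fpure j k i (fun l => by rcases hcov l with h|h|h <;> tauto) hnakj
          exact (L1 j k i s u hjk hij hik hs hu).elim
        · obtain ⟨x, hx1, hx⟩ := gpureT j k i (fun l => by rcases hcov l with h|h|h <;> tauto) hnbj0 hbjk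
          exact L2 (m j) i s x hs hx
      · obtain ⟨h₀, hh1, hh⟩ := gpure0 k i j (fun l => by rcases hcov l with h|h|h <;> tauto) hnbki hbkj
        exact (L1' i k c₀ h₀ hik hc₀ hh).elim
    · obtain ⟨y, hy1, hy⟩ := gpureT j i k (fun l => by rcases hcov l with h|h|h <;> tauto) hnbj0 hbji
      have hbjk : g + m j - m k ∈ NS n := memsubm _ k y hy1 hy
      have hnakj : f + m k - m j ∉ NS n := pair _ _ (by ring) hbjk
      obtain ⟨u, hu1, hu⟩ := fpure j k i (fun l => by rcases hcov l with h|h|h <;> tauto) hnakj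
      by_cases hbki : g + m k - m i ∈ NS n
      · have hnaik : f + m i - m k ∉ NS n := pair _ _ (by ring) hbki
        obtain ⟨p, hp1, hp⟩ := fpure k i j (fun l => by rcases hcov l with h|h|h <;> tauto) hnaik
        by_cases hbk0 : g + m k - n 0 ∈ NS n
        · have hna0k : f + n 0 - m k ∉ NS n := pair _ _ (by ring) hbk0
          obtain ⟨t, ht1, ht⟩ := t0pure i k j (fun l => by rcases hcov l with h|h|h <;> tauto) hna0i hna0k
          exact (L1'' i j t p hij ht hp).elim
        · by_cases hbkj : g + m k - m j ∈ NS n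
          · have hnajk : f + m j - m k ∉ NS n := pair _ _ (by ring) hbkj
            obtain ⟨s, hs1, hs⟩ := fpure k j i (fun l => by rcases hcov l with h|h|h <;> tauto) hnajk
            exact (L1 j k i s u hjk hij hik hs hu).elim
          · obtain ⟨e, he1, he⟩ := gpureT k j i (fun l => by rcases hcov l with h|h|h <;> tauto) hbk0 hbkj
            exact L2 (m k) i u e hu he
      · by_cases hbkj : g + m k - m j ∈ NS n
        · have hnajk : f + m j - m k ∉ NS n := pair _ _ (by ring) hbkj
          obtain ⟨s, hs1, hs⟩ := fpure k j i (fun l => by rcases hcov l with h|h|h <;> tauto) hnajk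
          exact (L1 j k i s u hjk hij hik hs hu).elim
        · obtain ⟨h₀, hh1, hh⟩ := gpure0 k i j (fun l => by rcases hcov l with h|h|h <;> tauto) hbki hbkj
          exact (L1' i k c₀ h₀ hik hc₀ hh).elim
  -- CASE B
  have caseB : ∀ i j k : Fin 3, (∀ l : Fin 3, l = i ∨ l = j ∨ l = k) →
      i ≠ j → i ≠ k → j ≠ k →
      (f + n 0 - m i ∉ NS n) → (g + m i - m j ∈ NS n) → f = g := by
    intro i j k hcov hij hik hjk hna0i hbij
    have hnaji : f + m j - m i ∉ NS n := pair _ _ (by ring) hbij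
    obtain ⟨q, hq1, hq⟩ := fpure i j k hcov hnaji
    have hnbkj : g + m k - m j ∉ NS n := gavoid j k ⟨q, hq1, hq⟩
    by_cases hbki : g + m k - m i ∈ NS n
    · have hnaik : f + m i - m k ∉ NS n := pair _ _ (by ring) hbki
      obtain ⟨p, hp1, hp⟩ := fpure k i j (fun l => by rcases hcov l with h|h|h <;> tauto) hnaik
      have hnbji : g + m j - m i ∉ NS n := gavoid i j ⟨p, hp1, hp⟩
      by_cases hbjk : g + m j - m k ∈ NS n
      · have hnakj : f + m k - m j ∉ NS n := pair _ _ (by ring) hbjk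
        obtain ⟨r, hr1, hr⟩ := fpure j k i (fun l => by rcases hcov l with h|h|h <;> tauto) hnakj
        by_cases hbj0 : g + m j - n 0 ∈ NS n
        · have hna0j : f + n 0 - m j ∉ NS n := pair _ _ (by ring) hbj0
          obtain ⟨t, ht1, ht⟩ := t0pure i j k hcov hna0i hna0j
          have hnbk0 : g + m k - n 0 ∉ NS n :=
            pair _ _ (by ring) (memsubm _ k t ht1 ht)
          obtain ⟨e, he1, he⟩ := gpureT k j i (fun l => by rcases hcov l with h|h|h <;> tauto) hnbk0 hnbkj
          exact L2 (m k) i r e hr he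
        · obtain ⟨y, hy1, hy⟩ := gpureT j i k (fun l => by rcases hcov l with h|h|h <;> tauto) hbj0 hnbji
          exact L2 (m j) k q y hq hy
      · obtain ⟨d₀, hd1, hd⟩ := gpure0 j i k (fun l => by rcases hcov l with h|h|h <;> tauto) hnbji hbjk
        have hbj0 : g + m j - n 0 ∈ NS n := memsub0 _ d₀ hd1 hd
        have hna0j : f + n 0 - m j ∉ NS n := pair _ _ (by ring) hbj0
        obtain ⟨t, ht1, ht⟩ := t0pure i j k hcov hna0i hna0j
        exact (L1'' j k t q hjk ht hq).elim
    · obtain ⟨e₀, he1, he⟩ := gpure0 k i j (fun l => by rcases hcov l with h|h|h <;> tauto) hbki hnbkj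
      have hbk0 : g + m k - n 0 ∈ NS n := memsub0 _ e₀ he1 he
      have hna0k : f + n 0 - m k ∉ NS n := pair _ _ (by ring) hbk0
      obtain ⟨t, ht1, ht⟩ := t0pure i k j (fun l => by rcases hcov l with h|h|h <;> tauto) hna0i hna0k
      have hnbj0 : g + m j - n 0 ∉ NS n :=
        pair _ _ (by ring) (memsubm _ j t ht1 ht)
      by_cases hbji : g + m j - m i ∈ NS n
      · have hnaij : f + m i - m j ∉ NS n := pair _ _ (by ring) hbji
        obtain ⟨p, hp1, hp⟩ := fpure j i k (fun l => by rcases hcov l with h|h|h <;> tauto) hnaij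
        exact (L1 i j k p q hij (Ne.symm hik) (Ne.symm hjk) hp hq).elim
      · obtain ⟨y, hy1, hy⟩ := gpureT j i k (fun l => by rcases hcov l with h|h|h <;> tauto) hnbj0 hbji
        exact L2 (m j) k q y hq hy
  -- CASE 2
  have case2 : ∀ i j k : Fin 3, (∀ l : Fin 3, l = i ∨ l = j ∨ l = k) →
      i ≠ j → i ≠ k → j ≠ k → g + m i ∉ NS m → f = g := by
    intro i j k hcov hij hik hjk hi
    have hbi0 : g + m i - n 0 ∈ NS n := by
      by_contra h
      exact hi (S_to_T hm (gSrow i) h)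
    have hna0i : f + n 0 - m i ∉ NS n := pair _ _ (by ring) hbi0
    by_cases hbij : g + m i - m j ∈ NS n
    · exact caseB i j k hcov hij hik hjk hna0i hbij
    by_cases hbik : g + m i - m k ∈ NS n
    · exact caseB i k j (fun l => by rcases hcov l with h|h|h <;> tauto) hik hij (Ne.symm hjk) hna0i hbik
    have hci : ∃ c₀ : ℕ, 1 ≤ c₀ ∧ g + m i = (c₀:ℤ) * n 0 :=
      gpure0 i j k hcov hbij hbik
    have ht0ne : f + n 0 ≠ 0 := by
      intro h
      have := hn0
      omega
    obtain ⟨l, hl⟩ := NS_sub_gen ht0 ht0ne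
    have hlS : f + n 0 - m l ∈ NS n := T_sub_S hm hl
    rcases hcov l with rfl|rfl|rfl
    · exact absurd hlS hna0i
    · exact caseC i l k hcov hij hik hjk hna0i hlS hci
    · exact caseC i l j (fun l => by rcases hcov l with h|h|h <;> tauto) hik hij (Ne.symm hjk) hna0i hlS hci
  -- MAIN SPLIT
  by_cases hall : ∀ l : Fin 3, g + m l ∈ NS m
  · by_cases hb01 : g + m 0 - m 1 ∈ NS n
    · have hna10 : f + m 1 - m 0 ∉ NS n := pair _ _ (by ring) hb01
      obtain ⟨q, hq1, hq⟩ := fpure 0 1 2 (by decide) hna10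
      have hnb21 : g + m 2 - m 1 ∉ NS n := gavoid 1 2 ⟨q, hq1, hq⟩
      obtain ⟨y, hy1, hy⟩ := gpureTT 2 1 0 (by decide) (hall 2) hnb21
      have hb20 : g + m 2 - m 0 ∈ NS n := memsubm _ 0 y hy1 hy
      have hna02 : f + m 0 - m 2 ∉ NS n := pair _ _ (by ring) hb20
      obtain ⟨p, hp1, hp⟩ := fpure 2 0 1 (by decide) hna02
      have hnb10 : g + m 1 - m 0 ∉ NS n := gavoid 0 1 ⟨p, hp1, hp⟩
      obtain ⟨d, hd1, hd⟩ := gpureTT 1 0 2 (by decide) (hall 1) hnb10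
      exact L2 (m 1) 2 q d hq hd
    · obtain ⟨cc, hcc1, hcc⟩ := gpureTT 0 1 2 (by decide) (hall 0) hb01
      have hb02 : g + m 0 - m 2 ∈ NS n := memsubm _ 2 cc hcc1 hcc
      have hna20 : f + m 2 - m 0 ∉ NS n := pair _ _ (by ring) hb02
      obtain ⟨r, hr1, hr⟩ := fpure 0 2 1 (by decide) hna20
      have hnb12 : g + m 1 - m 2 ∉ NS n := gavoid 2 1 ⟨r, hr1, hr⟩
      obtain ⟨d, hd1, hd⟩ := gpureTT 1 2 0 (by decide) (hall 1) hnb12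
      have hb10 : g + m 1 - m 0 ∈ NS n := memsubm _ 0 d hd1 hd
      have hna01 : f + m 0 - m 1 ∉ NS n := pair _ _ (by ring) hb10
      obtain ⟨p, hp1, hp⟩ := fpure 1 0 2 (by decide) hna01
      have hnb20 : g + m 2 - m 0 ∉ NS n := gavoid 0 2 ⟨p, hp1, hp⟩
      obtain ⟨e, he1, he⟩ := gpureTT 2 0 1 (by decide) (hall 2) hnb20
      exact L2 (m 2) 1 r e hr he
  · push_neg at hall
    obtain ⟨i, hi⟩ := hall
    have htri : ∀ l : Fin 3, l = 0 ∨ l = 1 ∨ l = 2 := by decide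
    rcases htri i with rfl|rfl|rfl
    · exact case2 0 1 2 (by decide) (by decide) (by decide) (by decide) hi
    · exact case2 1 0 2 (by decide) (by decide) (by decide) (by decide) hi
    · exact case2 2 0 1 (by decide) (by decide) (by decide) (by decide) hi


theorem stmt7 (n : Fin 4 → ℕ)
    (hpos : ∀ i, 0 < n i)
    (hgcd : Finset.univ.gcd n = 1)
    (hmin : MinGen n)
    (m : Fin 3 → ℕ) (hm : ∀ i : Fin 3, m i = n i.succ)
    (hgcdT : Finset.univ.gcd m = 1)
    (F : ℤ) (hF : IsFrob n F) (hAS : AlmostSym n F)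
    (FT : ℤ) (hFT : IsFrob m FT)
    (f : ℤ) (hfT : f ∈ PF m) (hneT : f ≠ FT)
    (hfS : f ∈ PF n) (hFf : F - f ∉ NS n) :
    2 * f = F := by
  have hfnS : f ∉ NS n := hfS.1
  have hgPF : F - f ∈ PF n := (hAS f hfnS hFf).2
  have hFnS : F ∉ NS n := hF.1
  have hfleF : f ≤ F := by
    by_contra h
    push_neg at h
    exact hfnS (hF.2 f h)
  have hgleF : F - f ≤ F := by
    by_contra h
    push_neg at h
    exact hFf (hF.2 _ h)
  have hf0 : f ≠ 0 := fun h => hfnS (by rw [h]; exact NS_zero n)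
  have hg0 : F - f ≠ 0 := fun h => hFf (by rw [h]; exact NS_zero n)
  have hf1 : 1 ≤ f := by omega
  have hg1 : 1 ≤ F - f := by omega
  have hFS' : f + (F - f) ∉ NS n := by
    have he : f + (F - f) = F := by ring
    rw [he]; exact hFnS
  have ht0 : f + n 0 ∈ NS m := by
    refine S_to_T hm (hfS.2 0) ?_
    have he : f + n 0 - n 0 = f := by ring
    rw [he]; exact hfnS
  have hk := key hm hpos hmin hf1 hg1 hfnS hFf hFS' hfS.2 hgPF.2 hfT.2 ht0
  omega
end

section
/- Let S = ⟨n₁,n₂,n₃,n₄⟩ and let f, f' ∈ PF(S) \ {F(S)} with f = λ_{ji}·n_i - n_j and f' = λ_{ki}·n_i - n_k for three distinct indices i, j, k, where λ_{ji} ≥ λ_{ki}. If A = (a_{pq}) is an RF-matrix for F(S) - f, then a_{kj} = 0. -/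
lemma PF_add {e : ℕ} {n : Fin e → ℕ} {x s : ℤ}
    (hx : x ∈ PF n) (hs : s ∈ NS n) (hs0 : s ≠ 0) : x + s ∈ NS n := by
  obtain ⟨a, ha⟩ := hs
  have hex : ∃ q, a q ≠ 0 := by
    by_contra h
    push_neg at h
    exact hs0 (by simp [ha, h])
  obtain ⟨q, hq⟩ := hex
  set a' : Fin e → ℕ := fun p => if p = q then a p - 1 else a p with ha'
  have hsum : s = (n q : ℤ) + ∑ p, (a' p : ℤ) * n p := by
    rw [ha]
    have hcongr : ∀ p ∈ Finset.univ, (a p : ℤ) * n p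
        = (a' p : ℤ) * n p + (if p = q then (n q : ℤ) else 0) := by
      intro p _
      by_cases hpq : p = q
      · subst hpq
        simp only [ha', if_pos rfl]
        have h1 : 1 ≤ a p := Nat.one_le_iff_ne_zero.mpr hq
        push_cast [h1]
        ring
      · simp [ha', hpq]
    rw [Finset.sum_congr rfl hcongr, Finset.sum_add_distrib, Finset.sum_ite_eq']
    simp [add_comm]
  have h1 : x + (n q : ℤ) ∈ NS n := hx.2 q
  have h2 : (∑ p, (a' p : ℤ) * n p) ∈ NS n := ⟨a', rfl⟩
  rw [hsum, ← add_assoc]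
  exact NS_add h1 h2

theorem stmt8 (n : Fin 4 → ℕ)
    (hpos : ∀ i, 0 < n i)
    (hgcd : Finset.univ.gcd n = 1)
    (hmin : MinGen n)
    (F : ℤ) (hF : IsFrob n F)
    (i j k : Fin 4) (hij : i ≠ j) (hik : i ≠ k) (hjk : j ≠ k)
    (lamji lamki : ℕ)
    (hlamji : IsLam n j i lamji) (hlamki : IsLam n k i lamki)
    (hge : lamki ≤ lamji)
    (f f' : ℤ)
    (hf : f ∈ PF n) (hfF : f ≠ F) (hfeq : f = (lamji : ℤ) * n i - n j)
    (hf' : f' ∈ PF n) (hf'F : f' ≠ F) (hf'eq : f' = (lamki : ℤ) * n i - n k)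
    (A : Matrix (Fin 4) (Fin 4) ℤ) (hA : IsRF n (F - f) A) :
    A k j = 0 := by
  obtain ⟨hdiag, hnn, hrow⟩ := hA
  by_contra hne
  have hkj : k ≠ j := fun h => hjk h.symm
  have h0 : 0 ≤ A k j := hnn k j hkj
  have h1 : 1 ≤ A k j := by omega
  set a : Fin 4 → ℕ := fun q =>
    if q = k then 0 else if q = j then (A k j - 1).toNat else (A k q).toNat with ha
  have key : ∀ q ∈ Finset.univ, (a q : ℤ) * n q
      = A k q * n q + (if q = k then (n k : ℤ) else 0)
        - (if q = j then (n j : ℤ) else 0) := by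
    intro q _
    by_cases hq1 : q = k
    · subst hq1
      simp only [ha, if_pos rfl, if_neg hkj, hdiag q]
      push_cast
      ring
    · by_cases hq2 : q = j
      · subst hq2
        simp only [ha, if_neg hq1, if_pos rfl, if_true]
        rw [Int.toNat_of_nonneg (by omega)]
        ring
      · simp only [ha, if_neg hq1, if_neg hq2]
        rw [Int.toNat_of_nonneg (hnn k q (fun h => hq1 h.symm))]
        ring
  have hmem : F - f + n k - n j ∈ NS n := by
    refine ⟨a, ?_⟩
    rw [Finset.sum_congr rfl key, Finset.sum_sub_distrib, Finset.sum_add_distrib,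
      Finset.sum_ite_eq', Finset.sum_ite_eq', hrow k]
    simp
  have hmul : ((lamji - lamki : ℕ) : ℤ) * n i ∈ NS n := by
    refine ⟨fun p => if p = i then lamji - lamki else 0, ?_⟩
    rw [Finset.sum_congr rfl (fun p _ => show ((if p = i then lamji - lamki else 0 : ℕ) : ℤ) * n p
      = if p = i then ((lamji - lamki : ℕ) : ℤ) * n i else 0 by
        by_cases hp : p = i <;> simp [hp]), Finset.sum_ite_eq']
    simp
  have hFf' : F - f' ∈ NS n := by
    have heq : F - f' = (F - f + n k - n j) + ((lamji - lamki : ℕ) : ℤ) * n i := by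
      rw [hfeq, hf'eq]
      push_cast [hge]
      ring
    rw [heq]
    exact NS_add hmem hmul
  have hFmem : F ∈ NS n := by
    have := PF_add hf' hFf' (sub_ne_zero.mpr (fun h => hf'F h.symm))
    simpa using this
  exact hF.1 hFmem
end

section
/- Let S = ⟨n₁,n₂,n₃,n₄⟩ be an almost symmetric numerical semigroup. Then there do not exist three distinct elements f, f', f'' ∈ PF(S) \ {F(S)} of the form f = λ_{ji}·n_i - n_j, f' = λ_{ki}·n_i - n_k, f'' = λ_{hi}·n_i - n_h, where {i,j,k,h} = {1,2,3,4}. -/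
namespace Stmt9Aux

variable {n : Fin 4 → ℕ} {F : ℤ}

theorem ns_add {x y : ℤ} (hx : x ∈ NS n) (hy : y ∈ NS n) : x + y ∈ NS n := by
  obtain ⟨a, ha⟩ := hx
  obtain ⟨b, hb⟩ := hy
  refine ⟨fun l => a l + b l, ?_⟩
  rw [ha, hb, ← Finset.sum_add_distrib]
  refine Finset.sum_congr rfl fun l _ => ?_
  push_cast
  ring

theorem ns_single (l : Fin 4) (A : ℕ) : ((A : ℤ) * n l) ∈ NS n := by
  refine ⟨fun m => if m = l then A else 0, ?_⟩
  rw [Finset.sum_eq_single l]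
  · simp
  · intro m _ hm; simp [hm]
  · simp

theorem ns_mk (i j k h : Fin 4) (A B C D : ℕ) :
    ((A : ℤ) * n i + (B : ℤ) * n j + (C : ℤ) * n k + (D : ℤ) * n h) ∈ NS n :=
  ns_add (ns_add (ns_add (ns_single i A) (ns_single j B)) (ns_single k C)) (ns_single h D)

theorem sum4 (c : Fin 4 → ℤ) (i j k h : Fin 4)
    (hji : j ≠ i) (hki : k ≠ i) (hhi : h ≠ i)
    (hjk : j ≠ k) (hjh : j ≠ h) (hkh : k ≠ h) :
    ∑ l, c l = c i + c j + c k + c h := by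
  have h1 : i ∉ ({j, k, h} : Finset (Fin 4)) := by
    simp only [Finset.mem_insert, Finset.mem_singleton]
    push_neg
    exact ⟨Ne.symm hji, Ne.symm hki, Ne.symm hhi⟩
  have h2 : j ∉ ({k, h} : Finset (Fin 4)) := by
    simp only [Finset.mem_insert, Finset.mem_singleton]
    push_neg
    exact ⟨hjk, hjh⟩
  have h3 : k ∉ ({h} : Finset (Fin 4)) := by
    simp only [Finset.mem_singleton]
    exact hkh
  have huniv : (Finset.univ : Finset (Fin 4)) = {i, j, k, h} := by
    symm
    apply Finset.eq_univ_of_card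
    rw [Finset.card_insert_of_notMem h1, Finset.card_insert_of_notMem h2,
        Finset.card_insert_of_notMem h3, Finset.card_singleton]
    rfl
  rw [huniv, Finset.sum_insert h1, Finset.sum_insert h2, Finset.sum_insert h3,
      Finset.sum_singleton]
  ring

theorem ns_dest (i j k h : Fin 4)
    (hji : j ≠ i) (hki : k ≠ i) (hhi : h ≠ i)
    (hjk : j ≠ k) (hjh : j ≠ h) (hkh : k ≠ h) {x : ℤ} (hx : x ∈ NS n) :
    ∃ A B C D : ℕ, x = (A : ℤ) * n i + (B : ℤ) * n j + (C : ℤ) * n k + (D : ℤ) * n h := by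
  obtain ⟨a, ha⟩ := hx
  exact ⟨a i, a j, a k, a h, by
    rw [ha, sum4 (fun l => ((a l : ℤ) * n l)) i j k h hji hki hhi hjk hjh hkh]⟩

theorem ns_decomp {s : ℤ} (hs : s ∈ NS n) (h0 : s ≠ 0) :
    ∃ l : Fin 4, ∃ s' ∈ NS n, s = n l + s' := by
  obtain ⟨a, ha⟩ := hs
  have hex : ∃ l, a l ≠ 0 := by
    by_contra hc
    push_neg at hc
    exact h0 (by simp [ha, hc])
  obtain ⟨l, hl⟩ := hex
  have hl1 : 1 ≤ a l := Nat.one_le_iff_ne_zero.mpr hl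
  refine ⟨l, ∑ m, ((Function.update a l (a l - 1) m : ℕ) : ℤ) * n m, ⟨_, rfl⟩, ?_⟩
  have e1 : ∑ m, ((a m : ℤ)) * n m
      = (a l : ℤ) * n l + ∑ m ∈ Finset.univ.erase l, (a m : ℤ) * n m :=
    (Finset.add_sum_erase _ _ (Finset.mem_univ l)).symm
  have e2 : ∑ m, ((Function.update a l (a l - 1) m : ℕ) : ℤ) * n m
      = ((a l - 1 : ℕ) : ℤ) * n l + ∑ m ∈ Finset.univ.erase l, (a m : ℤ) * n m := by
    rw [← Finset.add_sum_erase _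
      (fun m => ((Function.update a l (a l - 1) m : ℕ) : ℤ) * n m) (Finset.mem_univ l)]
    congr 1
    · simp
    · refine Finset.sum_congr rfl fun m hm => ?_
      rw [Function.update_of_ne (Finset.ne_of_mem_erase hm)]
  rw [ha, e1, e2, Nat.cast_sub hl1]
  push_cast
  ring

theorem pf_mem_add {x s : ℤ} (hx : x ∈ PF n) (hs : s ∈ NS n) (h0 : s ≠ 0) :
    x + s ∈ NS n := by
  obtain ⟨l, s', hs', rfl⟩ := ns_decomp hs h0
  have he : x + ((n l : ℤ) + s') = (x + n l) + s' := by ring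
  rw [he]
  exact ns_add (hx.2 l) hs'

theorem F_flip (hF0 : F ∉ NS n) (hAS : AlmostSym n F) {x : ℤ}
    (hx : x ∈ PF n) (hxF : x ≠ F) : F - x ∈ PF n := by
  have h1 : F - x ∉ NS n := by
    intro hmem
    rcases eq_or_ne (F - x) 0 with h | h
    · exact hxF (by linarith)
    · have h2 := pf_mem_add hx hmem h
      have h3 : x + (F - x) = F := by ring
      rw [h3] at h2
      exact hF0 h2
  exact (hAS x hx.1 h1).2

theorem pf_diff {x y : ℤ} (hx : x ∈ PF n) (hy : y ∈ PF n) (hne : x ≠ y) :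
    x - y ∉ NS n := by
  intro hmem
  have h2 := pf_mem_add hy hmem (sub_ne_zero.mpr hne)
  have h3 : y + (x - y) = x := by ring
  rw [h3] at h2
  exact hx.1 h2

theorem thresh {p i : Fin 4} {a : ℕ} (hl : IsLam n p i a) {L : ℕ} (hL : L ≤ a) :
    ((L : ℤ) * n i - n p) ∉ NS n := by
  intro hmem
  apply hl.1
  have h1 : ((a : ℤ) * n i - n p) = ((L : ℤ) * n i - n p) + ((a - L : ℕ) : ℤ) * n i := by
    rw [Nat.cast_sub hL]; ring
  rw [h1]
  exact ns_add hmem (ns_single i _)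

theorem lam_pos (hpos : ∀ l, 0 < n l) (hmin : MinGen n)
    (i p q r : Fin 4) (hpi : p ≠ i) (hqi : q ≠ i) (hri : r ≠ i)
    (hpq : p ≠ q) (hpr : p ≠ r) (hqr : q ≠ r)
    {a : ℕ} (hf : ((a : ℤ) * n i - n p) ∈ PF n) : 1 ≤ a := by
  by_contra hc
  push_neg at hc
  have ha0 : a = 0 := by omega
  subst ha0
  have h1 : ((0 : ℕ) : ℤ) * n i - n p + n i ∈ NS n := hf.2 i
  obtain ⟨A, B, C, D, hd⟩ := ns_dest i p q r hpi hqi hri hpq hpr hqr h1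
  rcases Nat.eq_zero_or_pos A with hA | hA
  · subst hA
    apply hmin i
    refine ⟨fun l => if l = p then B + 1 else if l = q then C else if l = r then D else 0,
      ?_, ?_⟩
    · simp [Ne.symm hpi, Ne.symm hqi, Ne.symm hri]
    · rw [sum4 (fun l => (((if l = p then B + 1 else if l = q then C
        else if l = r then D else 0 : ℕ) : ℤ)) * n l) i p q r hpi hqi hri hpq hpr hqr]
      have vi : (if i = p then B + 1 else if i = q then C else if i = r then D else 0) = 0 := by
        simp [Ne.symm hpi, Ne.symm hqi, Ne.symm hri]
      have vp : (if p = p then B + 1 else if p = q then C else if p = r then D else 0) = B + 1 := by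
        simp
      have vq : (if q = p then B + 1 else if q = q then C else if q = r then D else 0) = C := by
        simp [Ne.symm hpq]
      have vr : (if r = p then B + 1 else if r = q then C else if r = r then D else 0) = D := by
        simp [Ne.symm hpr, Ne.symm hqr]
      rw [vi, vp, vq, vr]
      push_cast
      push_cast at hd
      linarith
  · have hA' : (1 : ℤ) ≤ (A : ℤ) := by exact_mod_cast hA
    have t1 : ((n i : ℕ) : ℤ) ≤ (A : ℤ) * n i :=
      le_mul_of_one_le_left (by positivity) hA'
    have t2 : (0 : ℤ) ≤ (B : ℤ) * n p := by positivity
    have t3 : (0 : ℤ) ≤ (C : ℤ) * n q := by positivity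
    have t4 : (0 : ℤ) ≤ (D : ℤ) * n r := by positivity
    have hp' : (0 : ℤ) < n p := by exact_mod_cast hpos p
    push_cast at hd
    linarith

theorem row (hF0 : F ∉ NS n) (hAS : AlmostSym n F)
    (i p q r : Fin 4) (hpi : p ≠ i) (hqi : q ≠ i) (hri : r ≠ i)
    (hpq : p ≠ q) (hpr : p ≠ r) (hqr : q ≠ r)
    {b : ℕ} (hb : 1 ≤ b)
    (hfp : ((b : ℤ) * n i - n p) ∈ PF n) (hfpF : ((b : ℤ) * n i - n p) ≠ F) :
    ∃ Q R : ℕ, F - ((b : ℤ) * n i - n p) + n i = (Q : ℤ) * n q + (R : ℤ) * n r := by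
  have hg := F_flip hF0 hAS hfp hfpF
  obtain ⟨A, B, C, D, hd⟩ := ns_dest i p q r hpi hqi hri hpq hpr hqr (hg.2 i)
  rcases Nat.eq_zero_or_pos A with hA | hA
  · rcases Nat.eq_zero_or_pos B with hB | hB
    · subst hA; subst hB
      refine ⟨C, D, ?_⟩
      push_cast at hd
      linarith
    · exfalso
      apply hF0
      have key : F = ((b - 1 : ℕ) : ℤ) * n i + ((B - 1 : ℕ) : ℤ) * n p
          + (C : ℤ) * n q + (D : ℤ) * n r := by
        subst hA
        rw [Nat.cast_sub hb, Nat.cast_sub hB]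
        push_cast at hd
        push_cast
        linarith
      rw [key]
      exact ns_mk i p q r _ _ _ _
  · exfalso
    apply hg.1
    have key : F - ((b : ℤ) * n i - n p) = ((A - 1 : ℕ) : ℤ) * n i + (B : ℤ) * n p
        + (C : ℤ) * n q + (D : ℤ) * n r := by
      rw [Nat.cast_sub hA]
      push_cast at hd
      push_cast
      linarith
    rw [key]
    exact ns_mk i p q r _ _ _ _

theorem delta_asym (hF0 : F ∉ NS n) (hAS : AlmostSym n F)
    (i u v t : Fin 4) (hui : u ≠ i) (hvi : v ≠ i) (hti : t ≠ i)
    (huv : u ≠ v) (hut : u ≠ t) (hvt : v ≠ t)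
    {a₁ a₂ : ℕ} (h12 : a₁ ≤ a₂)
    (hf1 : ((a₁ : ℤ) * n i - n u) ∈ PF n) (hf1F : ((a₁ : ℤ) * n i - n u) ≠ F)
    (hf2 : ((a₂ : ℤ) * n i - n v) ∈ PF n) (hf2F : ((a₂ : ℤ) * n i - n v) ≠ F)
    (hnc : F ≠ ((a₁ : ℤ) * n i - n u) + ((a₂ : ℤ) * n i - n v)) :
    ∃ τ κ : ℕ, 1 ≤ τ ∧ 1 ≤ κ ∧ κ ≤ a₁ ∧
      F - ((a₁ : ℤ) * n i - n u) - ((a₂ : ℤ) * n i - n v)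
        = (τ : ℤ) * n t - (κ : ℤ) * n i := by
  have hg2 := F_flip hF0 hAS hf2 hf2F
  have hg1 := F_flip hF0 hAS hf1 hf1F
  obtain ⟨A, B, C, D, hd⟩ := ns_dest i u v t hui hvi hti huv hut hvt (hg2.2 u)
  rcases Nat.eq_zero_or_pos B with hB | hB
  swap
  · exfalso
    apply hg2.1
    have key : F - ((a₂ : ℤ) * n i - n v) = (A : ℤ) * n i + ((B - 1 : ℕ) : ℤ) * n u
        + (C : ℤ) * n v + (D : ℤ) * n t := by
      rw [Nat.cast_sub hB]
      push_cast at hd ⊢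
      linarith
    rw [key]
    exact ns_mk i u v t _ _ _ _
  subst hB
  rcases Nat.eq_zero_or_pos C with hC | hC
  swap
  · exfalso
    apply hg1.1
    have key : F - ((a₁ : ℤ) * n i - n u) = ((A + (a₂ - a₁) : ℕ) : ℤ) * n i
        + ((0 : ℕ) : ℤ) * n u + ((C - 1 : ℕ) : ℤ) * n v + (D : ℤ) * n t := by
      push_cast [Nat.cast_sub h12, Nat.cast_sub hC]
      push_cast at hd
      linarith
    rw [key]
    exact ns_mk i u v t _ _ _ _
  subst hC
  have hne1 : F - ((a₂ : ℤ) * n i - n v) ≠ ((a₁ : ℤ) * n i - n u) := by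
    intro e
    exact hnc (by linarith)
  have hAa : A < a₁ := by
    by_contra hAa
    push_neg at hAa
    apply pf_diff hg2 hf1 hne1
    have key : (F - ((a₂ : ℤ) * n i - n v)) - ((a₁ : ℤ) * n i - n u)
        = ((A - a₁ : ℕ) : ℤ) * n i + ((0 : ℕ) : ℤ) * n u + ((0 : ℕ) : ℤ) * n v
          + (D : ℤ) * n t := by
      rw [Nat.cast_sub hAa]
      push_cast at hd ⊢
      linarith
    rw [key]
    exact ns_mk i u v t _ _ _ _
  have hD : 1 ≤ D := by
    by_contra hD
    push_neg at hD
    have hD0 : D = 0 := by omega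
    subst hD0
    apply pf_diff hf1 hg2 (Ne.symm hne1)
    have key : ((a₁ : ℤ) * n i - n u) - (F - ((a₂ : ℤ) * n i - n v))
        = ((a₁ - A : ℕ) : ℤ) * n i + ((0 : ℕ) : ℤ) * n u + ((0 : ℕ) : ℤ) * n v
          + ((0 : ℕ) : ℤ) * n t := by
      rw [Nat.cast_sub (le_of_lt hAa)]
      push_cast at hd ⊢
      linarith
    rw [key]
    exact ns_mk i u v t _ _ _ _
  refine ⟨D, a₁ - A, hD, by omega, by omega, ?_⟩
  rw [Nat.cast_sub (le_of_lt hAa)]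
  push_cast at hd ⊢
  linarith

theorem delta (hF0 : F ∉ NS n) (hAS : AlmostSym n F)
    (i u v t : Fin 4) (hui : u ≠ i) (hvi : v ≠ i) (hti : t ≠ i)
    (huv : u ≠ v) (hut : u ≠ t) (hvt : v ≠ t)
    {a₁ a₂ : ℕ}
    (hf1 : ((a₁ : ℤ) * n i - n u) ∈ PF n) (hf1F : ((a₁ : ℤ) * n i - n u) ≠ F)
    (hf2 : ((a₂ : ℤ) * n i - n v) ∈ PF n) (hf2F : ((a₂ : ℤ) * n i - n v) ≠ F)
    (hnc : F ≠ ((a₁ : ℤ) * n i - n u) + ((a₂ : ℤ) * n i - n v)) :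
    ∃ τ κ : ℕ, 1 ≤ τ ∧ 1 ≤ κ ∧ κ ≤ a₁ ∧ κ ≤ a₂ ∧
      F - ((a₁ : ℤ) * n i - n u) - ((a₂ : ℤ) * n i - n v)
        = (τ : ℤ) * n t - (κ : ℤ) * n i := by
  rcases le_total a₁ a₂ with h12 | h21
  · obtain ⟨τ, κ, h1, h2, h3, h4⟩ :=
      delta_asym hF0 hAS i u v t hui hvi hti huv hut hvt h12 hf1 hf1F hf2 hf2F hnc
    exact ⟨τ, κ, h1, h2, h3, h3.trans h12, h4⟩
  · obtain ⟨τ, κ, h1, h2, h3, h4⟩ :=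
      delta_asym hF0 hAS i v u t hvi hui hti (Ne.symm huv) hvt hut h21 hf2 hf2F hf1 hf1F
        (fun e => hnc (by linarith))
    exact ⟨τ, κ, h1, h2, h3.trans h21, h3, by linarith⟩

theorem strictC (hF0 : F ∉ NS n)
    (i p q r : Fin 4)
    {b m κ τ Q R : ℕ}
    (hlx : IsLam n q i m) (hκ1 : 1 ≤ κ) (hκm : κ ≤ m)
    (hrow : F - ((b : ℤ) * n i - n p) + n i = (Q : ℤ) * n q + (R : ℤ) * n r)
    (hδ : F - ((b : ℤ) * n i - n p) - ((m : ℤ) * n i - n q)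
      = (τ : ℤ) * n r - (κ : ℤ) * n i) :
    (R + 1 ≤ τ) ∧
      (((Q : ℤ) + 1) * n q = ((m : ℤ) + 1 - κ) * n i + ((τ : ℤ) - R) * n r) := by
  have hid : ((Q : ℤ) + 1) * n q = ((m : ℤ) + 1 - κ) * n i + ((τ : ℤ) - R) * n r := by
    linarith [hrow, hδ]
  refine ⟨?_, hid⟩
  by_contra hτR
  push_neg at hτR
  have hτR' : τ ≤ R := by omega
  have hmem : ((m + 1 - κ : ℕ) : ℤ) * n i - n q ∈ NS n := by
    have key : ((m + 1 - κ : ℕ) : ℤ) * n i - n q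
        = (Q : ℤ) * n q + ((R - τ : ℕ) : ℤ) * n r + ((0 : ℕ) : ℤ) * n p
          + ((0 : ℕ) : ℤ) * n p := by
      rw [Nat.cast_sub (show κ ≤ m + 1 by omega), Nat.cast_sub hτR']
      push_cast
      linarith
    rw [key]
    exact ns_mk q r p p _ _ _ _
  exact thresh hlx (show m + 1 - κ ≤ m by omega) hmem

theorem machine (hF0 : F ∉ NS n) (hAS : AlmostSym n F)
    (i p q r : Fin 4) (hpi : p ≠ i) (hqi : q ≠ i) (hri : r ≠ i)
    (hpq : p ≠ q) (hpr : p ≠ r) (hqr : q ≠ r)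
    {w x y : ℕ} (hw1 : 1 ≤ w)
    (hlx : IsLam n q i x) (hly : IsLam n r i y)
    (hfw : ((w : ℤ) * n i - n p) ∈ PF n) (hfwF : ((w : ℤ) * n i - n p) ≠ F)
    (hfx : ((x : ℤ) * n i - n q) ∈ PF n) (hfxF : ((x : ℤ) * n i - n q) ≠ F)
    (hfy : ((y : ℤ) * n i - n r) ∈ PF n) (hfyF : ((y : ℤ) * n i - n r) ≠ F)
    (hnc1 : F ≠ ((w : ℤ) * n i - n p) + ((x : ℤ) * n i - n q))
    (hnc2 : F ≠ ((w : ℤ) * n i - n p) + ((y : ℤ) * n i - n r)) : False := by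
  obtain ⟨Q, R, hrow⟩ := row hF0 hAS i p q r hpi hqi hri hpq hpr hqr hw1 hfw hfwF
  obtain ⟨τ₁, κ₁, hτ₁, hκ₁, hκ₁w, hκ₁x, hδ₁⟩ :=
    delta hF0 hAS i p q r hpi hqi hri hpq hpr hqr hfw hfwF hfx hfxF hnc1
  obtain ⟨τ₂, κ₂, hτ₂, hκ₂, hκ₂w, hκ₂y, hδ₂⟩ :=
    delta hF0 hAS i p r q hpi hri hqi hpr hpq (Ne.symm hqr) hfw hfwF hfy hfyF hnc2
  obtain ⟨hs1, _⟩ := strictC hF0 i p q r hlx hκ₁ hκ₁x hrow hδ₁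
  have hrow' : F - ((w : ℤ) * n i - n p) + n i = (R : ℤ) * n r + (Q : ℤ) * n q := by
    linarith
  obtain ⟨hs2, id2⟩ := strictC hF0 i p r q hly hκ₂ hκ₂y hrow' hδ₂
  apply (F_flip hF0 hAS hfw hfwF).1
  obtain ⟨d1, hd1⟩ : ∃ d : ℕ, x = κ₁ + d := ⟨x - κ₁, by omega⟩
  obtain ⟨d2, hd2⟩ : ∃ d : ℕ, y + 1 = κ₂ + d := ⟨y + 1 - κ₂, by omega⟩
  obtain ⟨d3, hd3⟩ : ∃ d : ℕ, τ₂ = Q + 1 + d := ⟨τ₂ - (Q + 1), by omega⟩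
  obtain ⟨d4, hd4⟩ : ∃ d : ℕ, τ₁ = R + 1 + d := ⟨τ₁ - (R + 1), by omega⟩
  have key : F - ((w : ℤ) * n i - n p)
      = ((d1 + d2 : ℕ) : ℤ) * n i + (d3 : ℤ) * n q + (d4 : ℤ) * n r
        + ((0 : ℕ) : ℤ) * n p := by
    have hx' : (x : ℤ) = (κ₁ : ℤ) + d1 := by exact_mod_cast hd1
    have hy' : (y : ℤ) + 1 = (κ₂ : ℤ) + d2 := by exact_mod_cast hd2
    have hτ₂' : (τ₂ : ℤ) = (Q : ℤ) + 1 + d3 := by exact_mod_cast hd3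
    have hτ₁' : (τ₁ : ℤ) = (R : ℤ) + 1 + d4 := by exact_mod_cast hd4
    push_cast
    linear_combination hδ₁ + id2 + ((n i : ℤ)) * hx' + ((n i : ℤ)) * hy'
      + ((n q : ℤ)) * hτ₂' + ((n r : ℤ)) * hτ₁'
  rw [key]
  exact ns_mk i q r p _ _ _ _

end Stmt9Aux

theorem stmt9 (n : Fin 4 → ℕ)
    (hpos : ∀ i, 0 < n i)
    (hgcd : Finset.univ.gcd n = 1)
    (hmin : MinGen n)
    (F : ℤ) (hF : IsFrob n F) (hAS : AlmostSym n F) :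
    ¬ ∃ (i j k h : Fin 4) (f f' f'' : ℤ) (a b c : ℕ),
      j ≠ i ∧ k ≠ i ∧ h ≠ i ∧ j ≠ k ∧ j ≠ h ∧ k ≠ h ∧
      f ≠ f' ∧ f ≠ f'' ∧ f' ≠ f'' ∧
      f ∈ PF n ∧ f ≠ F ∧ f' ∈ PF n ∧ f' ≠ F ∧ f'' ∈ PF n ∧ f'' ≠ F ∧
      IsLam n j i a ∧ f = (a : ℤ) * n i - n j ∧
      IsLam n k i b ∧ f' = (b : ℤ) * n i - n k ∧
      IsLam n h i c ∧ f'' = (c : ℤ) * n i - n h := by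
  rintro ⟨i, j, k, h, f, f', f'', a, b, c,
    hji, hki, hhi, hjk, hjh, hkh, hff', hff'', hf'f'',
    hfPF, hfF, hf'PF, hf'F, hf''PF, hf''F,
    hlamA, hfeq, hlamB, hf'eq, hlamC, hf''eq⟩
  subst hfeq
  subst hf'eq
  subst hf''eq
  have hF0 : F ∉ NS n := hF.1
  have ha : 1 ≤ a :=
    Stmt9Aux.lam_pos hpos hmin i j k h hji hki hhi hjk hjh hkh hfPF
  have hb : 1 ≤ b :=
    Stmt9Aux.lam_pos hpos hmin i k j h hki hji hhi (Ne.symm hjk) hkh hjh hf'PF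
  have hc : 1 ≤ c :=
    Stmt9Aux.lam_pos hpos hmin i h j k hhi hji hki (Ne.symm hjh) (Ne.symm hkh) hjk hf''PF
  by_cases hs1 : F = ((a : ℤ) * n i - n j) + ((b : ℤ) * n i - n k)
  · have hnc1 : F ≠ ((c : ℤ) * n i - n h) + ((a : ℤ) * n i - n j) := by
      intro e
      apply hf'f''
      linarith
    have hnc2 : F ≠ ((c : ℤ) * n i - n h) + ((b : ℤ) * n i - n k) := by
      intro e
      apply hff''
      linarith
    exact Stmt9Aux.machine hF0 hAS i h j k hhi hji hki (Ne.symm hjh) (Ne.symm hkh) hjk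
      hc hlamA hlamB hf''PF hf''F hfPF hfF hf'PF hf'F hnc1 hnc2
  · by_cases hs2 : F = ((a : ℤ) * n i - n j) + ((c : ℤ) * n i - n h)
    · have hnc1 : F ≠ ((b : ℤ) * n i - n k) + ((a : ℤ) * n i - n j) :=
        fun e => hs1 (by linarith)
      have hnc2 : F ≠ ((b : ℤ) * n i - n k) + ((c : ℤ) * n i - n h) := by
        intro e
        apply hff'
        linarith
      exact Stmt9Aux.machine hF0 hAS i k j h hki hji hhi (Ne.symm hjk) hkh hjh
        hb hlamA hlamC hf'PF hf'F hfPF hfF hf''PF hf''F hnc1 hnc2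
    · exact Stmt9Aux.machine hF0 hAS i j k h hji hki hhi hjk hjh hkh
        ha hlamB hlamC hfPF hfF hf'PF hf'F hf''PF hf''F hs1 hs2
end

section
/- Let S = ⟨n₁,n₂,n₃,n₄⟩ be an almost symmetric numerical semigroup. Then the type of S is at most 5. -/
set_option linter.unusedSectionVars false

namespace Stmt10

variable {n : Fin 4 → ℕ}

lemma ns_zero : (0 : ℤ) ∈ NS n := ⟨0, by simp⟩

lemma ns_add {a b : ℤ} (ha : a ∈ NS n) (hb : b ∈ NS n) : a + b ∈ NS n := by
  obtain ⟨x, hx⟩ := ha; obtain ⟨y, hy⟩ := hb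
  exact ⟨x + y, by simp [hx, hy, add_mul, Finset.sum_add_distrib]⟩

lemma ns_mul (c : ℕ) (j : Fin 4) : (c : ℤ) * n j ∈ NS n := by
  refine ⟨fun l => if l = j then c else 0, ?_⟩
  rw [Finset.sum_eq_single j] <;> simp +contextual

lemma ns_gen (j : Fin 4) : (n j : ℤ) ∈ NS n := by
  simpa using ns_mul (n := n) 1 j

lemma ns_nonneg {x : ℤ} (hx : x ∈ NS n) : 0 ≤ x := by
  obtain ⟨a, rfl⟩ := hx
  exact Finset.sum_nonneg fun j _ => mul_nonneg (Int.ofNat_nonneg _) (Int.ofNat_nonneg _)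

lemma sum_if_split (a : Fin 4 → ℕ) (k : Fin 4) (c : ℕ) :
    ∑ j, (((if j = k then c else a j) : ℕ) : ℤ) * n j
      = (c : ℤ) * n k + ∑ j ∈ Finset.univ.erase k, (a j : ℤ) * n j := by
  rw [← Finset.add_sum_erase _ (fun j => (((if j = k then c else a j) : ℕ) : ℤ) * n j)
    (Finset.mem_univ k)]
  simp only [if_pos rfl]
  congr 1
  exact Finset.sum_congr rfl (fun j hj => by rw [if_neg (Finset.mem_erase.1 hj).1])

lemma sum_split (a : Fin 4 → ℕ) (k : Fin 4) :
    ∑ j, (a j : ℤ) * n j = (a k : ℤ) * n k + ∑ j ∈ Finset.univ.erase k, (a j : ℤ) * n j :=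
  (Finset.add_sum_erase _ _ (Finset.mem_univ k)).symm

lemma ns_sub_gen {a : Fin 4 → ℕ} {k : Fin 4} (hk : 1 ≤ a k) :
    (∑ j, (a j : ℤ) * n j) - n k ∈ NS n := by
  refine ⟨fun l => if l = k then a k - 1 else a l, ?_⟩
  rw [sum_if_split, sum_split a k]
  push_cast [Nat.cast_sub hk]
  ring

lemma ns_decomp {x : ℤ} (hx : x ∈ NS n) (hx0 : x ≠ 0) : ∃ k, x - n k ∈ NS n := by
  obtain ⟨a, rfl⟩ := hx
  have h : ∃ k, a k ≠ 0 := by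
    by_contra h; push_neg at h
    exact hx0 (by simp [h])
  obtain ⟨k, hk⟩ := h
  exact ⟨k, ns_sub_gen (Nat.one_le_iff_ne_zero.2 hk)⟩

lemma pf_add {w s : ℤ} (hw : w ∈ PF n) (hs : s ∈ NS n) (hs0 : s ≠ 0) :
    w + s ∈ NS n := by
  obtain ⟨k, hk⟩ := ns_decomp hs hs0
  have := ns_add (hw.2 k) hk
  convert this using 1; ring

variable (hpos : ∀ i, 0 < n i) (hmin : MinGen n)
include hpos hmin

lemma gen_sub_notMem {i j : Fin 4} (hij : i ≠ j) : (n j : ℤ) - n i ∉ NS n := by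
  rintro ⟨a, ha⟩
  have haj : a j = 0 := by
    by_contra h
    have h1 : (a j : ℤ) * n j ≤ ∑ l, (a l : ℤ) * n l :=
      Finset.single_le_sum (f := fun l => (a l : ℤ) * n l)
        (fun l _ => mul_nonneg (Int.ofNat_nonneg _) (Int.ofNat_nonneg _)) (Finset.mem_univ j)
    have h2 : (1 : ℤ) * n j ≤ (a j : ℤ) * n j := by
      apply mul_le_mul_of_nonneg_right _ (Int.ofNat_nonneg _)
      exact_mod_cast Nat.one_le_iff_ne_zero.2 h
    have h3 : (0 : ℤ) < n i := by exact_mod_cast hpos i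
    omega
  apply hmin j
  refine ⟨fun l => if l = i then a i + 1 else a l, ?_, ?_⟩
  · simp only []
    rw [if_neg (Ne.symm hij)]; exact haj
  · rw [sum_if_split]
    rw [sum_split a i] at ha
    push_cast
    linarith [ha]

lemma gen_ne {i j : Fin 4} (hij : i ≠ j) : (n j : ℤ) ≠ n i := by
  intro h
  exact gen_sub_notMem hpos hmin hij (by rw [h]; simpa using ns_zero)

variable {F : ℤ} (hF : IsFrob n F)
include hF

lemma ns_small {x : ℤ} (hx : x ∈ NS n) (hx0 : x ≠ 0) : ∃ k, (n k : ℤ) ≤ x := by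
  obtain ⟨k, hk⟩ := ns_decomp hx hx0
  exact ⟨k, by linarith [ns_nonneg hk]⟩

omit hF in
lemma pf_F (hFr : IsFrob n F) : F ∈ PF n := by
  refine ⟨hFr.1, fun i => hFr.2 _ ?_⟩
  have := hpos i
  omega

lemma pf_pos {w : ℤ} (hw : w ∈ PF n) (hwF : w ≠ F) : 0 < w ∧ w < F := by
  constructor
  · rcases lt_trichotomy w 0 with hlt | rfl | hgt
    · exfalso
      obtain ⟨i₀, -, hi₀⟩ := Finset.exists_min_image Finset.univ (fun i => n i)
        ⟨0, Finset.mem_univ 0⟩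
      rcases eq_or_ne (w + n i₀) 0 with h0 | h0
      · obtain ⟨j, hj⟩ : ∃ j, j ≠ i₀ := by
          rcases eq_or_ne (0 : Fin 4) i₀ with h | h
          · exact ⟨1, by rw [← h]; decide⟩
          · exact ⟨0, h⟩
        apply gen_sub_notMem hpos hmin (Ne.symm hj)
        have := hw.2 j
        have heq : w + (n j : ℤ) = (n j : ℤ) - n i₀ := by linarith
        rwa [heq] at this
      · obtain ⟨k, hk⟩ := ns_small hpos hmin hF (hw.2 i₀) h0
        have h1 : (n i₀ : ℤ) ≤ n k := by exact_mod_cast hi₀ k (Finset.mem_univ k)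
        linarith
    · exact absurd ns_zero hw.1
    · exact hgt
  · rcases lt_trichotomy w F with h | h | h
    · exact h
    · exact absurd h hwF
    · exact absurd (hF.2 w h) hw.1

lemma F_pos : 0 < F := by
  by_contra h
  push_neg at h
  have h1 : (1 : ℤ) ∈ NS n := hF.2 1 (by omega)
  obtain ⟨k, hk⟩ := ns_decomp h1 one_ne_zero
  have hk1 : (n k : ℤ) = 1 := by
    have := ns_nonneg hk
    have := hpos k
    omega
  obtain ⟨j, hj⟩ : ∃ j, j ≠ k := by
    rcases eq_or_ne (0 : Fin 4) k with h | h
    · exact ⟨1, by rw [← h]; decide⟩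
    · exact ⟨0, h⟩
  apply gen_sub_notMem hpos hmin (Ne.symm hj)
  have : ((n j - 1 : ℕ) : ℤ) * n k ∈ NS n := ns_mul _ _
  have hj1 : 1 ≤ n j := hpos j
  rw [hk1] at this
  push_cast [Nat.cast_sub hj1] at this
  simpa [hk1] using this

omit hpos hmin in
lemma F_sub_notMem {w : ℤ} (hw : w ∈ PF n) (hwF : w ≠ F) : F - w ∉ NS n := by
  intro hmem
  rcases eq_or_ne (F - w) 0 with h0 | h0
  · exact hwF (by linarith)
  · exact hF.1 (by have := pf_add hw hmem h0; convert this using 1; ring)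

variable (hAS : AlmostSym n F)
include hAS

lemma pair_pf {w : ℤ} (hw : w ∈ PF n) (hwF : w ≠ F) :
    (F - w) ∈ PF n ∧ (F - w) ≠ F := by
  refine ⟨(hAS w hw.1 (F_sub_notMem hF hw hwF)).2, ?_⟩
  have := (pf_pos hpos hmin hF hw hwF).1
  intro h
  omega

omit hF hAS

open Classical in
noncomputable def Urow (n : Fin 4 → ℕ) (w : ℤ) (i : Fin 4) : Finset (Fin 4) :=
  Finset.univ.filter (fun j => j ≠ i ∧ w + n i - n j ∈ NS n)

def offdiag : Finset (Fin 4 × Fin 4) := Finset.univ.filter (fun c => c.1 ≠ c.2)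

open Classical in
noncomputable def Ucells (n : Fin 4 → ℕ) (w : ℤ) : Finset (Fin 4 × Fin 4) :=
  offdiag.filter (fun c => w + n c.1 - n c.2 ∈ NS n)

open Classical in
noncomputable def scells (n : Fin 4 → ℕ) (w : ℤ) : Finset (Fin 4 × Fin 4) :=
  offdiag.filter (fun c => Urow n w c.1 = {c.2})

omit hpos hmin in
lemma mem_Urow {w : ℤ} {i j : Fin 4} :
    j ∈ Urow n w i ↔ j ≠ i ∧ w + n i - n j ∈ NS n := by
  classical
  simp [Urow]

omit hpos hmin in
lemma mem_offdiag {c : Fin 4 × Fin 4} : c ∈ offdiag ↔ c.1 ≠ c.2 := by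
  simp [offdiag]

omit hpos hmin in
lemma card_offdiag : offdiag.card = 12 := by decide

omit hpos hmin in
lemma mem_Ucells {w : ℤ} {c : Fin 4 × Fin 4} :
    c ∈ Ucells n w ↔ c.1 ≠ c.2 ∧ w + n c.1 - n c.2 ∈ NS n := by
  classical
  simp [Ucells, mem_offdiag, and_comm]

omit hpos hmin in
lemma mem_scells {w : ℤ} {c : Fin 4 × Fin 4} :
    c ∈ scells n w ↔ c.1 ≠ c.2 ∧ Urow n w c.1 = {c.2} := by
  classical
  simp [scells, mem_offdiag]

omit hmin in
lemma Urow_nonempty {w : ℤ} (hw : w ∈ PF n) (hwpos : 0 < w) (i : Fin 4) :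
    (Urow n w i).Nonempty := by
  have h1 : w + (n i : ℤ) ≠ 0 := by have := hpos i; omega
  obtain ⟨k, hk⟩ := ns_decomp (hw.2 i) h1
  refine ⟨k, mem_Urow.2 ⟨?_, hk⟩⟩
  intro h
  rw [h] at hk
  exact hw.1 (by simpa using hk)

omit hpos hmin in
lemma pure_of_singleton {w : ℤ} (hwS : w ∉ NS n) {i j : Fin 4}
    (hrow : Urow n w i = {j}) : ∃ c : ℕ, 1 ≤ c ∧ w + n i = (c : ℤ) * n j := by
  have hj : j ∈ Urow n w i := by rw [hrow]; exact Finset.mem_singleton_self j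
  rw [mem_Urow] at hj
  obtain ⟨hji, a, ha⟩ := hj
  have hai : a i = 0 := by
    by_contra h
    apply hwS
    have h1 := ns_sub_gen (n := n) (a := a) (k := i) (Nat.one_le_iff_ne_zero.2 h)
    rw [← ha] at h1
    have h2 := ns_add h1 (ns_gen (n := n) j)
    convert h2 using 1; ring
  have hak : ∀ k, k ≠ i → k ≠ j → a k = 0 := by
    intro k hki hkj
    by_contra h
    have h1 := ns_sub_gen (n := n) (a := a) (k := k) (Nat.one_le_iff_ne_zero.2 h)
    rw [← ha] at h1
    have h2 := ns_add h1 (ns_gen (n := n) j)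
    have h3 : w + n i - n k ∈ NS n := by convert h2 using 1; ring
    have h4 : k ∈ Urow n w i := mem_Urow.2 ⟨hki, h3⟩
    rw [hrow, Finset.mem_singleton] at h4
    exact hkj h4
  have hsum : (∑ l, (a l : ℤ) * n l) = (a j : ℤ) * n j := by
    rw [Finset.sum_eq_single j]
    · intro l _ hlj
      rcases eq_or_ne l i with rfl | hli
      · simp [hai]
      · simp [hak l hli hlj]
    · intro h; exact absurd (Finset.mem_univ j) h
  refine ⟨a j + 1, by omega, ?_⟩
  rw [hsum] at ha
  push_cast
  linarith

omit hpos hmin in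
lemma fiber_Ucells {w : ℤ} (i : Fin 4) :
    ((Ucells n w).filter (fun c => c.1 = i)).card = (Urow n w i).card := by
  classical
  apply Finset.card_bij (fun c _ => c.2)
  · intro c hc
    simp only [Finset.mem_filter] at hc
    obtain ⟨hc1, hc2⟩ := hc
    rw [mem_Ucells] at hc1
    rw [mem_Urow]
    subst hc2
    exact ⟨Ne.symm hc1.1, hc1.2⟩
  · intro c hc c' hc' h
    simp only [Finset.mem_filter] at hc hc'
    exact Prod.ext (hc.2.trans hc'.2.symm) h
  · intro j hj
    rw [mem_Urow] at hj
    refine ⟨(i, j), ?_, rfl⟩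
    simp only [Finset.mem_filter]
    exact ⟨mem_Ucells.2 ⟨Ne.symm hj.1, hj.2⟩, trivial⟩

omit hmin in
lemma row_count {w : ℤ} (hw : w ∈ PF n) (hwpos : 0 < w) :
    8 ≤ (scells n w).card + (Ucells n w).card := by
  classical
  have h1 : (Ucells n w).card = ∑ i, ((Ucells n w).filter (fun c => c.1 = i)).card :=
    Finset.card_eq_sum_card_fiberwise (fun c _ => Finset.mem_univ c.1)
  have h2 : (scells n w).card = ∑ i, ((scells n w).filter (fun c => c.1 = i)).card :=
    Finset.card_eq_sum_card_fiberwise (fun c _ => Finset.mem_univ c.1)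
  rw [h1, h2, ← Finset.sum_add_distrib]
  have h3 : ∀ i : Fin 4, 2 ≤ ((scells n w).filter (fun c => c.1 = i)).card
      + ((Ucells n w).filter (fun c => c.1 = i)).card := by
    intro i
    rw [fiber_Ucells]
    rcases eq_or_ne (Urow n w i).card 1 with h | h
    · obtain ⟨j, hj⟩ := Finset.card_eq_one.1 h
      have hji : j ≠ i := by
        have : j ∈ Urow n w i := by rw [hj]; exact Finset.mem_singleton_self j
        exact (mem_Urow.1 this).1
      have : (i, j) ∈ (scells n w).filter (fun c => c.1 = i) := by
        simp only [Finset.mem_filter]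
        exact ⟨mem_scells.2 ⟨Ne.symm hji, hj⟩, trivial⟩
      have hc := Finset.card_pos.2 ⟨_, this⟩
      omega
    · have hne := Urow_nonempty hpos hw hwpos i
      have := Finset.card_pos.2 hne
      omega
  calc (8 : ℕ) = ∑ _i : Fin 4, 2 := by simp
  _ ≤ _ := Finset.sum_le_sum (fun i _ => h3 i)

omit hmin in
lemma scells_disjoint {u v : ℤ} (hu : u ∈ PF n) (hv : v ∈ PF n) (huv : u ≠ v) :
    Disjoint (scells n u) (scells n v) := by
  classical
  rw [Finset.disjoint_left]
  intro c hcu hcv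
  rw [mem_scells] at hcu hcv
  obtain ⟨a, ha1, ha⟩ := pure_of_singleton hu.1 hcu.2
  obtain ⟨b, hb1, hb⟩ := pure_of_singleton hv.1 hcv.2
  have hnj : (0 : ℤ) < n c.2 := by exact_mod_cast hpos c.2
  rcases lt_trichotomy a b with h | h | h
  · apply hv.1
    have h1 : v = u + ((b - a : ℕ) : ℤ) * n c.2 := by
      push_cast [Nat.cast_sub h.le]
      linarith
    rw [h1]
    apply pf_add hu (ns_mul _ _)
    have : (1 : ℤ) ≤ ((b - a : ℕ) : ℤ) := by exact_mod_cast Nat.one_le_iff_ne_zero.2 (by omega)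
    positivity
  · apply huv
    have : ((a : ℤ)) * n c.2 = (b : ℤ) * n c.2 := by rw [h]
    linarith
  · apply hu.1
    have h1 : u = v + ((a - b : ℕ) : ℤ) * n c.2 := by
      push_cast [Nat.cast_sub h.le]
      linarith
    rw [h1]
    apply pf_add hv (ns_mul _ _)
    have : (1 : ℤ) ≤ ((a - b : ℕ) : ℤ) := by exact_mod_cast Nat.one_le_iff_ne_zero.2 (by omega)
    positivity

include hF in
omit hmin in
lemma orbit_bound_full {w : ℤ} (hw : w ∈ PF n) (hw' : F - w ∈ PF n)
    (hwpos : 0 < w) (hw'pos : 0 < F - w)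
    (D : Finset (Fin 4 × Fin 4)) (hD : D ⊆ offdiag)
    (hdead : ∀ c ∈ D, w + n c.1 - n c.2 ∉ NS n ∧ (F - w) + n c.2 - n c.1 ∉ NS n) :
    4 + D.card ≤ (scells n w).card + (scells n (F - w)).card := by
  classical
  set A := Ucells n w with hA
  set B := (Ucells n (F - w)).image Prod.swap with hB
  have hmemB : ∀ c : Fin 4 × Fin 4, c ∈ B ↔ (c.2, c.1) ∈ Ucells n (F - w) := by
    intro c
    rw [hB, Finset.mem_image]
    constructor
    · rintro ⟨d, hd, rfl⟩; simpa using hd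
    · intro h; exact ⟨(c.2, c.1), h, rfl⟩
  have hAB : Disjoint A B := by
    rw [Finset.disjoint_left]
    intro c hcA hcB
    rw [hmemB] at hcB
    rw [hA, mem_Ucells] at hcA
    rw [mem_Ucells] at hcB
    apply hF.1
    have := ns_add hcA.2 hcB.2
    convert this using 1; ring
  have hAD : Disjoint A D := by
    rw [Finset.disjoint_left]
    intro c hcA hcD
    rw [hA, mem_Ucells] at hcA
    exact (hdead c hcD).1 hcA.2
  have hBD : Disjoint B D := by
    rw [Finset.disjoint_left]
    intro c hcB hcD
    rw [hmemB, mem_Ucells] at hcB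
    exact (hdead c hcD).2 hcB.2
  have hsub : A ∪ B ∪ D ⊆ offdiag := by
    intro c hc
    rcases Finset.mem_union.1 hc with hc | hc
    · rcases Finset.mem_union.1 hc with hc | hc
      · rw [hA, mem_Ucells] at hc; exact mem_offdiag.2 hc.1
      · rw [hmemB, mem_Ucells] at hc; exact mem_offdiag.2 (Ne.symm hc.1)
    · exact hD hc
  have hcard : A.card + B.card + D.card ≤ 12 := by
    have h1 : (A ∪ B ∪ D).card = A.card + B.card + D.card := by
      rw [Finset.card_union_of_disjoint, Finset.card_union_of_disjoint hAB]
      rw [Finset.disjoint_union_left]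
      exact ⟨hAD, hBD⟩
    rw [← h1, ← card_offdiag]
    exact Finset.card_le_card hsub
  have hBcard : B.card = (Ucells n (F - w)).card :=
    Finset.card_image_of_injective _ Prod.swap_injective
  have h8 := row_count hpos hw hwpos
  have h8' := row_count hpos hw' hw'pos
  rw [← hA] at h8
  omega

include hF in
omit hmin in
lemma orbit_bound_fixed {z : ℤ} (hz : z ∈ PF n) (hzpos : 0 < z) (heq : F - z = z)
    (D : Finset (Fin 4 × Fin 4)) (hD : D ⊆ offdiag)
    (hdead : ∀ c ∈ D, z + n c.1 - n c.2 ∉ NS n ∧ z + n c.2 - n c.1 ∉ NS n)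
    (htf : ∀ c ∈ D, (c.2, c.1) ∉ D) :
    2 + D.card ≤ (scells n z).card := by
  classical
  set A := Ucells n z with hA
  set A' := (Ucells n z).image Prod.swap with hA'
  set D' := D.image Prod.swap with hD'
  have hmemA' : ∀ c : Fin 4 × Fin 4, c ∈ A' ↔ (c.2, c.1) ∈ Ucells n z := by
    intro c
    rw [hA', Finset.mem_image]
    constructor
    · rintro ⟨d, hd, rfl⟩; simpa using hd
    · intro h; exact ⟨(c.2, c.1), h, rfl⟩
  have hmemD' : ∀ c : Fin 4 × Fin 4, c ∈ D' ↔ (c.2, c.1) ∈ D := by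
    intro c
    rw [hD', Finset.mem_image]
    constructor
    · rintro ⟨d, hd, rfl⟩; simpa using hd
    · intro h; exact ⟨(c.2, c.1), h, rfl⟩
  have hAA' : Disjoint A A' := by
    rw [Finset.disjoint_left]
    intro c hcA hcA'
    rw [hmemA'] at hcA'
    rw [hA, mem_Ucells] at hcA
    rw [mem_Ucells] at hcA'
    apply hF.1
    have := ns_add hcA.2 hcA'.2
    have h2 : F = (z + n c.1 - n c.2) + (z + n c.2 - n c.1) := by
      have : F = z + z := by omega
      rw [this]; ring
    rw [← h2] at this
    exact this
  have hAD : Disjoint A D := by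
    rw [Finset.disjoint_left]
    intro c hcA hcD
    rw [hA, mem_Ucells] at hcA
    exact (hdead c hcD).1 hcA.2
  have hAD' : Disjoint A D' := by
    rw [Finset.disjoint_left]
    intro c hcA hcD'
    rw [hmemD'] at hcD'
    rw [hA, mem_Ucells] at hcA
    exact (hdead _ hcD').2 hcA.2
  have hA'D : Disjoint A' D := by
    rw [Finset.disjoint_left]
    intro c hcA' hcD
    rw [hmemA', mem_Ucells] at hcA'
    exact (hdead c hcD).2 hcA'.2
  have hA'D' : Disjoint A' D' := by
    rw [hA', hD']
    rw [Finset.disjoint_image Prod.swap_injective]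
    exact hAD
  have hDD' : Disjoint D D' := by
    rw [Finset.disjoint_left]
    intro c hcD hcD'
    rw [hmemD'] at hcD'
    exact htf _ hcD' (by simpa using hcD)
  have hsub : A ∪ A' ∪ D ∪ D' ⊆ offdiag := by
    intro c hc
    rcases Finset.mem_union.1 hc with hc | hc
    · rcases Finset.mem_union.1 hc with hc | hc
      · rcases Finset.mem_union.1 hc with hc | hc
        · rw [hA, mem_Ucells] at hc; exact mem_offdiag.2 hc.1
        · rw [hmemA', mem_Ucells] at hc; exact mem_offdiag.2 (Ne.symm hc.1)
      · exact hD hc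
    · rw [hmemD'] at hc
      exact mem_offdiag.2 (Ne.symm (mem_offdiag.1 (hD hc)))
  have hcard : A.card + A'.card + D.card + D'.card ≤ 12 := by
    have h1 : (A ∪ A' ∪ D ∪ D').card = A.card + A'.card + D.card + D'.card := by
      rw [Finset.card_union_of_disjoint, Finset.card_union_of_disjoint,
        Finset.card_union_of_disjoint hAA']
      · rw [Finset.disjoint_union_left]; exact ⟨hAD, hA'D⟩
      · rw [Finset.disjoint_union_left, Finset.disjoint_union_left]
        exact ⟨⟨hAD', hA'D'⟩, hDD'⟩
    rw [← h1, ← card_offdiag]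
    exact Finset.card_le_card hsub
  have hcA' : A'.card = A.card := Finset.card_image_of_injective _ Prod.swap_injective
  have hcD' : D'.card = D.card := Finset.card_image_of_injective _ Prod.swap_injective
  have h8 := row_count hpos hz hzpos
  rw [← hA] at h8
  omega

omit hmin in
lemma col_common {u v : ℤ} (hu : u ∈ PF n) (hv : v ∈ PF n)
    {r s j : Fin 4} (hrs : r ≠ s)
    (hru : (r, j) ∈ scells n u) (hsv : (s, j) ∈ scells n v) :
    u + n r = v + n s := by
  rw [mem_scells] at hru hsv
  obtain ⟨a, ha1, ha⟩ := pure_of_singleton hu.1 hru.2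
  obtain ⟨b, hb1, hb⟩ := pure_of_singleton hv.1 hsv.2
  have hnj : (0 : ℤ) < n j := by exact_mod_cast hpos j
  rcases lt_trichotomy a b with h | h | h
  · exfalso
    have h1 : v + n s - n r = u + ((b - a : ℕ) : ℤ) * n j := by
      push_cast [Nat.cast_sub h.le]
      linarith
    have h2 : v + n s - n r ∈ NS n := by
      rw [h1]
      apply pf_add hu (ns_mul _ _)
      have : (1 : ℤ) ≤ ((b - a : ℕ) : ℤ) := by exact_mod_cast Nat.one_le_iff_ne_zero.2 (by omega)
      positivity
    have h3 : r ∈ Urow n v s := mem_Urow.2 ⟨hrs, h2⟩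
    rw [hsv.2, Finset.mem_singleton] at h3
    exact hru.1 (by rw [h3])
  · rw [ha, hb, h]
  · exfalso
    have h1 : u + n r - n s = v + ((a - b : ℕ) : ℤ) * n j := by
      push_cast [Nat.cast_sub h.le]
      linarith
    have h2 : u + n r - n s ∈ NS n := by
      rw [h1]
      apply pf_add hv (ns_mul _ _)
      have : (1 : ℤ) ≤ ((a - b : ℕ) : ℤ) := by exact_mod_cast Nat.one_le_iff_ne_zero.2 (by omega)
      positivity
    have h3 : s ∈ Urow n u r := mem_Urow.2 ⟨Ne.symm hrs, h2⟩
    rw [hru.2, Finset.mem_singleton] at h3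
    exact hsv.1 (by rw [h3])

lemma col_inj {u : ℤ} (hu : u ∈ PF n) {r s j : Fin 4} (hrs : r ≠ s)
    (hru : (r, j) ∈ scells n u) (hsu : (s, j) ∈ scells n u) : False := by
  rw [mem_scells] at hru hsu
  obtain ⟨a, ha1, ha⟩ := pure_of_singleton hu.1 hru.2
  obtain ⟨b, hb1, hb⟩ := pure_of_singleton hu.1 hsu.2
  rcases le_or_gt a b with h | h
  · apply gen_sub_notMem hpos hmin hrs
    have h1 : (n s : ℤ) - n r = ((b - a : ℕ) : ℤ) * n j := by
      push_cast [Nat.cast_sub h]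
      linarith
    rw [h1]
    exact ns_mul _ _
  · apply gen_sub_notMem hpos hmin (Ne.symm hrs)
    have h1 : (n r : ℤ) - n s = ((a - b : ℕ) : ℤ) * n j := by
      push_cast [Nat.cast_sub h.le]
      linarith
    rw [h1]
    exact ns_mul _ _

omit hpos hmin in
include hF in
lemma dead_cells {u v : ℤ} (hv : v ∈ PF n) (hvF : v ≠ F) {r s : Fin 4}
    (hM : u + n r = v + n s) :
    u + n r - n s ∉ NS n ∧ (F - u) + n s - n r ∉ NS n :=
  ⟨by rw [show u + (n r : ℤ) - n s = v from by linarith]; exact hv.1,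
   by rw [show (F - u) + (n s : ℤ) - n r = F - v from by linarith];
      exact F_sub_notMem hF hv hvF⟩

/-- Sum of slot counts over the orbit of `u`. -/
noncomputable def SOrb (n : Fin 4 → ℕ) (F : ℤ) (u : ℤ) : ℕ :=
  ∑ w ∈ ({u, F - u} : Finset ℤ), (scells n w).card

omit hpos hmin in
lemma SOrb_full {u : ℤ} (hne : u ≠ F - u) :
    SOrb n F u = (scells n u).card + (scells n (F - u)).card := by
  rw [SOrb, Finset.sum_pair hne]

omit hpos hmin in
lemma SOrb_fixed {u : ℤ} (heq : F - u = u) : SOrb n F u = (scells n u).card := by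
  rw [SOrb, heq]
  simp

include hF in
omit hmin in
lemma SOrb_base {u : ℤ} (hu : u ∈ PF n) (huF : u ≠ F) (hupos : 0 < u)
    (hu' : F - u ∈ PF n) (hu'F : F - u ≠ F) (hu'pos : 0 < F - u) :
    2 ≤ SOrb n F u ∧ (u ≠ F - u → 4 ≤ SOrb n F u) := by
  rcases eq_or_ne u (F - u) with heq | hne
  · constructor
    · rw [SOrb_fixed heq.symm]
      have h := orbit_bound_fixed hpos hF hu hupos heq.symm ∅ (by simp) (by simp) (by simp)
      simpa using h
    · intro h; exact absurd heq h
  · have h := orbit_bound_full hpos hF hu hu' hupos hu'pos ∅ (by simp) (by simp)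
    rw [SOrb_full hne]
    simp only [Finset.card_empty, add_zero] at h
    omega

include hF in
lemma SOrb_one {u vs vt : ℤ} (hu : u ∈ PF n) (huF : u ≠ F) (hupos : 0 < u)
    (hu' : F - u ∈ PF n) (hu'F : F - u ≠ F) (hu'pos : 0 < F - u)
    (hvs : vs ∈ PF n) (hvsF : vs ≠ F) (hvt : vt ∈ PF n) (hvtF : vt ≠ F)
    {r s t : Fin 4} (hrs : r ≠ s) (hrt : r ≠ t) (hst : s ≠ t)
    (hMs : u + n r = vs + n s) (hMt : u + n r = vt + n t) :
    4 ≤ SOrb n F u ∧ (u ≠ F - u → 6 ≤ SOrb n F u) := by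
  classical
  set D : Finset (Fin 4 × Fin 4) := {(r, s), (r, t)} with hD
  have hDcard : D.card = 2 := by
    rw [hD, Finset.card_insert_of_notMem (by simp [hst]), Finset.card_singleton]
  have hDsub : D ⊆ offdiag := by
    intro c hc
    rw [hD] at hc
    rcases Finset.mem_insert.1 hc with rfl | hc
    · exact mem_offdiag.2 hrs
    · rw [Finset.mem_singleton] at hc; subst hc; exact mem_offdiag.2 hrt
  have hdead : ∀ c ∈ D, u + n c.1 - n c.2 ∉ NS n ∧ (F - u) + n c.2 - n c.1 ∉ NS n := by
    intro c hc
    rw [hD] at hc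
    rcases Finset.mem_insert.1 hc with rfl | hc
    · exact dead_cells hF hvs hvsF hMs
    · rw [Finset.mem_singleton] at hc; subst hc
      exact dead_cells hF hvt hvtF hMt
  rcases eq_or_ne u (F - u) with heq | hne
  · have hmemD : ∀ x y : Fin 4, ((x, y) : Fin 4 × Fin 4) ∈
        ({(r, s), (r, t)} : Finset (Fin 4 × Fin 4)) → x = r ∧ (y = s ∨ y = t) := by
      intro x y hxy
      rcases Finset.mem_insert.1 hxy with h | h
      · rw [Prod.ext_iff] at h; exact ⟨h.1, Or.inl h.2⟩
      · rw [Finset.mem_singleton, Prod.ext_iff] at h; exact ⟨h.1, Or.inr h.2⟩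
    have htf : ∀ c ∈ D, (c.2, c.1) ∉ D := by
      intro c hc hc'
      rw [hD] at hc hc'
      obtain ⟨hc1, hc2⟩ := hmemD c.1 c.2 (by simpa using hc)
      obtain ⟨hc1', hc2'⟩ := hmemD c.2 c.1 (by simpa using hc')
      rw [hc1] at hc2'
      rcases hc2' with h | h
      · exact hrs h
      · exact hrt h
    have hdead' : ∀ c ∈ D, u + n c.1 - n c.2 ∉ NS n ∧ u + n c.2 - n c.1 ∉ NS n := by
      intro c hc
      have h := hdead c hc
      rwa [← heq] at h
    have h := orbit_bound_fixed hpos hF hu hupos heq.symm D hDsub hdead' htf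
    rw [SOrb_fixed heq.symm]
    constructor
    · omega
    · intro h'; exact absurd heq h'
  · have h := orbit_bound_full hpos hF hu hu' hupos hu'pos D hDsub hdead
    rw [SOrb_full hne]
    omega

include hF in
omit hmin in
lemma SOrb_two {u vt : ℤ} (hu : u ∈ PF n) (huF : u ≠ F) (hupos : 0 < u)
    (hu' : F - u ∈ PF n) (hu'F : F - u ≠ F) (hu'pos : 0 < F - u)
    (hvt : vt ∈ PF n) (hvtF : vt ≠ F)
    {r s t : Fin 4} (hrs : r ≠ s) (hrt : r ≠ t) (hst : s ≠ t)
    (hMs : u + n r = (F - u) + n s) (hMt : u + n r = vt + n t)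
    (hne : u ≠ F - u) :
    7 ≤ SOrb n F u := by
  classical
  set D : Finset (Fin 4 × Fin 4) := {(r, s), (r, t), (t, s)} with hD
  have h1 : ((r, s) : Fin 4 × Fin 4) ≠ (r, t) := by simp [Prod.ext_iff, hst]
  have h2 : ((r, s) : Fin 4 × Fin 4) ≠ (t, s) := by simp [Prod.ext_iff, hrt]
  have h3 : ((r, t) : Fin 4 × Fin 4) ≠ (t, s) := by simp [Prod.ext_iff]; intro h; exact absurd h hrt
  have hDcard : D.card = 3 := by
    rw [hD]
    rw [Finset.card_insert_of_notMem (by simp [h1, h2]),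
      Finset.card_insert_of_notMem (by simp [h3]), Finset.card_singleton]
  have hDsub : D ⊆ offdiag := by
    intro c hc
    rw [hD] at hc
    rcases Finset.mem_insert.1 hc with rfl | hc
    · exact mem_offdiag.2 hrs
    · rcases Finset.mem_insert.1 hc with rfl | hc
      · exact mem_offdiag.2 hrt
      · rw [Finset.mem_singleton] at hc; subst hc
        exact mem_offdiag.2 (Ne.symm hst)
  have hMst : (F - u) + (n s : ℤ) = vt + n t := by linarith
  have hdead : ∀ c ∈ D, u + n c.1 - n c.2 ∉ NS n ∧ (F - u) + n c.2 - n c.1 ∉ NS n := by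
    intro c hc
    rw [hD] at hc
    rcases Finset.mem_insert.1 hc with rfl | hc
    · exact dead_cells hF hu' hu'F hMs
    · rcases Finset.mem_insert.1 hc with rfl | hc
      · exact dead_cells hF hvt hvtF hMt
      · rw [Finset.mem_singleton] at hc; subst hc
        constructor
        · rw [show u + (n t : ℤ) - n s = F - vt from by linarith]
          exact F_sub_notMem hF hvt hvtF
        · rw [show (F - u) + (n s : ℤ) - n t = vt from by linarith]
          exact hvt.1
  have h := orbit_bound_full hpos hF hu hu' hupos hu'pos D hDsub hdead
  rw [SOrb_full hne]
  omega

omit hpos hmin hF hAS in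
lemma oset_eq {u w : ℤ} (hu : u ∈ ({w, F - w} : Finset ℤ)) :
    ({u, F - u} : Finset ℤ) = {w, F - w} := by
  rcases Finset.mem_insert.1 hu with rfl | hu
  · rfl
  · rw [Finset.mem_singleton] at hu
    subst hu
    rw [show F - (F - w) = w from by ring, Finset.pair_comm]

omit hpos hmin hF hAS in
lemma oset_ne {u v : ℤ} (h1 : v ≠ u) (h2 : v ≠ F - u) :
    ({u, F - u} : Finset ℤ) ≠ {v, F - v} := by
  intro h
  have : v ∈ ({u, F - u} : Finset ℤ) := by
    rw [h]; exact Finset.mem_insert_self _ _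
  rcases Finset.mem_insert.1 this with h' | h'
  · exact h1 h'
  · exact h2 (Finset.mem_singleton.1 h')

omit hpos hmin hF hAS in
lemma oset_disj {u v : ℤ} (h1 : v ≠ u) (h2 : v ≠ F - u) :
    Disjoint ({u, F - u} : Finset ℤ) ({v, F - v} : Finset ℤ) := by
  rw [Finset.disjoint_left]
  intro x hx hx'
  rcases Finset.mem_insert.1 hx with rfl | hx <;>
    rcases Finset.mem_insert.1 hx' with h | h
  · exact h1 h.symm
  · rw [Finset.mem_singleton] at h; apply h2; omega
  · rw [Finset.mem_singleton] at hx
    subst hx; apply h2; omega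
  · rw [Finset.mem_singleton] at hx h
    subst hx
    apply h1
    omega

omit hpos hmin hF hAS in
lemma SOrb_congr {u w : ℤ} (h : ({u, F - u} : Finset ℤ) = {w, F - w}) :
    SOrb n F u = SOrb n F w := by
  rw [SOrb, SOrb, h]

omit hpos hmin hF hAS in
lemma scells_sub {u : ℤ} : scells n u ⊆ offdiag := Finset.filter_subset _ _

include hF hAS in
theorem main : (PF n).ncard ≤ 5 := by
  classical
  by_contra hcon
  push_neg at hcon
  have hFpos := F_pos hpos hmin hF
  have hsub : PF n ⊆ Set.Icc (1 : ℤ) F := by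
    intro w hw
    rcases eq_or_ne w F with rfl | hne
    · exact ⟨by omega, le_refl _⟩
    · have := pf_pos hpos hmin hF hw hne
      exact ⟨by omega, by omega⟩
  have hfin : (PF n).Finite := (Set.finite_Icc 1 F).subset hsub
  have hgood : ∀ w, w ∈ PF n → w ≠ F →
      (0 < w ∧ (F - w ∈ PF n ∧ F - w ≠ F) ∧ 0 < F - w) := by
    intro w hw hwF
    have h1 := pf_pos hpos hmin hF hw hwF
    have h2 := pair_pf hpos hmin hF hAS hw hwF
    exact ⟨h1.1, h2, by omega⟩
  -- get five distinct elements of PF' and select orbit representatives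
  set P : Finset ℤ := hfin.toFinset with hPdef
  have hPmem : ∀ w, w ∈ P ↔ w ∈ PF n := fun w => hfin.mem_toFinset
  have hPcard : 6 ≤ P.card := by
    have h : (PF n).ncard = P.card := by
      rw [hPdef]; exact Set.ncard_eq_toFinset_card _ hfin
    omega
  set P' : Finset ℤ := P.erase F with hP'def
  have hP'card : 5 ≤ P'.card := by
    have hFP : F ∈ P := (hPmem F).2 (pf_F hpos hmin hF)
    have h : P'.card = P.card - 1 := by
      rw [hP'def]; exact Finset.card_erase_of_mem hFP
    omega
  have hP'mem : ∀ w ∈ P', w ∈ PF n ∧ w ≠ F := by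
    intro w hw
    rw [hP'def, Finset.mem_erase] at hw
    exact ⟨(hPmem w).1 hw.2, hw.1⟩
  -- select w₁
  obtain ⟨w₁, hw₁P⟩ := Finset.card_pos.1 (show 0 < P'.card by omega)
  set R₁ : Finset ℤ := (P'.erase w₁).erase (F - w₁) with hR₁def
  have hR₁card : 3 ≤ R₁.card := by
    have h1 := Finset.pred_card_le_card_erase (s := P'.erase w₁) (a := F - w₁)
    have h2 := Finset.pred_card_le_card_erase (s := P') (a := w₁)
    rw [hR₁def]
    omega
  obtain ⟨w₂, hw₂R⟩ := Finset.card_pos.1 (show 0 < R₁.card by omega)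
  set R₂ : Finset ℤ := (R₁.erase w₂).erase (F - w₂) with hR₂def
  have hR₂card : 1 ≤ R₂.card := by
    have h1 := Finset.pred_card_le_card_erase (s := R₁.erase w₂) (a := F - w₂)
    have h2 := Finset.pred_card_le_card_erase (s := R₁) (a := w₂)
    rw [hR₂def]
    omega
  obtain ⟨w₃, hw₃R⟩ := Finset.card_pos.1 (show 0 < R₂.card by omega)
  -- basic facts about w₁ w₂ w₃
  have hw₂P : w₂ ∈ P' := Finset.mem_of_mem_erase (Finset.mem_of_mem_erase hw₂R)
  have hw₃R₁ : w₃ ∈ R₁ := Finset.mem_of_mem_erase (Finset.mem_of_mem_erase hw₃R)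
  have hw₃P : w₃ ∈ P' := Finset.mem_of_mem_erase (Finset.mem_of_mem_erase hw₃R₁)
  have h21 : w₂ ≠ w₁ := by
    have := Finset.mem_of_mem_erase hw₂R
    rw [hR₁def] at hw₂R
    exact Finset.ne_of_mem_erase (Finset.mem_of_mem_erase hw₂R)
  have h21' : w₂ ≠ F - w₁ := by
    rw [hR₁def] at hw₂R
    exact Finset.ne_of_mem_erase hw₂R
  have h31 : w₃ ≠ w₁ := by
    have h := hw₃R₁
    rw [hR₁def] at h
    exact Finset.ne_of_mem_erase (Finset.mem_of_mem_erase h)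
  have h31' : w₃ ≠ F - w₁ := by
    have h := hw₃R₁
    rw [hR₁def] at h
    exact Finset.ne_of_mem_erase h
  have h32 : w₃ ≠ w₂ := by
    rw [hR₂def] at hw₃R
    exact Finset.ne_of_mem_erase (Finset.mem_of_mem_erase hw₃R)
  have h32' : w₃ ≠ F - w₂ := by
    rw [hR₂def] at hw₃R
    exact Finset.ne_of_mem_erase hw₃R
  obtain ⟨hw₁PF, hw₁F⟩ := hP'mem w₁ hw₁P
  obtain ⟨hw₂PF, hw₂F⟩ := hP'mem w₂ hw₂P
  obtain ⟨hw₃PF, hw₃F⟩ := hP'mem w₃ hw₃P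
  -- orbit sets
  set E : Finset ℤ := (({w₁, F - w₁} : Finset ℤ) ∪ {w₂, F - w₂}) ∪ {w₃, F - w₃} with hEdef
  have hEmem : ∀ u ∈ E, u ∈ PF n ∧ u ≠ F := by
    intro u hu
    rw [hEdef] at hu
    have key : ∀ w, w ∈ PF n → w ≠ F → u ∈ ({w, F - w} : Finset ℤ) → u ∈ PF n ∧ u ≠ F := by
      intro w hw hwF huw
      rcases Finset.mem_insert.1 huw with rfl | huw
      · exact ⟨hw, hwF⟩
      · rw [Finset.mem_singleton] at huw
        subst huw
        exact (hgood w hw hwF).2.1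
    rcases Finset.mem_union.1 hu with hu | hu
    · rcases Finset.mem_union.1 hu with hu | hu
      · exact key w₁ hw₁PF hw₁F hu
      · exact key w₂ hw₂PF hw₂F hu
    · exact key w₃ hw₃PF hw₃F hu
  -- the global slot-cell set
  set V : Finset (Fin 4 × Fin 4) := E.biUnion (scells n) with hVdef
  have hV12 : V.card ≤ 12 := by
    rw [← card_offdiag]
    apply Finset.card_le_card
    rw [hVdef]
    intro c hc
    obtain ⟨u, -, hcu⟩ := Finset.mem_biUnion.1 hc
    exact scells_sub hcu
  have hVsum : V.card = ∑ u ∈ E, (scells n u).card := by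
    rw [hVdef]
    apply Finset.card_biUnion
    intro u hu v hv huv
    exact scells_disjoint hpos (hEmem u hu).1 (hEmem v hv).1 huv
  have hdisj12 : Disjoint ({w₁, F - w₁} : Finset ℤ) {w₂, F - w₂} := oset_disj h21 h21'
  have hdisj13 : Disjoint ({w₁, F - w₁} : Finset ℤ) {w₃, F - w₃} := oset_disj h31 h31'
  have hdisj23 : Disjoint ({w₂, F - w₂} : Finset ℤ) {w₃, F - w₃} := oset_disj h32 h32'
  have hEsum : ∑ u ∈ E, (scells n u).card
      = SOrb n F w₁ + SOrb n F w₂ + SOrb n F w₃ := by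
    rw [hEdef, Finset.sum_union (by rw [Finset.disjoint_union_left]; exact ⟨hdisj13, hdisj23⟩),
      Finset.sum_union hdisj12]
    rfl
  -- base bounds
  obtain ⟨hw₁pos, ⟨hw₁'PF, hw₁'F⟩, hw₁'pos⟩ := hgood w₁ hw₁PF hw₁F
  obtain ⟨hw₂pos, ⟨hw₂'PF, hw₂'F⟩, hw₂'pos⟩ := hgood w₂ hw₂PF hw₂F
  obtain ⟨hw₃pos, ⟨hw₃'PF, hw₃'F⟩, hw₃'pos⟩ := hgood w₃ hw₃PF hw₃F
  have b1 := SOrb_base hpos hF hw₁PF hw₁F hw₁pos hw₁'PF hw₁'F hw₁'pos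
  have b2 := SOrb_base hpos hF hw₂PF hw₂F hw₂pos hw₂'PF hw₂'F hw₂'pos
  have b3 := SOrb_base hpos hF hw₃PF hw₃F hw₃pos hw₃'PF hw₃'F hw₃'pos
  have h10 : 10 ≤ SOrb n F w₁ + SOrb n F w₂ + SOrb n F w₃ := by
    by_cases f1 : w₁ = F - w₁
    · have f2 : w₂ ≠ F - w₂ := by intro h; apply h21; omega
      have f3 : w₃ ≠ F - w₃ := by intro h; apply h31; omega
      have := b2.2 f2
      have := b3.2 f3
      omega
    · by_cases f2 : w₂ = F - w₂
      · have f3 : w₃ ≠ F - w₃ := by intro h; apply h32; omega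
        have := b1.2 f1
        have := b3.2 f3
        omega
      · have := b1.2 f1
        have := b2.2 f2
        omega
  -- column pigeonhole
  have hcolsum : ∑ j, (V.filter (fun c => c.2 = j)).card = V.card :=
    (Finset.card_eq_sum_card_fiberwise (fun c _ => Finset.mem_univ c.2)).symm
  have hcol3 : ∃ j, 3 ≤ (V.filter (fun c => c.2 = j)).card := by
    by_contra hno
    push_neg at hno
    have h8 : ∑ j, (V.filter (fun c => c.2 = j)).card ≤ 8 := by
      calc ∑ j, (V.filter (fun c => c.2 = j)).card ≤ ∑ _j : Fin 4, 2 :=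
        Finset.sum_le_sum (fun j _ => by have := hno j; omega)
      _ = 8 := by simp
    omega
  obtain ⟨j, hj3⟩ := hcol3
  -- the column is full
  have hcolsub : V.filter (fun c => c.2 = j) ⊆ (Finset.univ.erase j).image (fun i => (i, j)) := by
    intro c hc
    rw [Finset.mem_filter] at hc
    obtain ⟨hcV, hcj⟩ := hc
    obtain ⟨u, -, hcu⟩ := Finset.mem_biUnion.1 hcV
    have hne : c.1 ≠ c.2 := mem_offdiag.1 (scells_sub hcu)
    rw [Finset.mem_image]
    refine ⟨c.1, Finset.mem_erase.2 ⟨by rw [← hcj]; exact hne, Finset.mem_univ _⟩, ?_⟩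
    rw [← hcj]
  have hcol_eq : V.filter (fun c => c.2 = j) = (Finset.univ.erase j).image (fun i => (i, j)) := by
    apply Finset.eq_of_subset_of_card_le hcolsub
    have h1 : ((Finset.univ.erase j).image (fun i => (i, j))).card = 3 := by
      rw [Finset.card_image_of_injective _ (fun x y h => (Prod.ext_iff.1 h).1),
        Finset.card_erase_of_mem (Finset.mem_univ j)]
      simp
    omega
  have hallmem : ∀ i, i ≠ j → (i, j) ∈ V := by
    intro i hij
    have : (i, j) ∈ V.filter (fun c => c.2 = j) := by
      rw [hcol_eq, Finset.mem_image]
      exact ⟨i, Finset.mem_erase.2 ⟨hij, Finset.mem_univ i⟩, rfl⟩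
    exact (Finset.mem_filter.1 this).1
  -- name the three rows
  have herase3 : (Finset.univ.erase j).card = 3 := by
    rw [Finset.card_erase_of_mem (Finset.mem_univ j)]
    simp
  obtain ⟨a, b, c, hab, hac, hbc, habc⟩ := Finset.card_eq_three.1 herase3
  have haj : a ≠ j := (Finset.mem_erase.1 (by rw [habc]; exact Finset.mem_insert_self _ _)).1
  have hbj : b ≠ j := (Finset.mem_erase.1 (by
    rw [habc]; exact Finset.mem_insert_of_mem (Finset.mem_insert_self _ _))).1
  have hcj : c ≠ j := (Finset.mem_erase.1 (by
    rw [habc]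
    exact Finset.mem_insert_of_mem (Finset.mem_insert_of_mem (Finset.mem_singleton_self _)))).1
  -- owners
  obtain ⟨ua, huaE, hua⟩ := Finset.mem_biUnion.1 (hallmem a haj)
  obtain ⟨ub, hubE, hub⟩ := Finset.mem_biUnion.1 (hallmem b hbj)
  obtain ⟨uc, hucE, huc⟩ := Finset.mem_biUnion.1 (hallmem c hcj)
  obtain ⟨huaPF, huaF⟩ := hEmem ua huaE
  obtain ⟨hubPF, hubF⟩ := hEmem ub hubE
  obtain ⟨hucPF, hucF⟩ := hEmem uc hucE
  obtain ⟨huapos, ⟨hua'PF, hua'F⟩, hua'pos⟩ := hgood ua huaPF huaF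
  obtain ⟨hubpos, ⟨hub'PF, hub'F⟩, hub'pos⟩ := hgood ub hubPF hubF
  obtain ⟨hucpos, ⟨huc'PF, huc'F⟩, huc'pos⟩ := hgood uc hucPF hucF
  -- owners distinct
  have hDab : ua ≠ ub := by
    intro h
    exact col_inj hpos hmin huaPF hab hua (by rw [h]; exact hub)
  have hDac : ua ≠ uc := by
    intro h
    exact col_inj hpos hmin huaPF hac hua (by rw [h]; exact huc)
  have hDbc : ub ≠ uc := by
    intro h
    exact col_inj hpos hmin hubPF hbc hub (by rw [h]; exact huc)
  -- common M
  have hMab : ua + (n a : ℤ) = ub + n b := col_common hpos huaPF hubPF hab hua hub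
  have hMac : ua + (n a : ℤ) = uc + n c := col_common hpos huaPF hucPF hac hua huc
  have hMbc : ub + (n b : ℤ) = uc + n c := by linarith
  -- orbit classification of owners
  have hOua : ({ua, F - ua} : Finset ℤ) = {w₁, F - w₁} ∨
      ({ua, F - ua} : Finset ℤ) = {w₂, F - w₂} ∨
      ({ua, F - ua} : Finset ℤ) = {w₃, F - w₃} := by
    rw [hEdef] at huaE
    rcases Finset.mem_union.1 huaE with h | h
    · rcases Finset.mem_union.1 h with h | h
      · exact Or.inl (oset_eq h)
      · exact Or.inr (Or.inl (oset_eq h))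
    · exact Or.inr (Or.inr (oset_eq h))
  have hOub : ({ub, F - ub} : Finset ℤ) = {w₁, F - w₁} ∨
      ({ub, F - ub} : Finset ℤ) = {w₂, F - w₂} ∨
      ({ub, F - ub} : Finset ℤ) = {w₃, F - w₃} := by
    rw [hEdef] at hubE
    rcases Finset.mem_union.1 hubE with h | h
    · rcases Finset.mem_union.1 h with h | h
      · exact Or.inl (oset_eq h)
      · exact Or.inr (Or.inl (oset_eq h))
    · exact Or.inr (Or.inr (oset_eq h))
  have hOuc : ({uc, F - uc} : Finset ℤ) = {w₁, F - w₁} ∨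
      ({uc, F - uc} : Finset ℤ) = {w₂, F - w₂} ∨
      ({uc, F - uc} : Finset ℤ) = {w₃, F - w₃} := by
    rw [hEdef] at hucE
    rcases Finset.mem_union.1 hucE with h | h
    · rcases Finset.mem_union.1 h with h | h
      · exact Or.inl (oset_eq h)
      · exact Or.inr (Or.inl (oset_eq h))
    · exact Or.inr (Or.inr (oset_eq h))
  have hTtot : SOrb n F w₁ + SOrb n F w₂ + SOrb n F w₃ ≤ 12 := by
    rw [← hEsum, ← hVsum]; exact hV12
  -- main branch analysis
  by_cases hab2 : ub = F - ua
  · -- partners ua, ub; third uc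
    have hMs : ua + (n a : ℤ) = (F - ua) + n b := by rw [← hab2]; exact hMab
    have hne : ua ≠ F - ua := fun h => hDab (h.trans hab2.symm)
    have h7 : 7 ≤ SOrb n F ua :=
      SOrb_two hpos hF huaPF huaF huapos hua'PF hua'F hua'pos hucPF hucF
        hab hac hbc hMs hMac hne
    have h4 : 4 ≤ SOrb n F uc :=
      (SOrb_one hpos hmin hF hucPF hucF hucpos huc'PF huc'F huc'pos
        huaPF huaF hubPF hubF (Ne.symm hac) (Ne.symm hbc) hab
        hMac.symm (by linarith)).1
    have hOne : ({ua, F - ua} : Finset ℤ) ≠ {uc, F - uc} :=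
      oset_ne hDac.symm (fun h => hDbc (hab2.trans h.symm) )
    rcases hOua with h1 | h1 | h1 <;> rcases hOuc with h2 | h2 | h2 <;>
      first
        | exact hOne (h1.trans h2.symm)
        | (have e1 := SOrb_congr (n := n) h1
           have e2 := SOrb_congr (n := n) h2
           omega)
  · by_cases hac2 : uc = F - ua
    · -- partners ua, uc; third ub
      have hMs : ua + (n a : ℤ) = (F - ua) + n c := by rw [← hac2]; exact hMac
      have hne : ua ≠ F - ua := fun h => hDac (h.trans hac2.symm)
      have h7 : 7 ≤ SOrb n F ua :=
        SOrb_two hpos hF huaPF huaF huapos hua'PF hua'F hua'pos hubPF hubF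
          hac hab (Ne.symm hbc) hMs hMab hne
      have h4 : 4 ≤ SOrb n F ub :=
        (SOrb_one hpos hmin hF hubPF hubF hubpos hub'PF hub'F hub'pos
          huaPF huaF hucPF hucF (Ne.symm hab) hbc hac
          hMab.symm hMbc).1
      have hOne : ({ua, F - ua} : Finset ℤ) ≠ {ub, F - ub} :=
        oset_ne hDab.symm (fun h => hab2 h)
      rcases hOua with h1 | h1 | h1 <;> rcases hOub with h2 | h2 | h2 <;>
        first
          | exact hOne (h1.trans h2.symm)
          | (have e1 := SOrb_congr (n := n) h1
             have e2 := SOrb_congr (n := n) h2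
             omega)
    · by_cases hbc2 : uc = F - ub
      · -- partners ub, uc; third ua
        have hMs : ub + (n b : ℤ) = (F - ub) + n c := by rw [← hbc2]; exact hMbc
        have hne : ub ≠ F - ub := fun h => hDbc (h.trans hbc2.symm)
        have h7 : 7 ≤ SOrb n F ub :=
          SOrb_two hpos hF hubPF hubF hubpos hub'PF hub'F hub'pos huaPF huaF
            hbc (Ne.symm hab) (Ne.symm hac) hMs hMab.symm hne
        have h4 : 4 ≤ SOrb n F ua :=
          (SOrb_one hpos hmin hF huaPF huaF huapos hua'PF hua'F hua'pos
            hubPF hubF hucPF hucF hab hac hbc hMab hMac).1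
        have hOne : ({ub, F - ub} : Finset ℤ) ≠ {ua, F - ua} :=
          oset_ne hDab (fun h => hDac (by omega))
        rcases hOub with h1 | h1 | h1 <;> rcases hOua with h2 | h2 | h2 <;>
          first
            | exact hOne (h1.trans h2.symm)
            | (have e1 := SOrb_congr (n := n) h1
               have e2 := SOrb_congr (n := n) h2
               omega)
      · -- all three owners in distinct orbits
        have Sa := SOrb_one hpos hmin hF huaPF huaF huapos hua'PF hua'F hua'pos
          hubPF hubF hucPF hucF hab hac hbc hMab hMac
        have Sb := SOrb_one hpos hmin hF hubPF hubF hubpos hub'PF hub'F hub'pos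
          huaPF huaF hucPF hucF (Ne.symm hab) hbc hac hMab.symm hMbc
        have Sc := SOrb_one hpos hmin hF hucPF hucF hucpos huc'PF huc'F huc'pos
          huaPF huaF hubPF hubF (Ne.symm hac) (Ne.symm hbc) hab hMac.symm hMbc.symm
        have h16 : 16 ≤ SOrb n F ua + SOrb n F ub + SOrb n F uc := by
          by_cases fa : ua = F - ua
          · have fb : ub ≠ F - ub := by intro h; apply hDab; omega
            have fc : uc ≠ F - uc := by intro h; apply hDac; omega
            have := Sb.2 fb
            have := Sc.2 fc
            have := Sa.1
            omega
          · by_cases fb : ub = F - ub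
            · have fc : uc ≠ F - uc := by intro h; apply hDbc; omega
              have := Sa.2 fa
              have := Sc.2 fc
              have := Sb.1
              omega
            · have := Sa.2 fa
              have := Sb.2 fb
              have := Sc.1
              omega
        have hOab : ({ua, F - ua} : Finset ℤ) ≠ {ub, F - ub} :=
          oset_ne hDab.symm (fun h => hab2 h)
        have hOac : ({ua, F - ua} : Finset ℤ) ≠ {uc, F - uc} :=
          oset_ne hDac.symm (fun h => hac2 h)
        have hObc : ({ub, F - ub} : Finset ℤ) ≠ {uc, F - uc} :=
          oset_ne hDbc.symm (fun h => hbc2 h)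
        rcases hOua with h1 | h1 | h1 <;> rcases hOub with h2 | h2 | h2 <;>
          rcases hOuc with h3 | h3 | h3 <;>
          first
            | exact hOab (h1.trans h2.symm)
            | exact hOac (h1.trans h3.symm)
            | exact hObc (h2.trans h3.symm)
            | (have e1 := SOrb_congr (n := n) h1
               have e2 := SOrb_congr (n := n) h2
               have e3 := SOrb_congr (n := n) h3
               omega)

end Stmt10

theorem stmt10 (n : Fin 4 → ℕ)
    (hpos : ∀ i, 0 < n i)
    (hgcd : Finset.univ.gcd n = 1)
    (hmin : MinGen n)
    (F : ℤ) (hF : IsFrob n F) (hAS : AlmostSym n F) :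
    (PF n).ncard ≤ 5 := by
  exact Stmt10.main hpos hmin hF hAS
end

section
/- Let S be a numerical semigroup minimally generated by three elements. Then the type of S is at most 2. -/
/-- Membership in `NS n` with integer coefficients. -/
lemma memNS_iff (n : Fin 3 → ℕ) (w : ℤ) :
    w ∈ NS n ↔ ∃ α β γ : ℤ, 0 ≤ α ∧ 0 ≤ β ∧ 0 ≤ γ ∧
      w = α * n 0 + β * n 1 + γ * n 2 := by
  constructor
  · rintro ⟨a, rfl⟩
    exact ⟨a 0, a 1, a 2, by positivity, by positivity, by positivity, by
      simp [Fin.sum_univ_three]⟩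
  · rintro ⟨α, β, γ, hα, hβ, hγ, rfl⟩
    refine ⟨![α.toNat, β.toNat, γ.toNat], ?_⟩
    simp [Fin.sum_univ_three, Int.toNat_of_nonneg, hα, hβ, hγ]

/-- Sylvester's symmetry: for coprime positive `a, b`, if `w` is not a nonnegative
combination of `a` and `b`, then `ab - a - b - w` is one. -/
lemma sylvester (a b : ℤ) (hb : 0 < b) (hab : IsCoprime a b) (w : ℤ)
    (hw : ¬ ∃ α β : ℤ, 0 ≤ α ∧ 0 ≤ β ∧ w = α * a + β * b) :
    ∃ α β : ℤ, 0 ≤ α ∧ 0 ≤ β ∧ a * b - a - b - w = α * a + β * b := by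
  obtain ⟨u, v, huv⟩ := hab
  set α₀ := (w * u) % b with hα₀def
  have h0 : 0 ≤ α₀ := Int.emod_nonneg _ (ne_of_gt hb)
  have h1 : α₀ < b := Int.emod_lt_of_pos _ hb
  have hmod : α₀ = w * u - b * ((w * u) / b) := Int.emod_def (w * u) b
  have hkey : w - α₀ * a = b * (w * v + a * ((w * u) / b)) := by
    linear_combination (-a) * hmod - w * huv
  set β₀ := w * v + a * ((w * u) / b) with hβ₀def
  have hw' : w = α₀ * a + β₀ * b := by linear_combination hkey
  have hβ₀neg : β₀ < 0 := by
    by_contra hc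
    push_neg at hc
    exact hw ⟨α₀, β₀, h0, hc, hw'⟩
  exact ⟨b - 1 - α₀, -1 - β₀, by linarith, by linarith, by linear_combination -hw'⟩

lemma core' (P : ℤ → Prop) (x y z : ℤ) (hx : 0 < x)
    (g y₁ z₁ : ℤ) (hg : 0 < g) (hy : y = g * y₁) (hz : z = g * z₁)
    (hy₁ : 0 < y₁) (hz₁ : 0 < z₁) (cop : IsCoprime y₁ z₁)
    (hmem : ∀ w, P w ↔ ∃ α β γ : ℤ, 0 ≤ α ∧ 0 ≤ β ∧ 0 ≤ γ ∧ w = α*x + β*y + γ*z)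
    (fm fhi flo : ℤ)
    (Bm Cm Am Em Gm Hm : ℤ) (hBm : 0 ≤ Bm) (hCm : 0 ≤ Cm) (hAm : 0 ≤ Am)
    (hEm : 0 ≤ Em) (hGm : 0 ≤ Gm) (hHm : 0 ≤ Hm)
    (e1 : fm = Bm * y + Cm * z - x) (e2 : fm = Am * x + Em * z - y)
    (e3 : fm = Gm * x + Hm * y - z)
    (Bhi Chi : ℤ) (hBhi0 : 0 ≤ Bhi) (hChi : 0 ≤ Chi) (e4 : fhi = Bhi * y + Chi * z - x)
    (Blo Clo : ℤ) (hBlo : 0 ≤ Blo) (hClo0 : 0 ≤ Clo) (e5 : flo = Blo * y + Clo * z - x)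
    (hBB : Bm < Bhi) (hCC : Cm < Clo)
    (hnm : ¬ P fm) (hnhi : ¬ P fhi) (hnlo : ¬ P flo) :
    y₁ * z₁ + y₁ + z₁ ≤ x := by
  -- step 1 : Em < Cm
  have hCE : Em < Cm := by
    by_contra hc
    push_neg at hc
    exact hnhi ((hmem fhi).mpr ⟨Am, Bhi - Bm - 1, Chi + Em - Cm, hAm, by linarith,
      by linarith, by linear_combination e4 - e1 + e2⟩)
  -- step 2 : Hm < Bm
  have hHB : Hm < Bm := by
    by_contra hc
    push_neg at hc
    exact hnlo ((hmem flo).mpr ⟨Gm, Blo + Hm - Bm, Clo - Cm - 1, hGm, by linarith,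
      by linarith, by linear_combination e5 - e1 + e3⟩)
  -- step 3 : Gm = Am
  have hGA : Gm = Am := by
    rcases lt_trichotomy Gm Am with h | h | h
    · exact absurd ((hmem fm).mpr ⟨Am - Gm - 1, Bm - Hm - 1, Cm + Em + 1, by linarith,
        by linarith, by linarith, by linear_combination e1 + e2 - e3⟩) hnm
    · exact h
    · exact absurd ((hmem fm).mpr ⟨Gm - Am - 1, Bm + Hm + 1, Cm - Em - 1, by linarith,
        by linarith, by linarith, by linear_combination e1 + e3 - e2⟩) hnm
  have hpure : (Hm + 1) * y = (Em + 1) * z := by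
    linear_combination e2 - e3 - x * hGA
  have hpure₁ : (Hm + 1) * y₁ = (Em + 1) * z₁ := by
    have h' : g * ((Hm + 1) * y₁) = g * ((Em + 1) * z₁) := by
      linear_combination hpure - (Hm+1) * hy + (Em+1) * hz
    exact mul_left_cancel₀ (ne_of_gt hg) h'
  have hd1 : z₁ ∣ (Hm + 1) := by
    refine (cop.symm).dvd_of_dvd_mul_right ⟨Em + 1, by linear_combination hpure₁⟩
  have hd2 : y₁ ∣ (Em + 1) := by
    refine cop.dvd_of_dvd_mul_right ⟨Hm + 1, by linear_combination -hpure₁⟩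
  have hz₁Bm : z₁ ≤ Bm := le_trans (Int.le_of_dvd (by linarith) hd1) (by linarith)
  have hy₁Cm : y₁ ≤ Cm := le_trans (Int.le_of_dvd (by linarith) hd2) (by linarith)
  have hnot : ¬ ∃ α β : ℤ, 0 ≤ α ∧ 0 ≤ β ∧ (Bm * y₁ + Cm * z₁ - x) = α * y₁ + β * z₁ := by
    rintro ⟨α, β, hα, hβ, heq⟩
    exact hnm ((hmem fm).mpr ⟨g - 1, α, β, by linarith, hα, hβ,
      by linear_combination e1 + g * heq + (Bm - α) * hy + (Cm - β) * hz⟩)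
  obtain ⟨α, β, hα, hβ, heq⟩ := sylvester y₁ z₁ hz₁ cop _ hnot
  nlinarith [mul_nonneg hα hy₁.le, mul_nonneg hβ hz₁.le,
    mul_le_mul_of_nonneg_right hz₁Bm hy₁.le, mul_le_mul_of_nonneg_right hy₁Cm hz₁.le]
lemma key_s13 (P : ℤ → Prop) (x y z : ℤ) (hx : 0 < x)
    (g y₁ z₁ : ℤ) (hg : 0 < g) (hy : y = g * y₁) (hz : z = g * z₁)
    (hy₁ : 0 < y₁) (hz₁ : 0 < z₁) (cop : IsCoprime y₁ z₁)
    (hmem : ∀ w, P w ↔ ∃ α β γ : ℤ, 0 ≤ α ∧ 0 ≤ β ∧ 0 ≤ γ ∧ w = α*x + β*y + γ*z)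
    (f₁ f₂ f₃ : ℤ) (h12 : f₁ ≠ f₂) (h13 : f₁ ≠ f₃) (h23 : f₂ ≠ f₃)
    (hPF : ∀ f, (f = f₁ ∨ f = f₂ ∨ f = f₃) →
      ¬ P f ∧ P (f + x) ∧ P (f + y) ∧ P (f + z)) :
    y₁ * z₁ + y₁ + z₁ ≤ x := by
  -- additivity
  have Padd : ∀ w α β γ : ℤ, P w → 0 ≤ α → 0 ≤ β → 0 ≤ γ → P (w + (α*x + β*y + γ*z)) := by
    intro w α β γ hw hα hβ hγ
    obtain ⟨a, b, c, ha, hb, hc, he⟩ := (hmem w).mp hw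
    exact (hmem _).mpr ⟨a + α, b + β, c + γ, by linarith, by linarith, by linarith,
      by linear_combination he⟩
  -- extraction of the three representations
  have getx : ∀ f, ¬ P f → P (f + x) → ∃ B C : ℤ, 0 ≤ B ∧ 0 ≤ C ∧ f = B*y + C*z - x := by
    intro f hnf hfx
    obtain ⟨α, β, γ, hα, hβ, hγ, he⟩ := (hmem _).mp hfx
    rcases le_or_gt 1 α with h1 | h1
    · exact absurd ((hmem f).mpr ⟨α - 1, β, γ, by linarith, hβ, hγ,
        by linear_combination he⟩) hnf
    · have hα0 : α = 0 := by linarith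
      exact ⟨β, γ, hβ, hγ, by rw [hα0] at he; linear_combination he⟩
  have gety : ∀ f, ¬ P f → P (f + y) → ∃ A E : ℤ, 0 ≤ A ∧ 0 ≤ E ∧ f = A*x + E*z - y := by
    intro f hnf hfy
    obtain ⟨α, β, γ, hα, hβ, hγ, he⟩ := (hmem _).mp hfy
    rcases le_or_gt 1 β with h1 | h1
    · exact absurd ((hmem f).mpr ⟨α, β - 1, γ, hα, by linarith, hγ,
        by linear_combination he⟩) hnf
    · have hβ0 : β = 0 := by linarith
      exact ⟨α, γ, hα, hγ, by rw [hβ0] at he; linear_combination he⟩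
  have getz : ∀ f, ¬ P f → P (f + z) → ∃ G H : ℤ, 0 ≤ G ∧ 0 ≤ H ∧ f = G*x + H*y - z := by
    intro f hnf hfz
    obtain ⟨α, β, γ, hα, hβ, hγ, he⟩ := (hmem _).mp hfz
    rcases le_or_gt 1 γ with h1 | h1
    · exact absurd ((hmem f).mpr ⟨α, β, γ - 1, hα, hβ, by linarith,
        by linear_combination he⟩) hnf
    · have hγ0 : γ = 0 := by linarith
      exact ⟨α, β, hα, hβ, by rw [hγ0] at he; linear_combination he⟩
  -- data for each of the three elements
  obtain ⟨hn1, hx1, hy1, hz1⟩ := hPF f₁ (Or.inl rfl)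
  obtain ⟨hn2, hx2, hy2, hz2⟩ := hPF f₂ (Or.inr (Or.inl rfl))
  obtain ⟨hn3, hx3, hy3, hz3⟩ := hPF f₃ (Or.inr (Or.inr rfl))
  obtain ⟨B₁, C₁, hB₁, hC₁, E₁⟩ := getx f₁ hn1 hx1
  obtain ⟨B₂, C₂, hB₂, hC₂, E₂⟩ := getx f₂ hn2 hx2
  obtain ⟨B₃, C₃, hB₃, hC₃, E₃⟩ := getx f₃ hn3 hx3
  obtain ⟨A₁, F₁, hA₁, hF₁, E₁'⟩ := gety f₁ hn1 hy1
  obtain ⟨A₂, F₂, hA₂, hF₂, E₂'⟩ := gety f₂ hn2 hy2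
  obtain ⟨A₃, F₃, hA₃, hF₃, E₃'⟩ := gety f₃ hn3 hy3
  obtain ⟨G₁, H₁, hG₁, hH₁, E₁''⟩ := getz f₁ hn1 hz1
  obtain ⟨G₂, H₂, hG₂, hH₂, E₂''⟩ := getz f₂ hn2 hz2
  obtain ⟨G₃, H₃, hG₃, hH₃, E₃''⟩ := getz f₃ hn3 hz3
  -- incomparability: if Ba ≤ Bb (fa ≠ fb) then Cb < Ca
  have npair : ∀ fa Ba Ca fb Bb Cb : ℤ, fa ≠ fb → ¬ P fb → P (fa + y) → P (fa + z) →
      fa = Ba*y + Ca*z - x → fb = Bb*y + Cb*z - x → Ba ≤ Bb → Cb < Ca := by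
    intro fa Ba Ca fb Bb Cb hne hnb hay haz ea eb hBab
    by_contra hc
    push_neg at hc
    rcases lt_or_eq_of_le hBab with hlt | heq
    · have : fb = (fa + y) + ((0:ℤ)*x + (Bb - Ba - 1)*y + (Cb - Ca)*z) := by
        linear_combination eb - ea
      rw [this] at hnb
      exact hnb (Padd _ _ _ _ hay le_rfl (by linarith) (by linarith))
    · rcases lt_or_eq_of_le hc with hlt2 | heq2
      · have : fb = (fa + z) + ((0:ℤ)*x + (0:ℤ)*y + (Cb - Ca - 1)*z) := by
          linear_combination eb - ea - y * heq
        rw [this] at hnb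
        exact hnb (Padd _ _ _ _ haz le_rfl le_rfl (by linarith))
      · exact hne (by rw [ea, eb, heq, heq2])
  -- the B's are pairwise distinct
  have hBne12 : B₁ ≠ B₂ := fun h => absurd (npair f₁ B₁ C₁ f₂ B₂ C₂ h12 hn2 hy1 hz1 E₁ E₂ h.le)
    (not_lt.mpr (npair f₂ B₂ C₂ f₁ B₁ C₁ h12.symm hn1 hy2 hz2 E₂ E₁ h.ge).le)
  have hBne13 : B₁ ≠ B₃ := fun h => absurd (npair f₁ B₁ C₁ f₃ B₃ C₃ h13 hn3 hy1 hz1 E₁ E₃ h.le)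
    (not_lt.mpr (npair f₃ B₃ C₃ f₁ B₁ C₁ h13.symm hn1 hy3 hz3 E₃ E₁ h.ge).le)
  have hBne23 : B₂ ≠ B₃ := fun h => absurd (npair f₂ B₂ C₂ f₃ B₃ C₃ h23 hn3 hy2 hz2 E₂ E₃ h.le)
    (not_lt.mpr (npair f₃ B₃ C₃ f₂ B₂ C₂ h23.symm hn2 hy3 hz3 E₃ E₂ h.ge).le)
  -- six orderings; in each case apply core' with the median
  rcases lt_trichotomy B₁ B₂ with h12' | h12' | h12'
  · rcases lt_trichotomy B₂ B₃ with h23' | h23' | h23'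
    · -- B₁ < B₂ < B₃ : m = 2, hi = 3, lo = 1
      exact core' P x y z hx g y₁ z₁ hg hy hz hy₁ hz₁ cop hmem f₂ f₃ f₁
        B₂ C₂ A₂ F₂ G₂ H₂ hB₂ hC₂ hA₂ hF₂ hG₂ hH₂ E₂ E₂' E₂''
        B₃ C₃ hB₃ hC₃ E₃ B₁ C₁ hB₁ hC₁ E₁ h23'
        (npair f₁ B₁ C₁ f₂ B₂ C₂ h12 hn2 hy1 hz1 E₁ E₂ h12'.le) hn2 hn3 hn1
    · exact absurd h23' hBne23
    · rcases lt_trichotomy B₁ B₃ with h13' | h13' | h13'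
      · -- B₁ < B₃ < B₂ : m = 3, hi = 2, lo = 1
        exact core' P x y z hx g y₁ z₁ hg hy hz hy₁ hz₁ cop hmem f₃ f₂ f₁
          B₃ C₃ A₃ F₃ G₃ H₃ hB₃ hC₃ hA₃ hF₃ hG₃ hH₃ E₃ E₃' E₃''
          B₂ C₂ hB₂ hC₂ E₂ B₁ C₁ hB₁ hC₁ E₁ h23'
          (npair f₁ B₁ C₁ f₃ B₃ C₃ h13 hn3 hy1 hz1 E₁ E₃ h13'.le) hn3 hn2 hn1
      · exact absurd h13' hBne13
      · -- B₃ < B₁ < B₂ : m = 1, hi = 2, lo = 3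
        exact core' P x y z hx g y₁ z₁ hg hy hz hy₁ hz₁ cop hmem f₁ f₂ f₃
          B₁ C₁ A₁ F₁ G₁ H₁ hB₁ hC₁ hA₁ hF₁ hG₁ hH₁ E₁ E₁' E₁''
          B₂ C₂ hB₂ hC₂ E₂ B₃ C₃ hB₃ hC₃ E₃ h12'
          (npair f₃ B₃ C₃ f₁ B₁ C₁ h13.symm hn1 hy3 hz3 E₃ E₁ h13'.le) hn1 hn2 hn3
  · exact absurd h12' hBne12
  · rcases lt_trichotomy B₁ B₃ with h13' | h13' | h13'
    · -- B₂ < B₁ < B₃ : m = 1, hi = 3, lo = 2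
      exact core' P x y z hx g y₁ z₁ hg hy hz hy₁ hz₁ cop hmem f₁ f₃ f₂
        B₁ C₁ A₁ F₁ G₁ H₁ hB₁ hC₁ hA₁ hF₁ hG₁ hH₁ E₁ E₁' E₁''
        B₃ C₃ hB₃ hC₃ E₃ B₂ C₂ hB₂ hC₂ E₂ h13'
        (npair f₂ B₂ C₂ f₁ B₁ C₁ h12.symm hn1 hy2 hz2 E₂ E₁ h12'.le) hn1 hn3 hn2
    · exact absurd h13' hBne13
    · rcases lt_trichotomy B₂ B₃ with h23' | h23' | h23'
      · -- B₂ < B₃ < B₁ : m = 3, hi = 1, lo = 2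
        exact core' P x y z hx g y₁ z₁ hg hy hz hy₁ hz₁ cop hmem f₃ f₁ f₂
          B₃ C₃ A₃ F₃ G₃ H₃ hB₃ hC₃ hA₃ hF₃ hG₃ hH₃ E₃ E₃' E₃''
          B₁ C₁ hB₁ hC₁ E₁ B₂ C₂ hB₂ hC₂ E₂ h13'
          (npair f₂ B₂ C₂ f₃ B₃ C₃ h23 hn3 hy2 hz2 E₂ E₃ h23'.le) hn3 hn1 hn2
      · exact absurd h23' hBne23
      · -- B₃ < B₂ < B₁ : m = 2, hi = 1, lo = 3
        exact core' P x y z hx g y₁ z₁ hg hy hz hy₁ hz₁ cop hmem f₂ f₁ f₃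
          B₂ C₂ A₂ F₂ G₂ H₂ hB₂ hC₂ hA₂ hF₂ hG₂ hH₂ E₂ E₂' E₂''
          B₁ C₁ hB₁ hC₁ E₁ B₃ C₃ hB₃ hC₃ E₃ h12'
          (npair f₃ B₃ C₃ f₂ B₂ C₂ h23.symm hn2 hy3 hz3 E₃ E₂ h23'.le) hn2 hn1 hn3

theorem stmt13 (n : Fin 3 → ℕ)
    (hpos : ∀ i, 0 < n i)
    (hgcd : Finset.univ.gcd n = 1)
    (hmin : MinGen n) :
    (PF n).ncard ≤ 2 := by
  by_contra hcon
  push_neg at hcon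
  obtain ⟨t, hts, htc⟩ := Set.exists_subset_card_eq hcon
  obtain ⟨f₁, f₂, f₃, h12, h13, h23, rfl⟩ := Set.ncard_eq_three.mp htc
  have hf1 := hts (by simp : f₁ ∈ ({f₁, f₂, f₃} : Set ℤ))
  have hf2 := hts (by simp : f₂ ∈ ({f₁, f₂, f₃} : Set ℤ))
  have hf3 := hts (by simp : f₃ ∈ ({f₁, f₂, f₃} : Set ℤ))
  have hppos : (0:ℤ) < n 0 := by exact_mod_cast hpos 0
  have hqpos : (0:ℤ) < n 1 := by exact_mod_cast hpos 1
  have hrpos : (0:ℤ) < n 2 := by exact_mod_cast hpos 2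
  have hPFd : ∀ f, f ∈ PF n → ¬ (f ∈ NS n) ∧ (f + (n 0:ℤ)) ∈ NS n ∧
      (f + (n 1:ℤ)) ∈ NS n ∧ (f + (n 2:ℤ)) ∈ NS n := by
    intro f hf
    exact ⟨hf.1, hf.2 0, hf.2 1, hf.2 2⟩
  -- first application: lead q = n 1, wings p = n 0 and r = n 2
  set g1 : ℕ := Nat.gcd (n 0) (n 2) with hg1def
  set p1 : ℕ := n 0 / g1 with hp1def
  set r1 : ℕ := n 2 / g1 with hr1def
  have hg1pos : 0 < g1 := Nat.gcd_pos_of_pos_left _ (hpos 0)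
  have hp1eq : n 0 = g1 * p1 := (Nat.mul_div_cancel' (Nat.gcd_dvd_left _ _)).symm
  have hr1eq : n 2 = g1 * r1 := (Nat.mul_div_cancel' (Nat.gcd_dvd_right _ _)).symm
  have hp1pos : 0 < p1 := Nat.div_pos (Nat.le_of_dvd (hpos 0) (Nat.gcd_dvd_left _ _)) hg1pos
  have hr1pos : 0 < r1 := Nat.div_pos (Nat.le_of_dvd (hpos 2) (Nat.gcd_dvd_right _ _)) hg1pos
  have cop1 : IsCoprime (p1 : ℤ) (r1 : ℤ) :=
    Nat.isCoprime_iff_coprime.mpr (Nat.coprime_div_gcd_div_gcd hg1pos)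
  have hmem1 : ∀ w, w ∈ NS n ↔ ∃ α β γ : ℤ, 0 ≤ α ∧ 0 ≤ β ∧ 0 ≤ γ ∧
      w = α * n 1 + β * n 0 + γ * n 2 := by
    intro w
    rw [memNS_iff]
    constructor
    · rintro ⟨a, b, c, ha, hb, hc, he⟩
      exact ⟨b, a, c, hb, ha, hc, by linear_combination he⟩
    · rintro ⟨a, b, c, ha, hb, hc, he⟩
      exact ⟨b, a, c, hb, ha, hc, by linear_combination he⟩
  have ineq1 : (p1:ℤ) * r1 + p1 + r1 ≤ n 1 := by
    refine key_s13 (· ∈ NS n) (n 1) (n 0) (n 2) hqpos (g1:ℤ) (p1:ℤ) (r1:ℤ)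
      (by exact_mod_cast hg1pos) (by exact_mod_cast hp1eq) (by exact_mod_cast hr1eq)
      (by exact_mod_cast hp1pos) (by exact_mod_cast hr1pos) cop1 hmem1
      f₁ f₂ f₃ h12 h13 h23 ?_
    rintro f (rfl | rfl | rfl)
    · exact ⟨(hPFd _ hf1).1, (hPFd _ hf1).2.2.1, (hPFd _ hf1).2.1, (hPFd _ hf1).2.2.2⟩
    · exact ⟨(hPFd _ hf2).1, (hPFd _ hf2).2.2.1, (hPFd _ hf2).2.1, (hPFd _ hf2).2.2.2⟩
    · exact ⟨(hPFd _ hf3).1, (hPFd _ hf3).2.2.1, (hPFd _ hf3).2.1, (hPFd _ hf3).2.2.2⟩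
  -- second application: lead r = n 2, wings p = n 0 and q = n 1
  set g2 : ℕ := Nat.gcd (n 0) (n 1) with hg2def
  set p2 : ℕ := n 0 / g2 with hp2def
  set q2 : ℕ := n 1 / g2 with hq2def
  have hg2pos : 0 < g2 := Nat.gcd_pos_of_pos_left _ (hpos 0)
  have hp2eq : n 0 = g2 * p2 := (Nat.mul_div_cancel' (Nat.gcd_dvd_left _ _)).symm
  have hq2eq : n 1 = g2 * q2 := (Nat.mul_div_cancel' (Nat.gcd_dvd_right _ _)).symm
  have hp2pos : 0 < p2 := Nat.div_pos (Nat.le_of_dvd (hpos 0) (Nat.gcd_dvd_left _ _)) hg2pos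
  have hq2pos : 0 < q2 := Nat.div_pos (Nat.le_of_dvd (hpos 1) (Nat.gcd_dvd_right _ _)) hg2pos
  have cop2 : IsCoprime (p2 : ℤ) (q2 : ℤ) :=
    Nat.isCoprime_iff_coprime.mpr (Nat.coprime_div_gcd_div_gcd hg2pos)
  have hmem2 : ∀ w, w ∈ NS n ↔ ∃ α β γ : ℤ, 0 ≤ α ∧ 0 ≤ β ∧ 0 ≤ γ ∧
      w = α * n 2 + β * n 0 + γ * n 1 := by
    intro w
    rw [memNS_iff]
    constructor
    · rintro ⟨a, b, c, ha, hb, hc, he⟩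
      exact ⟨c, a, b, hc, ha, hb, by linear_combination he⟩
    · rintro ⟨a, b, c, ha, hb, hc, he⟩
      exact ⟨b, c, a, hb, hc, ha, by linear_combination he⟩
  have ineq2 : (p2:ℤ) * q2 + p2 + q2 ≤ n 2 := by
    refine key_s13 (· ∈ NS n) (n 2) (n 0) (n 1) hrpos (g2:ℤ) (p2:ℤ) (q2:ℤ)
      (by exact_mod_cast hg2pos) (by exact_mod_cast hp2eq) (by exact_mod_cast hq2eq)
      (by exact_mod_cast hp2pos) (by exact_mod_cast hq2pos) cop2 hmem2
      f₁ f₂ f₃ h12 h13 h23 ?_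
    rintro f (rfl | rfl | rfl)
    · exact ⟨(hPFd _ hf1).1, (hPFd _ hf1).2.2.2, (hPFd _ hf1).2.1, (hPFd _ hf1).2.2.1⟩
    · exact ⟨(hPFd _ hf2).1, (hPFd _ hf2).2.2.2, (hPFd _ hf2).2.1, (hPFd _ hf2).2.2.1⟩
    · exact ⟨(hPFd _ hf3).1, (hPFd _ hf3).2.2.2, (hPFd _ hf3).2.1, (hPFd _ hf3).2.2.1⟩
  -- final arithmetic
  have cog : Nat.Coprime g1 g2 := by
    have hd : Nat.gcd g1 g2 ∣ Finset.univ.gcd n := by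
      refine Finset.dvd_gcd ?_
      intro i _
      fin_cases i
      · exact dvd_trans (Nat.gcd_dvd_left g1 g2) (Nat.gcd_dvd_left (n 0) (n 2))
      · exact dvd_trans (Nat.gcd_dvd_right g1 g2) (Nat.gcd_dvd_right (n 0) (n 1))
      · exact dvd_trans (Nat.gcd_dvd_left g1 g2) (Nat.gcd_dvd_right (n 0) (n 2))
    rw [hgcd] at hd
    exact Nat.dvd_one.mp hd
  have pd : g1 * g2 ∣ n 0 :=
    Nat.Coprime.mul_dvd_of_dvd_of_dvd cog (Nat.gcd_dvd_left _ _) (Nat.gcd_dvd_left _ _)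
  obtain ⟨Pn, hPn⟩ := pd
  have hPnpos : 0 < Pn := by
    rcases Nat.eq_zero_or_pos Pn with h | h
    · rw [h, Nat.mul_zero] at hPn
      exact absurd hPn (hpos 0).ne'
    · exact h
  have hp1Pn : p1 = g2 * Pn := by
    rw [hp1def, hPn, Nat.mul_assoc, Nat.mul_div_cancel_left _ hg1pos]
  have hp2Pn : p2 = g1 * Pn := by
    rw [hp2def, hPn, Nat.mul_comm g1 g2, Nat.mul_assoc, Nat.mul_div_cancel_left _ hg2pos]
  -- cast everything to ℤ and derive a contradiction
  have hg1z : (0:ℤ) < (g1:ℤ) := by exact_mod_cast hg1pos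
  have hg2z : (0:ℤ) < (g2:ℤ) := by exact_mod_cast hg2pos
  have hPz : (1:ℤ) ≤ (Pn:ℤ) := by exact_mod_cast hPnpos
  have hq2z : (1:ℤ) ≤ (q2:ℤ) := by exact_mod_cast hq2pos
  have hr1z : (1:ℤ) ≤ (r1:ℤ) := by exact_mod_cast hr1pos
  have e1 : (n 1:ℤ) = (g2:ℤ) * (q2:ℤ) := by exact_mod_cast hq2eq
  have e2 : (n 2:ℤ) = (g1:ℤ) * (r1:ℤ) := by exact_mod_cast hr1eq
  have e3 : (p1:ℤ) = (g2:ℤ) * (Pn:ℤ) := by exact_mod_cast hp1Pn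
  have e4 : (p2:ℤ) = (g1:ℤ) * (Pn:ℤ) := by exact_mod_cast hp2Pn
  rw [e3, e1] at ineq1
  rw [e4, e2] at ineq2
  -- ineq1 : g2*Pn*r1 + g2*Pn + r1 ≤ g2*q2 ; hence Pn*r1 + 1 ≤ q2
  have aux1 : (Pn:ℤ) * r1 + 1 ≤ (q2:ℤ) := by
    rcases le_or_gt ((Pn:ℤ) * r1 + 1) (q2:ℤ) with h | h
    · exact h
    · exfalso
      have h'' : (g2:ℤ) * (q2:ℤ) ≤ (g2:ℤ) * ((Pn:ℤ) * (r1:ℤ)) :=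
        mul_le_mul_of_nonneg_left (by linarith) hg2z.le
      have h''' : (g2:ℤ) ≤ (g2:ℤ) * (Pn:ℤ) := le_mul_of_one_le_right hg2z.le hPz
      linarith [ineq1, h'', h''']
  have aux2 : (Pn:ℤ) * q2 + 1 ≤ (r1:ℤ) := by
    rcases le_or_gt ((Pn:ℤ) * q2 + 1) (r1:ℤ) with h | h
    · exact h
    · exfalso
      have h'' : (g1:ℤ) * (r1:ℤ) ≤ (g1:ℤ) * ((Pn:ℤ) * (q2:ℤ)) :=
        mul_le_mul_of_nonneg_left (by linarith) hg1z.le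
      have h''' : (g1:ℤ) ≤ (g1:ℤ) * (Pn:ℤ) := le_mul_of_one_le_right hg1z.le hPz
      linarith [ineq2, h'', h''']
  have h1 : (r1:ℤ) ≤ (Pn:ℤ) * r1 := le_mul_of_one_le_left (by linarith) hPz
  have h2 : (q2:ℤ) ≤ (Pn:ℤ) * q2 := le_mul_of_one_le_left (by linarith) hPz
  linarith
end

section
/- Let S = ⟨n₁,n₂,n₃,n₄⟩ be an almost symmetric numerical semigroup. Then the number of pairs (i,j) with i ≠ j such that λ_{ij}·n_j - n_i ∈ PF(S) \ {F(S)} is at least 2(t(S) - 1), where λ_{ij} = max{K ∈ ℕ : K·n_j - n_i ∉ S} and t(S) = |PF(S)|. -/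
open Finset

namespace St19

variable {n : Fin 4 → ℕ}

lemma zero_mem_NS : (0:ℤ) ∈ NS n := ⟨0, by simp⟩

lemma NS_add {x y : ℤ} (hx : x ∈ NS n) (hy : y ∈ NS n) : x + y ∈ NS n := by
  obtain ⟨a, rfl⟩ := hx; obtain ⟨b, rfl⟩ := hy
  refine ⟨a + b, ?_⟩
  rw [← Finset.sum_add_distrib]
  refine Finset.sum_congr rfl fun j _ => ?_
  simp only [Pi.add_apply]
  push_cast
  ring

lemma NS_nonneg {x : ℤ} (hx : x ∈ NS n) : 0 ≤ x := by
  obtain ⟨a, rfl⟩ := hx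
  positivity

lemma mul_gen_mem (m : ℕ) (j : Fin 4) : (m : ℤ) * n j ∈ NS n := by
  refine ⟨fun k => if k = j then m else 0, ?_⟩
  simp

lemma sum_update_add (a : Fin 4 → ℕ) (i : Fin 4) (m : ℕ) :
    ∑ k, ((if k = i then a k + m else a k : ℕ) : ℤ) * n k
      = (∑ k, (a k : ℤ) * n k) + (m : ℤ) * n i := by
  rw [← Finset.sum_erase_add _ _ (mem_univ i), ← Finset.sum_erase_add _ _ (mem_univ i)]
  have h1 : ∑ k ∈ univ.erase i, ((if k = i then a k + m else a k : ℕ) : ℤ) * n k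
      = ∑ k ∈ univ.erase i, (a k : ℤ) * n k :=
    Finset.sum_congr rfl fun k hk => by rw [if_neg (Finset.ne_of_mem_erase hk)]
  rw [h1, if_pos rfl]
  push_cast
  ring

lemma sum_update_sub (a : Fin 4 → ℕ) (i : Fin 4) (h : 1 ≤ a i) :
    ∑ k, ((if k = i then a i - 1 else a k : ℕ) : ℤ) * n k
      = (∑ k, (a k : ℤ) * n k) - (n i : ℤ) := by
  rw [← Finset.sum_erase_add _ _ (mem_univ i), ← Finset.sum_erase_add _ _ (mem_univ i)]
  have h1 : ∑ k ∈ univ.erase i, ((if k = i then a i - 1 else a k : ℕ) : ℤ) * n k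
      = ∑ k ∈ univ.erase i, (a k : ℤ) * n k :=
    Finset.sum_congr rfl fun k hk => by rw [if_neg (Finset.ne_of_mem_erase hk)]
  rw [h1, if_pos rfl, Nat.cast_sub h]
  ring

end St19

-- continuation lemmas, tested appended to a.lean
namespace St19

variable {n : Fin 4 → ℕ}

/-- remove one copy of generator `j` from a sum representation -/
lemma sub_gen_mem {x : ℤ} {a : Fin 4 → ℕ} {j : Fin 4} (h : 1 ≤ a j)
    (hx : x = ∑ k, (a k : ℤ) * n k) : x - (n j : ℤ) ∈ NS n :=
  ⟨fun k => if k = j then a j - 1 else a k, by rw [sum_update_sub a j h, ← hx]⟩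

lemma gen_sub_not_mem (hpos : ∀ i, 0 < n i) (hmin : MinGen n) {i j : Fin 4} (hij : i ≠ j) :
    (n j : ℤ) - (n i : ℤ) ∉ NS n := by
  rintro ⟨a, ha⟩
  have haj : a j = 0 := by
    by_contra h
    have h1 : (1 : ℤ) ≤ a j := by exact_mod_cast Nat.one_le_iff_ne_zero.2 h
    have h2 : (a j : ℤ) * n j ≤ ∑ k, (a k : ℤ) * n k :=
      Finset.single_le_sum (f := fun k => (a k : ℤ) * n k) (fun k _ => by positivity)
        (mem_univ j)
    have h3 : (n j : ℤ) ≤ (a j : ℤ) * n j := by nlinarith [(hpos j : 0 < n j)]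
    have h4 : (0 : ℤ) < n i := by exact_mod_cast hpos i
    omega
  refine hmin j ⟨fun k => if k = i then a k + 1 else a k, ?_, ?_⟩
  · show (if j = i then a j + 1 else a j) = 0
    rw [if_neg (Ne.symm hij), haj]
  · rw [sum_update_add a i 1, ← ha]
    push_cast
    ring

lemma PF_not_mem {f : ℤ} (hf : f ∈ PF n) : f ∉ NS n := hf.1

lemma PF_add_pos (hpos : ∀ i, 0 < n i) (hmin : MinGen n) {f : ℤ} (hf : f ∈ PF n) (i : Fin 4) :
    0 < f + (n i : ℤ) := by
  have h0 : 0 ≤ f + (n i : ℤ) := NS_nonneg (hf.2 i)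
  rcases h0.lt_or_eq with h | h
  · exact h
  · exfalso
    set j : Fin 4 := if i = 0 then 1 else 0 with hj
    have hij : i ≠ j := by
      rcases eq_or_ne i 0 with h' | h' <;> simp [hj, h']
    have : f + (n j : ℤ) = (n j : ℤ) - n i := by omega
    exact gen_sub_not_mem hpos hmin hij (this ▸ hf.2 j)

lemma PF_row (hpos : ∀ i, 0 < n i) (hmin : MinGen n) {f : ℤ} (hf : f ∈ PF n) (i : Fin 4) :
    ∃ a : Fin 4 → ℕ, a i = 0 ∧ f + (n i : ℤ) = ∑ k, (a k : ℤ) * n k ∧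
      ∃ j, 1 ≤ a j := by
  obtain ⟨a, ha⟩ := hf.2 i
  have hai : a i = 0 := by
    by_contra h
    have h1 : 1 ≤ a i := Nat.one_le_iff_ne_zero.2 h
    have : f + (n i : ℤ) - n i ∈ NS n := sub_gen_mem h1 ha
    simp only [add_sub_cancel_right] at this
    exact hf.1 this
  refine ⟨a, hai, ha, ?_⟩
  by_contra h
  push_neg at h
  have hz : ∀ k, a k = 0 := fun k => by have := h k; omega
  have : f + (n i : ℤ) = 0 := by simp [ha, hz]
  have := PF_add_pos hpos hmin hf i
  omega

lemma PF_add_mem {f s : ℤ} (hf : f ∈ PF n) (hs : s ∈ NS n) (hs0 : s ≠ 0) :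
    f + s ∈ NS n := by
  obtain ⟨a, ha⟩ := hs
  have : ∃ j, 1 ≤ a j := by
    by_contra h
    push_neg at h
    have hz : ∀ k, a k = 0 := fun k => by have := h k; omega
    exact hs0 (by simp [ha, hz])
  obtain ⟨j, hj⟩ := this
  have h1 : s - (n j : ℤ) ∈ NS n := sub_gen_mem hj ha
  have := NS_add (hf.2 j) h1
  convert this using 1
  ring

lemma PF_add_mul (hpos : ∀ i, 0 < n i) {f : ℤ} (hf : f ∈ PF n) (j : Fin 4) {m : ℕ}
    (hm : 1 ≤ m) : f + (m : ℤ) * n j ∈ NS n := by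
  refine PF_add_mem hf (mul_gen_mem m j) ?_
  have h1 : (0:ℤ) < n j := by exact_mod_cast hpos j
  have h2 : (1:ℤ) ≤ m := by exact_mod_cast hm
  nlinarith

lemma isLam_of (hpos : ∀ i, 0 < n i) {f : ℤ} {i j : Fin 4} {K : ℕ}
    (hf : f ∈ PF n) (hK : f + (n i : ℤ) = (K : ℤ) * n j) : IsLam n i j K := by
  have hKf : (K : ℤ) * n j - n i = f := by omega
  constructor
  · rw [hKf]; exact hf.1
  · intro L hL
    by_contra h
    push_neg at h
    apply hL
    have hd : 1 ≤ L - K := by omega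
    have : (L : ℤ) * n j - n i = f + ((L - K : ℕ) : ℤ) * n j := by
      rw [Nat.cast_sub h.le]
      have h1 : (K:ℤ) < L := by exact_mod_cast h
      nlinarith [hKf]
    rw [this]
    exact PF_add_mul hpos hf j hd

end St19

namespace St19

variable {n : Fin 4 → ℕ}

open Classical in
noncomputable def good (n : Fin 4 → ℕ) (f : ℤ) : Finset (Fin 4 × Fin 4) :=
  univ.filter fun p => p.1 ≠ p.2 ∧ ∃ K : ℕ, f + (n p.1 : ℤ) = (K : ℤ) * n p.2

open Classical in
lemma mem_good {f : ℤ} {p : Fin 4 × Fin 4} :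
    p ∈ good n f ↔ p.1 ≠ p.2 ∧ ∃ K : ℕ, f + (n p.1 : ℤ) = (K : ℤ) * n p.2 := by
  simp [good]

lemma good_disjoint (hpos : ∀ i, 0 < n i) {f g : ℤ} (hf : f ∈ PF n) (hg : g ∈ PF n)
    (hfg : f ≠ g) : Disjoint (good n f) (good n g) := by
  have main : ∀ f g : ℤ, f ∈ PF n → g ∈ PF n → ∀ K L : ℕ, ∀ i j : Fin 4,
      f + (n i : ℤ) = (K : ℤ) * n j → g + (n i : ℤ) = (L : ℤ) * n j → K < L → False := by
    intro f g hf hg K L i j hK hL hKL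
    apply hg.1
    have : g = f + ((L - K : ℕ) : ℤ) * n j := by
      rw [Nat.cast_sub hKL.le]
      have : (K:ℤ) < L := by exact_mod_cast hKL
      nlinarith
    rw [this]
    exact PF_add_mul hpos hf j (by omega)
  rw [Finset.disjoint_left]
  rintro ⟨i, j⟩ hpf hpg
  rw [mem_good] at hpf hpg
  obtain ⟨hij, K, hK⟩ := hpf
  obtain ⟨-, L, hL⟩ := hpg
  rcases lt_trichotomy K L with h | h | h
  · exact main f g hf hg K L i j hK hL h
  · rw [h] at hK
    exact hfg (by omega)
  · exact main g f hg hf L K i j hL hK h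

/-- the key counting lemma -/
lemma key (hpos : ∀ i, 0 < n i) (hmin : MinGen n) {F f f' : ℤ}
    (hf : f ∈ PF n) (hf' : f' ∈ PF n) (hsum : f + f' = F) (hFnot : F ∉ NS n) :
    4 ≤ (good n f).card + (good n f').card := by
  choose A hA0 hAsum hAnz using fun i => PF_row hpos hmin hf i
  choose B hB0 hBsum hBnz using fun i => PF_row hpos hmin hf' i
  -- orthogonality
  have horth : ∀ i j : Fin 4, ¬(1 ≤ A i j ∧ 1 ≤ B j i) := by
    rintro i j ⟨h1, h2⟩
    rcases eq_or_ne i j with rfl | hij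
    · rw [hA0 i] at h1; omega
    · apply hFnot
      have m1 : f + (n i : ℤ) - n j ∈ NS n := sub_gen_mem h1 (hAsum i)
      have m2 : f' + (n j : ℤ) - n i ∈ NS n := sub_gen_mem h2 (hBsum j)
      have := NS_add m1 m2
      convert this using 1
      omega
  -- row counts
  set rA : Fin 4 → ℕ := fun i => (univ.filter fun j => 1 ≤ A i j).card with hrA
  set rB : Fin 4 → ℕ := fun i => (univ.filter fun j => 1 ≤ B i j).card with hrB
  have hrApos : ∀ i, 1 ≤ rA i := by
    intro i
    obtain ⟨j, hj⟩ := hAnz i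
    exact Finset.card_pos.2 ⟨j, Finset.mem_filter.2 ⟨mem_univ j, hj⟩⟩
  have hrBpos : ∀ i, 1 ≤ rB i := by
    intro i
    obtain ⟨j, hj⟩ := hBnz i
    exact Finset.card_pos.2 ⟨j, Finset.mem_filter.2 ⟨mem_univ j, hj⟩⟩
  set sA := (univ.filter fun i => rA i = 1).card with hsA
  set sB := (univ.filter fun i => rB i = 1).card with hsB
  -- total count bound: ∑ rA + ∑ rB ≤ 12
  have hcard : (∑ i, rA i) + (∑ i, rB i) ≤ 12 := by
    have eA : ∑ i, rA i = ∑ i, ∑ j, (if 1 ≤ A i j then 1 else 0) := by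
      refine Finset.sum_congr rfl fun i _ => ?_
      rw [hrA]
      exact Finset.card_filter _ _
    have eB : ∑ i, rB i = ∑ i, ∑ j, (if 1 ≤ B j i then 1 else 0) := by
      rw [Finset.sum_comm]
      refine Finset.sum_congr rfl fun i _ => ?_
      rw [hrB]
      exact Finset.card_filter _ _
    rw [eA, eB, ← Finset.sum_add_distrib]
    have : ∀ i ∈ univ, (∑ j, (if 1 ≤ A i j then 1 else 0)) + (∑ j, (if 1 ≤ B j i then 1 else 0))
        ≤ ∑ j : Fin 4, (if i = j then 0 else 1) := by
      intro i _
      rw [← Finset.sum_add_distrib]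
      refine Finset.sum_le_sum fun j _ => ?_
      rcases eq_or_ne i j with rfl | hij
      · simp [hA0 i, hB0 i]
      · have := horth i j
        rw [if_neg hij]
        split_ifs <;> omega
    calc ∑ i, ((∑ j, (if 1 ≤ A i j then 1 else 0)) + (∑ j, (if 1 ≤ B j i then 1 else 0)))
        ≤ ∑ i : Fin 4, ∑ j : Fin 4, (if i = j then 0 else 1) := Finset.sum_le_sum this
      _ = 12 := by decide
  -- singleton rows: ∑ rA + sA ≥ 8
  have hlow : ∀ (r : Fin 4 → ℕ), (∀ i, 1 ≤ r i) →
      8 ≤ (∑ i, r i) + (univ.filter fun i => r i = 1).card := by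
    intro r hr
    have : ∀ i ∈ univ, 2 ≤ r i + (if r i = 1 then 1 else 0) := by
      intro i _
      have := hr i
      split_ifs <;> omega
    calc (8:ℕ) = ∑ _i : Fin 4, 2 := by decide
      _ ≤ ∑ i, (r i + if r i = 1 then 1 else 0) := Finset.sum_le_sum this
      _ = (∑ i, r i) + (univ.filter fun i => r i = 1).card := by
          rw [Finset.sum_add_distrib, Finset.card_filter]
  have hA8 : 8 ≤ (∑ i, rA i) + sA := hlow rA hrApos
  have hB8 : 8 ≤ (∑ i, rB i) + sB := hlow rB hrBpos
  -- singleton rows give good pairs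
  have hgood : ∀ (g : ℤ) (C : Fin 4 → Fin 4 → ℕ), (∀ i, C i i = 0) →
      (∀ i, g + (n i : ℤ) = ∑ k, (C i k : ℤ) * n k) →
      (univ.filter fun i => (univ.filter fun j => 1 ≤ C i j).card = 1).card ≤ (good n g).card := by
    intro g C hC0 hCsum
    classical
    set pick : Fin 4 → Fin 4 := fun i =>
      if h : ∃ j, (univ.filter fun j => 1 ≤ C i j) = {j} then h.choose else 0 with hpick
    refine Finset.card_le_card_of_injOn (fun i => (i, pick i)) ?_ ?_
    · intro i hi
      rw [Finset.mem_coe, Finset.mem_filter] at hi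
      have hex : ∃ j, (univ.filter fun j => 1 ≤ C i j) = {j} := Finset.card_eq_one.1 hi.2
      have hpi : pick i = hex.choose := by rw [hpick]; exact dif_pos hex
      set j := hex.choose with hj
      have hspec : (univ.filter fun j => 1 ≤ C i j) = {j} := hex.choose_spec
      have hCij : 1 ≤ C i j := by
        have : j ∈ (univ.filter fun j => 1 ≤ C i j) := by rw [hspec]; exact Finset.mem_singleton_self j
        exact (Finset.mem_filter.1 this).2
      have hzero : ∀ k, k ≠ j → C i k = 0 := by
        intro k hk
        by_contra h
        have : k ∈ (univ.filter fun j => 1 ≤ C i j) :=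
          Finset.mem_filter.2 ⟨mem_univ k, by omega⟩
        rw [hspec, Finset.mem_singleton] at this
        exact hk this
      have hij : i ≠ j := by
        intro h
        rw [← h, hC0 i] at hCij
        omega
      have hsum1 : g + (n i : ℤ) = (C i j : ℤ) * n j := by
        rw [hCsum i]
        rw [Finset.sum_eq_single j]
        · intro k _ hk
          rw [hzero k hk]
          simp
        · intro h
          exact absurd (mem_univ j) h
      simp only [Finset.mem_coe, mem_good, hpi]
      exact ⟨hij, C i j, hsum1⟩
    · intro a _ b _ hab
      exact congrArg Prod.fst hab
  have h1 : sA ≤ (good n f).card := hgood f A hA0 hAsum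
  have h2 : sB ≤ (good n f').card := hgood f' B hB0 hBsum
  omega

end St19

theorem stmt19 (n : Fin 4 → ℕ)
    (hpos : ∀ i, 0 < n i)
    (hgcd : Finset.univ.gcd n = 1)
    (hmin : MinGen n)
    (F : ℤ) (hF : IsFrob n F) (hAS : AlmostSym n F) :
    2 * ((PF n).ncard - 1) ≤
      {p : Fin 4 × Fin 4 | p.1 ≠ p.2 ∧ ∃ K : ℕ, IsLam n p.1 p.2 K ∧
        ((K : ℤ) * n p.2 - n p.1) ∈ PF n \ {F}}.ncard := by
  classical
  have hFPF : F ∈ PF n := ⟨hF.1, fun i => hF.2 _ (by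
    have : (0:ℤ) < n i := by exact_mod_cast hpos i
    omega)⟩
  have hsub : PF n ⊆ Set.Icc (-(n 0 : ℤ)) F := by
    intro f hf
    constructor
    · have := St19.NS_nonneg (hf.2 0)
      omega
    · by_contra h
      push_neg at h
      exact hf.1 (hF.2 f h)
  have hfin : (PF n).Finite := (Set.finite_Icc _ _).subset hsub
  set D := hfin.toFinset.erase F with hD
  have hmemD : ∀ f : ℤ, f ∈ D ↔ f ∈ PF n ∧ f ≠ F := by
    intro f
    rw [hD, Finset.mem_erase, Set.Finite.mem_toFinset]
    tauto
  have hsig : ∀ f ∈ D, F - f ∈ D := by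
    intro f hf
    rw [hmemD] at hf ⊢
    obtain ⟨hfPF, hfF⟩ := hf
    have hFf : F - f ∉ NS n := by
      intro hmem
      have h0 : F - f ≠ 0 := fun h => hfF (by omega)
      exact hF.1 (by simpa using St19.PF_add_mem hfPF hmem h0)
    refine ⟨(hAS f hfPF.1 hFf).2, ?_⟩
    have hf0 : f ≠ 0 := fun h => hfPF.1 (h ▸ St19.zero_mem_NS)
    omega
  have hkey : ∀ f ∈ D, 4 ≤ (St19.good n f).card + (St19.good n (F - f)).card := by
    intro f hf
    have h1 := (hmemD f).1 hf
    have h2 := (hmemD _).1 (hsig f hf)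
    exact St19.key hpos hmin h1.1 h2.1 (by ring) hF.1
  have hsum2 : 2 * D.card ≤ ∑ f ∈ D, (St19.good n f).card := by
    have hswap : ∑ f ∈ D, (St19.good n (F - f)).card = ∑ f ∈ D, (St19.good n f).card := by
      refine Finset.sum_nbij' (fun f => F - f) (fun f => F - f) hsig hsig
        (fun f _ => by ring) (fun f _ => by ring) ?_
      intro f _
      norm_num
    have h4 : 4 * D.card ≤ ∑ f ∈ D, ((St19.good n f).card + (St19.good n (F - f)).card) := by
      calc 4 * D.card = ∑ _f ∈ D, 4 := by rw [Finset.sum_const]; ring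
        _ ≤ _ := Finset.sum_le_sum hkey
    rw [Finset.sum_add_distrib, hswap] at h4
    omega
  set T : Finset (Fin 4 × Fin 4) := Finset.univ.filter
    (fun p => p.1 ≠ p.2 ∧ ∃ K : ℕ, IsLam n p.1 p.2 K ∧
      ((K : ℤ) * n p.2 - n p.1) ∈ PF n \ {F}) with hT
  have hTcard : {p : Fin 4 × Fin 4 | p.1 ≠ p.2 ∧ ∃ K : ℕ, IsLam n p.1 p.2 K ∧
      ((K : ℤ) * n p.2 - n p.1) ∈ PF n \ {F}}.ncard = T.card := by
    rw [← Set.ncard_coe_finset]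
    congr 1
    ext p
    simp [hT]
  have hgsub : ∀ f ∈ D, St19.good n f ⊆ T := by
    intro f hf p hp
    obtain ⟨hfPF, hfF⟩ := (hmemD f).1 hf
    rw [St19.mem_good] at hp
    obtain ⟨hij, K, hK⟩ := hp
    rw [hT, Finset.mem_filter]
    refine ⟨Finset.mem_univ p, hij, K, St19.isLam_of hpos hfPF hK, ?_⟩
    have he : (K : ℤ) * n p.2 - n p.1 = f := by omega
    rw [he]
    exact ⟨hfPF, hfF⟩
  have hbi : ∑ f ∈ D, (St19.good n f).card ≤ T.card := by
    rw [← Finset.card_biUnion (fun x hx y hy hxy =>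
      St19.good_disjoint hpos ((hmemD x).1 hx).1 ((hmemD y).1 hy).1 hxy)]
    exact Finset.card_le_card (Finset.biUnion_subset.2 hgsub)
  have hncard : (PF n).ncard = hfin.toFinset.card := Set.ncard_eq_toFinset_card _ hfin
  have hFD : F ∈ hfin.toFinset := hfin.mem_toFinset.2 hFPF
  have hDcard : D.card = hfin.toFinset.card - 1 := by
    rw [hD, Finset.card_erase_of_mem hFD]
  have hpos1 : 1 ≤ hfin.toFinset.card := Finset.card_pos.2 ⟨F, hFD⟩
  rw [hTcard, hncard]
  omega
end
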